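/- arXiv:0906.3750 — 11 statements merged into one kernel-verified Lean document; each statement's English description precedes it below -/
import Mathlib

section
/- Let G be a Hausdorff topological group, Γ a group, S a finite type, and ι : S → Γ a map whose range generates Γ (the subgroup closure of the range of ι is all of Γ). Equip the set Hom(Γ,G) of group homomorphisms with the topology induced by the inclusion into the product space Γ → G (topology of pointwise convergence), and equip S → G with the product topology. Then the restriction map Hom(Γ,G) → (S → G), ρ ↦ ρ ∘ ι, is a closed embedding: it is injective, a homeomorphism onto its image, and its image is closed in S → G. -/
open Topology

/-- For a Hausdorff topological group `G`, a group `Γ` generated by the range of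
`ι : S → Γ` with `S` finite, the restriction map `Hom(Γ,G) → (S → G)`, `ρ ↦ ρ ∘ ι`, is a
closed embedding (for the topology of pointwise convergence on `Hom(Γ,G)` and the product
topology on `S → G`): it is injective, a homeomorphism onto its image, and its image is
closed. -/
theorem stmt0 {G : Type*} [Group G] [TopologicalSpace G] [IsTopologicalGroup G] [T2Space G]
    {Γ : Type*} [Group Γ] {S : Type*} [Finite S] (ι : S → Γ)
    (hgen : Subgroup.closure (Set.range ι) = ⊤) :
    letI : TopologicalSpace (Γ →* G) :=
      TopologicalSpace.induced (fun ρ : Γ →* G => (fun γ => ρ γ : Γ → G)) inferInstance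
    Function.Injective (fun (ρ : Γ →* G) (s : S) => ρ (ι s)) ∧
      IsClosedEmbedding (fun (ρ : Γ →* G) (s : S) => ρ (ι s)) := by
  -- For each γ, there is a continuous "word map" (S → G) → G computing ρ γ from ρ ∘ ι.
  have key : ∀ γ : Γ, ∃ wγ : (S → G) → G, Continuous wγ ∧
      ∀ ρ : Γ →* G, wγ (fun s => ρ (ι s)) = ρ γ := by
    intro γ
    have hγ : γ ∈ Subgroup.closure (Set.range ι) := hgen ▸ Subgroup.mem_top γ
    induction hγ using Subgroup.closure_induction with
    | mem x hx =>
      obtain ⟨s, rfl⟩ := hx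
      exact ⟨fun f => f s, continuous_apply s, fun ρ => rfl⟩
    | one => exact ⟨fun _ => 1, continuous_const, fun ρ => (map_one ρ).symm⟩
    | mul x y _ _ hx hy =>
      obtain ⟨wx, hwx, hx'⟩ := hx
      obtain ⟨wy, hwy, hy'⟩ := hy
      exact ⟨fun f => wx f * wy f, hwx.mul hwy, fun ρ => by rw [map_mul, ← hx' ρ, ← hy' ρ]⟩
    | inv x _ hx =>
      obtain ⟨wx, hwx, hx'⟩ := hx
      exact ⟨fun f => (wx f)⁻¹, hwx.inv, fun ρ => by rw [map_inv, ← hx' ρ]⟩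
  choose w hwc hw using key
  letI t : TopologicalSpace (Γ →* G) :=
    TopologicalSpace.induced (fun ρ : Γ →* G => (fun γ => ρ γ : Γ → G)) inferInstance
  set r : (Γ →* G) → (S → G) := fun ρ s => ρ (ι s) with hr
  have hinj : Function.Injective r := by
    intro ρ ρ' h
    ext γ
    rw [← hw γ ρ, ← hw γ ρ']
    simp only [r] at h
    rw [show (fun s => ρ (ι s)) = (fun s => ρ' (ι s)) from h]
  refine ⟨hinj, ?_, ?_⟩
  · -- IsEmbedding
    refine ⟨⟨?_⟩, hinj⟩
    -- topology equality
    have hF : Continuous (fun f : S → G => (fun γ => w γ f : Γ → G)) :=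
      continuous_pi fun γ => hwc γ
    have hp : Continuous (fun f : Γ → G => (fun s => f (ι s) : S → G)) :=
      continuous_pi fun s => continuous_apply (ι s)
    apply le_antisymm
    · -- t ≤ induced r _
      have hcomp : r = (fun f : Γ → G => (fun s => f (ι s) : S → G))
          ∘ (fun ρ : Γ →* G => (fun γ => ρ γ : Γ → G)) := rfl
      calc t ≤ TopologicalSpace.induced (fun ρ : Γ →* G => (fun γ => ρ γ : Γ → G))
            (TopologicalSpace.induced
              (fun f : Γ → G => (fun s => f (ι s) : S → G)) inferInstance) :=
            induced_mono (continuous_iff_le_induced.mp hp)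
        _ = TopologicalSpace.induced r inferInstance := by
            rw [hcomp, ← induced_compose]
    · -- induced r _ ≤ t
      have hcomp : (fun ρ : Γ →* G => (fun γ => ρ γ : Γ → G))
          = (fun f : S → G => (fun γ => w γ f : Γ → G)) ∘ r := by
        funext ρ
        simp only [Function.comp, r]
        funext γ
        exact (hw γ ρ).symm
      calc TopologicalSpace.induced r inferInstance
          ≤ TopologicalSpace.induced r (TopologicalSpace.induced
              (fun f : S → G => (fun γ => w γ f : Γ → G)) inferInstance) :=
            induced_mono (continuous_iff_le_induced.mp hF)
        _ = TopologicalSpace.induced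
              ((fun f : S → G => (fun γ => w γ f : Γ → G)) ∘ r) inferInstance :=
            induced_compose
        _ = t := by rw [← hcomp]
  · -- closed range
    have hrange : Set.range r =
        {f : S → G | (∀ γ δ : Γ, w (γ * δ) f = w γ f * w δ f) ∧ ∀ s : S, w (ι s) f = f s} := by
      ext f
      constructor
      · rintro ⟨ρ, rfl⟩
        constructor
        · intro γ δ
          rw [hw, hw, hw, map_mul]
        · intro s
          rw [hw]
      · rintro ⟨h1, h2⟩
        refine ⟨MonoidHom.mk' (fun γ => w γ f) (fun a b => h1 a b), ?_⟩
        funext s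
        exact h2 s
    rw [hrange]
    have hset : {f : S → G |
        (∀ γ δ : Γ, w (γ * δ) f = w γ f * w δ f) ∧ ∀ s : S, w (ι s) f = f s}
        = (⋂ (γ : Γ) (δ : Γ), {f : S → G | w (γ * δ) f = w γ f * w δ f})
          ∩ (⋂ s : S, {f : S → G | w (ι s) f = f s}) := by
      ext f
      simp [Set.mem_iInter]
    rw [hset]
    apply IsClosed.inter
    · exact isClosed_iInter fun γ => isClosed_iInter fun δ =>
        isClosed_eq (hwc _) ((hwc γ).mul (hwc δ))
    · exact isClosed_iInter fun s => isClosed_eq (hwc _) (continuous_apply s)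
end

section
/- Assume moreover that the action of G on X is cocompact, i.e. there is a compact set C ⊆ X such that every point of X lies in G·C. Let (f_k)_{k∈ℕ} be a sequence of tuples S → G such that the sequence (λ(f_k)) is bounded above. Then there exist a strictly increasing map φ : ℕ → ℕ, a sequence (g_k) in G, and a tuple f : S → G such that for every s ∈ S the sequence g_k · f_{φ(k)}(s) · g_k⁻¹ converges to f(s) in G, the set Min(f) is nonempty, and λ(f) = liminf_{k→∞} λ(f_k). -/
open Filter Topology

/-- The displacement function of a tuple `f : S → G` at `x : X`. -/
noncomputable def dfun {X G S : Type*} [MetricSpace X] [SMul G X] [Fintype S]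
    (f : S → G) (x : X) : ℝ :=
  Real.sqrt (∑ s : S, dist x (f s • x) ^ 2)

/-- The minimal displacement of a tuple `f : S → G` over the space `X`. -/
noncomputable def lam (X : Type*) {G S : Type*} [MetricSpace X] [SMul G X] [Fintype S]
    (f : S → G) : ℝ :=
  ⨅ x : X, dfun f x

section Aux

variable {X G S : Type*} [MetricSpace X] [Group G] [MulAction G X] [Fintype S]

lemma dfun_nonneg (f : S → G) (x : X) : 0 ≤ dfun f x := Real.sqrt_nonneg _

lemma dist_le_dfun (f : S → G) (x : X) (s : S) : dist x (f s • x) ≤ dfun f x := by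
  rw [dfun, ← Real.sqrt_sq (dist_nonneg (x := x) (y := f s • x))]
  exact Real.sqrt_le_sqrt (Finset.single_le_sum (f := fun s => dist x (f s • x) ^ 2) (fun i _ => sq_nonneg _) (Finset.mem_univ s))

lemma bddBelow_dfun (f : S → G) : BddBelow (Set.range (dfun (X := X) f)) :=
  ⟨0, by rintro y ⟨x, rfl⟩; exact dfun_nonneg f x⟩

lemma lam_le_dfun (f : S → G) (x : X) : lam X f ≤ dfun f x :=
  ciInf_le (bddBelow_dfun f) x

lemma lam_nonneg [Nonempty X] (f : S → G) : 0 ≤ lam X f :=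
  le_ciInf fun x => dfun_nonneg f x

lemma dfun_conj (hiso : ∀ g : G, Isometry (fun x : X => g • x)) (f : S → G) (h : G) (x : X) :
    dfun (fun s => h⁻¹ * f s * h) x = dfun f (h • x) := by
  unfold dfun
  congr 1
  refine Finset.sum_congr rfl fun s _ => ?_
  have : (h⁻¹ * f s * h) • x = h⁻¹ • f s • h • x := by
    rw [mul_smul, mul_smul]
  rw [this]
  have := (hiso h).dist_eq x (h⁻¹ • f s • h • x)
  rw [← this, smul_inv_smul]

lemma lam_conj [Nonempty X] (hiso : ∀ g : G, Isometry (fun x : X => g • x)) (f : S → G) (h : G) :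
    lam X (fun s => h⁻¹ * f s * h) = lam X f := by
  apply le_antisymm
  · refine le_ciInf fun y => ?_
    calc lam X (fun s => h⁻¹ * f s * h) ≤ dfun (fun s => h⁻¹ * f s * h) (h⁻¹ • y) :=
          lam_le_dfun _ _
      _ = dfun f y := by rw [dfun_conj hiso, smul_inv_smul]
  · refine le_ciInf fun y => ?_
    calc lam X f ≤ dfun f (h • y) := lam_le_dfun _ _
      _ = dfun (fun s => h⁻¹ * f s * h) y := (dfun_conj hiso f h y).symm

end Aux

lemma exists_subseq_tendsto_liminf {u : ℕ → ℝ} {B : ℝ} (h0 : ∀ k, 0 ≤ u k) (hB : ∀ k, u k ≤ B) :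
    ∃ φ : ℕ → ℕ, StrictMono φ ∧ Tendsto (u ∘ φ) atTop (𝓝 (liminf u atTop)) := by
  set L := liminf u atTop with hL
  have hbel : IsBoundedUnder (· ≥ ·) atTop u := isBoundedUnder_of ⟨0, h0⟩
  have hab : IsBoundedUnder (· ≤ ·) atTop u := isBoundedUnder_of ⟨B, hB⟩
  have hfreq : ∀ n : ℕ, ∃ᶠ k in atTop, u k < L + 1 / (n + 1) := by
    intro n
    refine Filter.frequently_lt_of_liminf_lt hab.isCoboundedUnder_ge ?_
    have : (0:ℝ) < 1 / (n + 1) := by positivity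
    linarith
  obtain ⟨φ, hmono, hφ⟩ := Filter.extraction_forall_of_frequently hfreq
  refine ⟨φ, hmono, tendsto_order.2 ⟨?_, ?_⟩⟩
  · intro a ha
    have h1 : ∀ᶠ k in atTop, a < u k := Filter.eventually_lt_of_lt_liminf ha hbel
    exact hmono.tendsto_atTop.eventually h1
  · intro b hb
    obtain ⟨n, hn⟩ := exists_nat_one_div_lt (show (0:ℝ) < b - L by linarith)
    filter_upwards [eventually_ge_atTop n] with k hk
    have h2 : (1:ℝ) / (k + 1) ≤ 1 / (n + 1) := by
      apply one_div_le_one_div_of_le (by positivity)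
      have : (n:ℝ) ≤ k := by exact_mod_cast hk
      linarith
    have := hφ k
    simp only [Function.comp]
    linarith

/-- Assume the action of `G` on `X` is cocompact. Given a sequence of tuples
`f_k : S → G` with `λ(f_k)` bounded above, there are a strictly increasing `φ : ℕ → ℕ`, a
sequence `(g_k)` in `G` and a tuple `f : S → G` such that `g_k · f_{φ(k)} · g_k⁻¹ → f`
pointwise, `Min(f)` is nonempty, and `λ(f) = liminf λ(f_k)`. -/
theorem stmt3 {X G S : Type*} [MetricSpace X] [Nonempty X] [ProperSpace X]
    [Group G] [TopologicalSpace G] [IsTopologicalGroup G]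
    [TopologicalSpace.MetrizableSpace G]
    [MulAction G X] [ContinuousSMul G X]
    (hiso : ∀ g : G, Isometry (fun x : X => g • x))
    (hproper : IsProperMap (fun p : G × X => (p.2, p.1 • p.2)))
    [Fintype S]
    (hcc : ∃ C : Set X, IsCompact C ∧ ∀ x : X, ∃ g : G, ∃ c ∈ C, x = g • c)
    (fseq : ℕ → S → G) (hbdd : ∃ B : ℝ, ∀ k : ℕ, lam X (fseq k) ≤ B) :
    ∃ (φ : ℕ → ℕ), StrictMono φ ∧
      ∃ (g : ℕ → G) (f : S → G),
        (∀ s : S, Tendsto (fun k : ℕ => g k * fseq (φ k) s * (g k)⁻¹) atTop (nhds (f s))) ∧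
        {x : X | dfun f x = lam X f}.Nonempty ∧
        lam X f = liminf (fun k : ℕ => lam X (fseq k)) atTop := by
  obtain ⟨C, hC, hCcov⟩ := hcc
  obtain ⟨B, hB⟩ := hbdd
  set u : ℕ → ℝ := fun k => lam X (fseq k) with hu
  have hu0 : ∀ k, 0 ≤ u k := fun k => lam_nonneg _
  -- almost minimizers
  have hmin : ∀ k : ℕ, ∃ x : X, dfun (fseq k) x < u k + 1 / (k + 1) := by
    intro k
    refine exists_lt_of_ciInf_lt (f := fun x : X => dfun (fseq k) x) ?_
    have h1 : (0:ℝ) < 1 / (k + 1) := by positivity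
    have : (⨅ x : X, dfun (fseq k) x) = u k := rfl
    linarith [this]
  choose xk hxk using hmin
  have hdec : ∀ k, ∃ h : G, ∃ c ∈ C, xk k = h • c := fun k => hCcov (xk k)
  choose hk ck hckC hxkeq using hdec
  set F : ℕ → S → G := fun k s => (hk k)⁻¹ * fseq k s * hk k with hF
  have hdF : ∀ k, dfun (F k) (ck k) = dfun (fseq k) (xk k) := by
    intro k
    rw [hF, dfun_conj hiso, ← hxkeq]
  have hlamF : ∀ k, lam X (F k) = u k := fun k => lam_conj hiso _ _
  have hdistb : ∀ k s, dist (ck k) (F k s • ck k) ≤ B + 1 := by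
    intro k s
    have h1 : (1:ℝ) / (k + 1) ≤ 1 := by
      rw [div_le_one (by positivity)]
      have : (0:ℝ) ≤ (k:ℝ) := Nat.cast_nonneg k
      linarith
    calc dist (ck k) (F k s • ck k) ≤ dfun (F k) (ck k) := dist_le_dfun _ _ s
      _ = dfun (fseq k) (xk k) := hdF k
      _ ≤ u k + 1 / (k + 1) := (hxk k).le
      _ ≤ B + 1 := by linarith [hB k]
  -- compact set in G containing all F k s
  set D := Metric.cthickening (B + 1) C with hD
  have hDc : IsCompact D := hC.cthickening
  set K := (fun p : G × X => (p.2, p.1 • p.2)) ⁻¹' (C ×ˢ D) with hK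
  have hKc : IsCompact K := hproper.isCompact_preimage (hC.prod hDc)
  set KG := Prod.fst '' K with hKG
  have hKGc : IsCompact KG := hKc.image continuous_fst
  have hFK : ∀ k s, F k s ∈ KG := by
    intro k s
    refine ⟨(F k s, ck k), ⟨hckC k, ?_⟩, rfl⟩
    exact Metric.mem_cthickening_of_dist_le _ _ _ _ (hckC k)
      (by rw [dist_comm]; exact hdistb k s)
  -- subsequence along which u tends to liminf
  obtain ⟨φ₁, hφ₁, hul⟩ := exists_subseq_tendsto_liminf hu0 hB
  set L := liminf u atTop with hLdef
  -- subsequence along which ck converges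
  obtain ⟨cstar, hcstarC, φ₂, hφ₂, hc2⟩ :=
    hC.tendsto_subseq (x := fun k => ck (φ₁ k)) (fun k => hckC _)
  -- subsequence along which the tuples converge
  have hTc : IsCompact (Set.univ.pi fun _ : S => KG) := isCompact_univ_pi fun _ => hKGc
  obtain ⟨f, hfT, φ₃, hφ₃, hf3⟩ :=
    hTc.tendsto_subseq (x := fun k => F (φ₁ (φ₂ k)))
      (fun k => Set.mem_univ_pi.2 fun s => hFK _ s)
  set φ : ℕ → ℕ := fun k => φ₁ (φ₂ (φ₃ k)) with hφdef
  have hφmono : StrictMono φ := hφ₁.comp (hφ₂.comp hφ₃)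
  -- componentwise convergence of tuples
  have hfs : ∀ s : S, Tendsto (fun k => F (φ k) s) atTop (𝓝 (f s)) := by
    intro s
    exact (tendsto_pi_nhds.1 hf3) s
  -- convergence of points along φ
  have hcφ : Tendsto (fun k => ck (φ k)) atTop (𝓝 cstar) := hc2.comp hφ₃.tendsto_atTop
  -- convergence of u along φ
  have huφ : Tendsto (fun k => u (φ k)) atTop (𝓝 L) :=
    hul.comp (hφ₂.comp hφ₃).tendsto_atTop
  -- dfun (F (φ k)) (ck (φ k)) tends to L (squeeze)
  have hzero : Tendsto (fun k : ℕ => 1 / ((φ k : ℝ) + 1)) atTop (𝓝 0) :=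
    tendsto_one_div_add_atTop_nhds_zero_nat.comp hφmono.tendsto_atTop
  have hdcc : Tendsto (fun k => dfun (F (φ k)) (ck (φ k))) atTop (𝓝 L) := by
    have hupper : Tendsto (fun k => u (φ k) + 1 / ((φ k : ℝ) + 1)) atTop (𝓝 (L + 0)) :=
      huφ.add hzero
    rw [add_zero] at hupper
    refine tendsto_of_tendsto_of_tendsto_of_le_of_le huφ hupper ?_ ?_
    · intro k
      have := lam_le_dfun (F (φ k)) (ck (φ k))
      rw [hlamF] at this
      exact this
    · intro k
      have := (hxk (φ k)).le
      rw [← hdF] at this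
      exact this
  -- dfun continuity along the subsequence, at a moving point
  have hcont : ∀ (c : ℕ → X) (cl : X), Tendsto c atTop (𝓝 cl) →
      Tendsto (fun k => dfun (F (φ k)) (c k)) atTop (𝓝 (dfun f cl)) := by
    intro c cl hc
    unfold dfun
    refine (Real.continuous_sqrt.tendsto _).comp ?_
    refine tendsto_finset_sum _ fun s _ => ?_
    exact (hc.dist ((hfs s).smul hc)).pow 2
  have hdstar := hcont (fun k => ck (φ k)) cstar hcφ
  have hdfL : dfun f cstar = L := tendsto_nhds_unique hdstar hdcc
  -- every value of dfun f is at least L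
  have hLle : ∀ x : X, L ≤ dfun f x := by
    intro x
    have hdx := hcont (fun _ => x) x tendsto_const_nhds
    refine le_of_tendsto_of_tendsto' huφ hdx fun k => ?_
    have := lam_le_dfun (F (φ k)) x
    rw [hlamF] at this
    exact this
  have hlamf : lam X f = L := by
    apply le_antisymm
    · exact (lam_le_dfun f cstar).trans_eq hdfL
    · exact le_ciInf hLle
  refine ⟨φ, hφmono, fun k => (hk (φ k))⁻¹, f, fun s => ?_, ⟨cstar, ?_⟩, hlamf⟩
  · simp only [inv_inv]
    exact hfs s
  · show dfun f cstar = lam X f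
    rw [hdfL, hlamf]
end

section
/- Let S be a finite type and for each s ∈ S let f_s : ℝ → ℝ be a function that is convex on ℝ, nonnegative, and bounded above on [0, ∞). Suppose that for every t ∈ ℝ one has ∑_{s∈S} f_s(t)² ≥ ∑_{s∈S} f_s(0)² (the sum of squares attains its infimum over ℝ at 0). Then for every s ∈ S and every t ≥ 0 one has f_s(t) = f_s(0). -/
/-- A convex function on ℝ bounded above on `[0,∞)` is nonincreasing on `[0,∞)`. -/
lemma conv_bdd_antitone (g : ℝ → ℝ) (hconv : ConvexOn ℝ Set.univ g)
    (M : ℝ) (hM : ∀ t : ℝ, 0 ≤ t → g t ≤ M) :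
    ∀ a b : ℝ, 0 ≤ a → a ≤ b → g b ≤ g a := by
  intro a b ha hab
  rcases eq_or_lt_of_le hab with rfl | hlt
  · exact le_rfl
  by_contra h
  push_neg at h
  set c : ℝ := (g b - g a) / (b - a) with hc
  have hba : (0:ℝ) < b - a := by linarith
  have hcpos : 0 < c := div_pos (by linarith) hba
  -- choose t large
  set t : ℝ := max (b + 1) (b + (M - g b + 1) / c) with ht
  have htb : b < t := lt_of_lt_of_le (by linarith) (le_max_left _ _)
  have key := hconv.slope_mono_adjacent (Set.mem_univ a) (Set.mem_univ t) hlt htb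
  -- key : (g b - g a)/(b - a) ≤ (g t - g b)/(t - b)
  have htb' : (0:ℝ) < t - b := by linarith
  have h1 : c * (t - b) ≤ g t - g b := by
    rw [hc]; exact (le_div_iff₀ htb').mp key
  have h2 : (M - g b + 1) / c ≤ t - b := by
    have := le_max_right (b + 1) (b + (M - g b + 1) / c)
    linarith
  have h3 : M - g b + 1 ≤ c * (t - b) := by
    rw [div_le_iff₀ hcpos] at h2
    nlinarith
  have h4 : g t ≤ M := hM t (by linarith)
  linarith

/-- Let `S` be finite and, for each `s ∈ S`, let `f s : ℝ → ℝ` be convex on `ℝ`,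
nonnegative, and bounded above on `[0, ∞)`. If the sum of squares `∑ s, (f s t)²` attains its
infimum over `ℝ` at `t = 0`, then every `f s` is constant on `[0, ∞)`: `f s t = f s 0` for all
`t ≥ 0`. -/
theorem stmt5 {S : Type*} [Fintype S] (f : S → ℝ → ℝ)
    (hconv : ∀ s : S, ConvexOn ℝ Set.univ (f s))
    (hnonneg : ∀ s : S, ∀ t : ℝ, 0 ≤ f s t)
    (hbdd : ∀ s : S, ∃ M : ℝ, ∀ t : ℝ, 0 ≤ t → f s t ≤ M)
    (hmin : ∀ t : ℝ, ∑ s : S, f s 0 ^ 2 ≤ ∑ s : S, f s t ^ 2) :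
    ∀ s : S, ∀ t : ℝ, 0 ≤ t → f s t = f s 0 := by
  have hanti : ∀ s : S, ∀ t : ℝ, 0 ≤ t → f s t ≤ f s 0 := by
    intro s t ht
    obtain ⟨M, hM⟩ := hbdd s
    exact conv_bdd_antitone (f s) (hconv s) M hM 0 t le_rfl ht
  intro s t ht
  have hsq : ∀ s' : S, f s' t ^ 2 ≤ f s' 0 ^ 2 := fun s' =>
    pow_le_pow_left₀ (hnonneg s' t) (hanti s' t ht) 2
  have hsum : ∑ s' : S, f s' t ^ 2 = ∑ s' : S, f s' 0 ^ 2 :=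
    le_antisymm (Finset.sum_le_sum fun s' _ => hsq s') (hmin t)
  have heq := (Finset.sum_eq_sum_iff_of_le (fun s' _ => hsq s')).mp hsum
  have := heq s (Finset.mem_univ s)
  nlinarith [hnonneg s t, hnonneg s 0]
end

section
/- Let K be a nontrivially normed field, n : ℕ, and b : Fin n → ℕ a block function. Let T be the set of triples (u, r, v) of n×n matrices over K such that u is strictly-lower block unipotent, r is block diagonal (r i j = 0 unless b i = b j) and invertible, and v is strictly-upper block unipotent, with the topology induced from M_n(K)³. Then the multiplication map T → M_n(K), (u, r, v) ↦ u·r·v, is an open embedding: it is injective, continuous, a homeomorphism onto its image, and its image is an open subset of M_n(K) consisting of invertible matrices. -/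
open Topology

/-- A matrix is block diagonal (w.r.t. the block function `b`) if its entries vanish off the
diagonal blocks. -/
def IsBlockDiag {K : Type*} [Zero K] {n : ℕ} (b : Fin n → ℕ)
    (M : Matrix (Fin n) (Fin n) K) : Prop :=
  ∀ i j, b i ≠ b j → M i j = 0

/-- A matrix is strictly-upper block unipotent if it is `1 + N` with `N` supported on the
entries `(i,j)` with `b i < b j`. -/
def IsStrictUpperUnip {K : Type*} [Zero K] [One K] [Add K] {n : ℕ} (b : Fin n → ℕ) (M : Matrix (Fin n) (Fin n) K) : Prop :=
  ∃ N : Matrix (Fin n) (Fin n) K, (∀ i j, ¬ b i < b j → N i j = 0) ∧ M = 1 + N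

/-- A matrix is strictly-lower block unipotent if it is `1 + N` with `N` supported on the
entries `(i,j)` with `b j < b i`. -/
def IsStrictLowerUnip {K : Type*} [Zero K] [One K] [Add K] {n : ℕ} (b : Fin n → ℕ) (M : Matrix (Fin n) (Fin n) K) : Prop :=
  ∃ N : Matrix (Fin n) (Fin n) K, (∀ i j, ¬ b j < b i → N i j = 0) ∧ M = 1 + N


namespace Stmt6Aux

open Matrix Finset

variable {K : Type*} [NontriviallyNormedField K] {n : ℕ}

/-- Truncation of a matrix at level `t`: keep the entries in the blocks with value `≤ t`,
identity outside. -/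
def E (b : Fin n → ℕ) (t : ℕ) (M : Matrix (Fin n) (Fin n) K) : Matrix (Fin n) (Fin n) K :=
  Matrix.of fun i j => if b i ≤ t ∧ b j ≤ t then M i j else (1 : Matrix (Fin n) (Fin n) K) i j

/-- Strictly-upper block unipotent, entrywise form. -/
def Up (b : Fin n → ℕ) (A : Matrix (Fin n) (Fin n) K) : Prop :=
  ∀ i j, ¬ b i < b j → A i j = (1 : Matrix (Fin n) (Fin n) K) i j

/-- Strictly-lower block unipotent, entrywise form. -/
def Lo (b : Fin n → ℕ) (A : Matrix (Fin n) (Fin n) K) : Prop :=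
  ∀ i j, ¬ b j < b i → A i j = (1 : Matrix (Fin n) (Fin n) K) i j

variable {b : Fin n → ℕ} {M A B u v r u₁ r₁ v₁ u₂ r₂ v₂ : Matrix (Fin n) (Fin n) K} {t : ℕ}

lemma E_apply (i j : Fin n) :
    E b t M i j = if b i ≤ t ∧ b j ≤ t then M i j else (1 : Matrix (Fin n) (Fin n) K) i j := rfl

lemma E_eq_self (h : ∀ i, b i ≤ t) : E b t M = M := by
  ext i j; rw [E_apply, if_pos ⟨h i, h j⟩]

lemma Up.blockTriangular (h : Up b A) : BlockTriangular A b := by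
  intro i j hij
  rw [h i j (by omega), Matrix.one_apply_ne (by rintro rfl; omega)]

lemma Lo.blockTriangular' (h : Lo b A) : BlockTriangular A (OrderDual.toDual ∘ b) := by
  intro i j hij
  rw [h i j (by exact not_lt.2 (le_of_lt hij)), Matrix.one_apply_ne (by rintro rfl; exact absurd hij (lt_irrefl _))]

lemma lo_iff_up_transpose : Lo b A ↔ Up b Aᵀ := by
  constructor
  · intro h i j hij
    rw [Matrix.transpose_apply, h j i hij, Matrix.one_apply, Matrix.one_apply]
    simp [eq_comm]
  · intro h i j hij
    have := h j i hij
    rw [Matrix.transpose_apply] at this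
    rw [this, Matrix.one_apply, Matrix.one_apply]
    simp [eq_comm]

lemma toSquareBlock_eq_one {a : ℕ}
    (h : ∀ i j, b i = a → b j = a → A i j = (1 : Matrix (Fin n) (Fin n) K) i j) :
    A.toSquareBlock b a = 1 := by
  ext i j
  rw [Matrix.toSquareBlock_def]
  show A i.1 j.1 = _
  rw [h i.1 j.1 i.2 j.2, Matrix.one_apply, Matrix.one_apply]
  simp [Subtype.ext_iff]

lemma det_eq_one_of_diag (hA : ∀ i j, b i = b j → A i j = (1 : Matrix (Fin n) (Fin n) K) i j)
    (hBT : BlockTriangular A b) : A.det = 1 := by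
  rw [hBT.det]
  apply Finset.prod_eq_one
  intro a _
  rw [toSquareBlock_eq_one (fun i j hi hj => hA i j (by omega)), det_one]

lemma Up.det_eq_one (h : Up b A) : A.det = 1 :=
  det_eq_one_of_diag (fun i j hij => h i j (by omega)) h.blockTriangular

lemma Lo.det_eq_one (h : Lo b A) : A.det = 1 := by
  rw [← Matrix.det_transpose]
  exact (lo_iff_up_transpose.1 h).det_eq_one

lemma Up.isUnit_det (h : Up b A) : IsUnit A.det := by rw [h.det_eq_one]; exact isUnit_one
lemma Lo.isUnit_det (h : Lo b A) : IsUnit A.det := by rw [h.det_eq_one]; exact isUnit_one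

lemma Up.isUnit (h : Up b A) : IsUnit A := (Matrix.isUnit_iff_isUnit_det A).2 h.isUnit_det
lemma Lo.isUnit (h : Lo b A) : IsUnit A := (Matrix.isUnit_iff_isUnit_det A).2 h.isUnit_det

lemma Up.mul (hA : Up b A) (hB : Up b B) : Up b (A * B) := by
  intro i j hij
  rw [Matrix.mul_apply]
  rw [Finset.sum_eq_single i ?h0 (by simp)]
  · rw [hA i i (by omega), Matrix.one_apply_eq, one_mul, hB i j hij]
  case h0 =>
    intro k _ hk
    by_cases hik : b i < b k
    · rw [hB k j (by omega), Matrix.one_apply_ne (by rintro rfl; omega), mul_zero]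
    · rw [hA i k hik, Matrix.one_apply_ne (Ne.symm hk), zero_mul]

lemma Up.inv (h : Up b A) : Up b A⁻¹ := by
  have hdet := h.isUnit_det
  have : Invertible A := A.invertibleOfIsUnitDet hdet
  have hBT : BlockTriangular A⁻¹ b := blockTriangular_inv_of_blockTriangular h.blockTriangular
  intro i j hij
  by_cases hlt : b j < b i
  · rw [hBT hlt, Matrix.one_apply_ne (by rintro rfl; omega)]
  · have hbe : b i = b j := by omega
    have h1 : (A * A⁻¹) i j = A⁻¹ i j := by
      rw [Matrix.mul_apply]
      rw [Finset.sum_eq_single i ?h0 (by simp)]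
      · rw [h i i (by omega), Matrix.one_apply_eq, one_mul]
      case h0 =>
        intro k _ hk
        by_cases hik : b i < b k
        · rw [hBT (show b j < b k by omega), mul_zero]
        · rw [h i k hik, Matrix.one_apply_ne (Ne.symm hk), zero_mul]
    rw [← h1, Matrix.mul_nonsing_inv A hdet]

lemma Lo.mul (hA : Lo b A) (hB : Lo b B) : Lo b (A * B) := by
  rw [lo_iff_up_transpose] at *
  rw [Matrix.transpose_mul]
  exact hB.mul hA

lemma Lo.inv (h : Lo b A) : Lo b A⁻¹ := by
  rw [lo_iff_up_transpose] at *
  rw [Matrix.transpose_nonsing_inv]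
  exact h.inv


lemma E_inv_apply (hdet : IsUnit (E b t M).det) {i j : Fin n} (h : ¬(b i ≤ t ∧ b j ≤ t)) :
    (E b t M)⁻¹ i j = (1 : Matrix (Fin n) (Fin n) K) i j := by
  set X := (E b t M)⁻¹ with hX
  by_cases hi : b i ≤ t
  · have hj : ¬ b j ≤ t := fun hj => h ⟨hi, hj⟩
    have h2 : (X * E b t M) i j = X i j := by
      rw [Matrix.mul_apply]
      rw [Finset.sum_eq_single j ?h0 (by simp)]
      · rw [E_apply, if_neg (fun hc => hj hc.2), Matrix.one_apply_eq, mul_one]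
      case h0 =>
        intro k _ hk
        rw [E_apply, if_neg (fun hc => hj hc.2), Matrix.one_apply_ne hk, mul_zero]
    rw [← h2, Matrix.nonsing_inv_mul _ hdet]
  · have h2 : (E b t M * X) i j = X i j := by
      rw [Matrix.mul_apply]
      rw [Finset.sum_eq_single i ?h0 (by simp)]
      · rw [E_apply, if_neg (fun hc => hi hc.1), Matrix.one_apply_eq, one_mul]
      case h0 =>
        intro k _ hk
        rw [E_apply, if_neg (fun hc => hi hc.1), Matrix.one_apply_ne (Ne.symm hk), zero_mul]
    rw [← h2, Matrix.mul_nonsing_inv _ hdet]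

lemma blockDiag_bt (h : IsBlockDiag b r) : BlockTriangular r b :=
  fun i j hij => h i j (by omega)

lemma blockDiag_bt' (h : IsBlockDiag b r) :
    BlockTriangular r (OrderDual.toDual ∘ b) := by
  intro i j hij
  have hij' : b i < b j := hij
  exact h i j (by omega)

lemma E_mul_left (hA : ∀ i k, b i < b k → A i k = 0) :
    E b t (A * B) = E b t A * E b t B := by
  ext i j
  rw [E_apply]
  by_cases hij : b i ≤ t ∧ b j ≤ t
  · rw [if_pos hij, Matrix.mul_apply, Matrix.mul_apply]
    apply Finset.sum_congr rfl
    intro k _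
    by_cases hk : b k ≤ t
    · rw [E_apply (M := A), if_pos ⟨hij.1, hk⟩, E_apply (M := B), if_pos ⟨hk, hij.2⟩]
    · rw [hA i k (by omega), E_apply (M := A), if_neg (fun hc => hk hc.2),
        Matrix.one_apply_ne (by rintro rfl; omega), zero_mul, zero_mul]
  · rw [if_neg hij, Matrix.mul_apply]
    by_cases hi : b i ≤ t
    · have hj : ¬ b j ≤ t := fun hc => hij ⟨hi, hc⟩
      symm
      rw [Finset.sum_eq_single j ?h0 (by simp)]
      · rw [E_apply (M := A), if_neg (fun hc => hj hc.2), E_apply (M := B),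
          if_neg (fun hc => hj hc.2), Matrix.one_apply_eq, mul_one]
      case h0 =>
        intro k _ hk
        rw [E_apply (M := B), if_neg (fun hc => hj hc.2), Matrix.one_apply_ne hk, mul_zero]
    · symm
      rw [Finset.sum_eq_single i ?h1 (by simp)]
      · rw [E_apply (M := A), if_neg (fun hc => hi hc.1), Matrix.one_apply_eq, one_mul,
          E_apply (M := B), if_neg (fun hc => hi hc.1)]
      case h1 =>
        intro k _ hk
        rw [E_apply (M := A), if_neg (fun hc => hi hc.1),
          Matrix.one_apply_ne (Ne.symm hk), zero_mul]

lemma E_blockDiag (h : IsBlockDiag b r) : IsBlockDiag b (E b t r) := by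
  intro i j hij
  rw [E_apply]
  split
  · exact h i j hij
  · exact Matrix.one_apply_ne (by rintro rfl; omega)

lemma E_blockDiag_det_isUnit (hr : IsBlockDiag b r) (hru : IsUnit r.det) (t : ℕ) :
    IsUnit (E b t r).det := by
  rw [(blockDiag_bt (E_blockDiag hr)).det]
  apply Finset.prod_induction _ IsUnit (fun _ _ => IsUnit.mul) isUnit_one
  intro a ha
  by_cases hat : a ≤ t
  · have hblock : (E b t r).toSquareBlock b a = r.toSquareBlock b a := by
      ext i j
      rw [Matrix.toSquareBlock_def, Matrix.toSquareBlock_def]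
      show E b t r i.1 j.1 = r i.1 j.1
      rw [E_apply, if_pos ⟨by rw [i.2]; exact hat, by rw [j.2]; exact hat⟩]
    rw [hblock]
    exact isUnit_of_dvd_unit
      (Finset.dvd_prod_of_mem (fun a => (r.toSquareBlock b a).det) ha)
      (by rw [← (blockDiag_bt hr).det]; exact hru)
  · have hblock : (E b t r).toSquareBlock b a = 1 := by
      apply toSquareBlock_eq_one
      intro i j hi hj
      rw [E_apply, if_neg (fun hc => hat (hi ▸ hc.1))]
    rw [hblock, Matrix.det_one]
    exact isUnit_one


lemma Up_blockTriangular {A : Matrix (Fin n) (Fin n) K} (h : Up b A) : BlockTriangular A b :=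
  h.blockTriangular

lemma Lo_blockTriangular' {A : Matrix (Fin n) (Fin n) K} (h : Lo b A) :
    BlockTriangular A (OrderDual.toDual ∘ b) := h.blockTriangular'

lemma Up_inv {A : Matrix (Fin n) (Fin n) K} (h : Up b A) : Up b A⁻¹ := h.inv
lemma Lo_inv {A : Matrix (Fin n) (Fin n) K} (h : Lo b A) : Lo b A⁻¹ := h.inv
lemma Up_mul {A B : Matrix (Fin n) (Fin n) K} (hA : Up b A) (hB : Up b B) : Up b (A * B) :=
  hA.mul hB
lemma Lo_mul {A B : Matrix (Fin n) (Fin n) K} (hA : Lo b A) (hB : Lo b B) : Lo b (A * B) :=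
  hA.mul hB
lemma Up_detone {A : Matrix (Fin n) (Fin n) K} (h : Up b A) : A.det = 1 := h.det_eq_one
lemma Lo_detone {A : Matrix (Fin n) (Fin n) K} (h : Lo b A) : A.det = 1 := h.det_eq_one

lemma E_inv_apply' {M : Matrix (Fin n) (Fin n) K} {t : ℕ} (hdet : IsUnit (E b t M).det)
    {i j : Fin n} (h : ¬(b i ≤ t ∧ b j ≤ t)) :
    (E b t M)⁻¹ i j = (1 : Matrix (Fin n) (Fin n) K) i j := E_inv_apply hdet h


noncomputable def G (b : Fin n → ℕ) (M : Matrix (Fin n) (Fin n) K) : Matrix (Fin n) (Fin n) K :=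
  Matrix.of fun i j => (E b (b j) M)⁻¹ i j

noncomputable def H (b : Fin n → ℕ) (M : Matrix (Fin n) (Fin n) K) : Matrix (Fin n) (Fin n) K :=
  Matrix.of fun i j => (E b (b i) M)⁻¹ i j

section WithU

variable (hU : ∀ t, IsUnit (E b t M).det)
include hU

lemma M_det_isUnit : IsUnit M.det := by
  have := hU (univ.sup b)
  rwa [E_eq_self (fun i => Finset.le_sup (mem_univ i))] at this

lemma u_lo : Lo b (M * G b M) := by
  intro i j hij
  have hbj : b i ≤ b j := by omega
  set t := b j with ht
  have key : ∀ k, M i k * G b M k j = E b t M i k * (E b t M)⁻¹ k j := by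
    intro k
    by_cases hk : b k ≤ t
    · rw [E_apply, if_pos ⟨hbj, hk⟩]; rfl
    · show M i k * (E b t M)⁻¹ k j = _
      rw [E_inv_apply' (hU t) (fun hc => hk hc.1), Matrix.one_apply_ne (by rintro rfl; omega),
        mul_zero, mul_zero]
  rw [Matrix.mul_apply]
  calc ∑ k, M i k * G b M k j = ∑ k, E b t M i k * (E b t M)⁻¹ k j :=
        Finset.sum_congr rfl fun k _ => key k
    _ = (E b t M * (E b t M)⁻¹) i j := (Matrix.mul_apply).symm
    _ = (1 : Matrix (Fin n) (Fin n) K) i j := by rw [Matrix.mul_nonsing_inv _ (hU t)]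

lemma v_up : Up b (H b M * M) := by
  intro i j hij
  have hbi : b j ≤ b i := by omega
  set t := b i with ht
  have key : ∀ k, H b M i k * M k j = (E b t M)⁻¹ i k * E b t M k j := by
    intro k
    by_cases hk : b k ≤ t
    · rw [E_apply, if_pos ⟨hk, hbi⟩]; rfl
    · show (E b t M)⁻¹ i k * M k j = _
      rw [E_inv_apply' (hU t) (fun hc => hk hc.2), Matrix.one_apply_ne (by rintro rfl; omega),
        zero_mul, zero_mul]
  rw [Matrix.mul_apply]
  calc ∑ k, H b M i k * M k j = ∑ k, (E b t M)⁻¹ i k * E b t M k j :=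
        Finset.sum_congr rfl fun k _ => key k
    _ = ((E b t M)⁻¹ * E b t M) i j := (Matrix.mul_apply).symm
    _ = (1 : Matrix (Fin n) (Fin n) K) i j := by rw [Matrix.nonsing_inv_mul _ (hU t)]

lemma G_bt : BlockTriangular (G b M) b := by
  intro i j hij
  show (E b (b j) M)⁻¹ i j = 0
  rw [E_inv_apply' (hU (b j)) (fun hc => absurd hc.1 (by omega)),
    Matrix.one_apply_ne (by rintro rfl; omega)]

lemma H_bt : BlockTriangular (H b M) (OrderDual.toDual ∘ b) := by
  intro i j hij
  have hij' : b i < b j := hij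
  show (E b (b i) M)⁻¹ i j = 0
  rw [E_inv_apply' (hU (b i)) (fun hc => absurd hc.2 (by omega)),
    Matrix.one_apply_ne (by rintro rfl; omega)]

lemma uinv_mul_M : (M * G b M)⁻¹ * M = (G b M)⁻¹ := by
  rw [Matrix.mul_inv_rev, Matrix.mul_assoc, Matrix.nonsing_inv_mul _ (M_det_isUnit hU), mul_one]

lemma M_mul_vinv : M * (H b M * M)⁻¹ = (H b M)⁻¹ := by
  rw [Matrix.mul_inv_rev, ← Matrix.mul_assoc, Matrix.mul_nonsing_inv _ (M_det_isUnit hU), one_mul]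

lemma G_det_isUnit : IsUnit (G b M).det := by
  have h1 : (M * G b M).det = 1 := Lo_detone (u_lo hU)
  rw [Matrix.det_mul] at h1
  exact IsUnit.of_mul_eq_one _ ((mul_comm _ _).trans h1)

lemma H_det_isUnit : IsUnit (H b M).det := by
  have h1 : (H b M * M).det = 1 := Up_detone (v_up hU)
  rw [Matrix.det_mul] at h1
  exact IsUnit.of_mul_eq_one _ h1

lemma Ginv_bt : BlockTriangular (G b M)⁻¹ b := by
  have : Invertible (G b M) := (G b M).invertibleOfIsUnitDet (G_det_isUnit hU)
  exact blockTriangular_inv_of_blockTriangular (G_bt hU)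

lemma Hinv_bt : BlockTriangular (H b M)⁻¹ (OrderDual.toDual ∘ b) := by
  have : Invertible (H b M) := (H b M).invertibleOfIsUnitDet (H_det_isUnit hU)
  exact blockTriangular_inv_of_blockTriangular (H_bt hU)

lemma r_blockDiag :
    IsBlockDiag b ((M * G b M)⁻¹ * M * (H b M * M)⁻¹) := by
  have hup : BlockTriangular ((M * G b M)⁻¹ * M * (H b M * M)⁻¹) b := by
    rw [uinv_mul_M hU]
    exact (Ginv_bt hU).mul (Up_blockTriangular (Up_inv (v_up hU)))
  have hlo : BlockTriangular ((M * G b M)⁻¹ * M * (H b M * M)⁻¹) (OrderDual.toDual ∘ b) := by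
    rw [Matrix.mul_assoc, M_mul_vinv hU]
    exact (Lo_blockTriangular' (Lo_inv (u_lo hU))).mul (Hinv_bt hU)
  intro i j hij
  rcases lt_or_gt_of_ne hij with h | h
  · exact hlo (show (OrderDual.toDual ∘ b) j < (OrderDual.toDual ∘ b) i from h)
  · exact hup h

lemma r_isUnit : IsUnit ((M * G b M)⁻¹ * M * (H b M * M)⁻¹) := by
  have h1 : IsUnit (M * G b M)⁻¹ := (Matrix.isUnit_iff_isUnit_det _).2
    (by rw [Lo_detone (Lo_inv (u_lo hU))]; exact isUnit_one)
  have h2 : IsUnit (H b M * M)⁻¹ := (Matrix.isUnit_iff_isUnit_det _).2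
    (by rw [Up_detone (Up_inv (v_up hU))]; exact isUnit_one)
  have h3 : IsUnit M := (Matrix.isUnit_iff_isUnit_det _).2 (M_det_isUnit hU)
  exact (h1.mul h3).mul h2

lemma urv_eq : (M * G b M) * ((M * G b M)⁻¹ * M * (H b M * M)⁻¹) * (H b M * M) = M := by
  have hu : (M * G b M) * (M * G b M)⁻¹ = 1 := by
    apply Matrix.mul_nonsing_inv
    rw [Lo_detone (u_lo hU)]; exact isUnit_one
  have hv : (H b M * M)⁻¹ * (H b M * M) = 1 := by
    apply Matrix.nonsing_inv_mul
    rw [Up_detone (v_up hU)]; exact isUnit_one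
  calc (M * G b M) * ((M * G b M)⁻¹ * M * (H b M * M)⁻¹) * (H b M * M)
      = (M * G b M) * (M * G b M)⁻¹ * M * ((H b M * M)⁻¹ * (H b M * M)) := by
        simp only [Matrix.mul_assoc]
    _ = M := by rw [hu, hv, Matrix.one_mul, Matrix.mul_one]


end WithU

lemma E_lo (h : Lo b A) : Lo b (E b t A) := by
  intro i j hij
  rw [E_apply]
  split
  · exact h i j hij
  · rfl

lemma E_up (h : Up b A) : Up b (E b t A) := by
  intro i j hij
  rw [E_apply]
  split
  · exact h i j hij
  · rfl

/-- forward direction: a product `u * r * v` has all truncations invertible -/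
lemma forward (hu : Lo b u) (hr : IsBlockDiag b r) (hru : IsUnit r.det) (hv : Up b v) (t : ℕ) :
    IsUnit (E b t (u * r * v)).det := by
  have hur : ∀ i k, b i < b k → (u * r) i k = 0 := by
    intro i k hik
    exact ((Lo_blockTriangular' hu).mul (blockDiag_bt' hr))
      (show (OrderDual.toDual ∘ b) k < (OrderDual.toDual ∘ b) i from hik)
  have hu' : ∀ i k, b i < b k → u i k = 0 := by
    intro i k hik
    exact (Lo_blockTriangular' hu) (show (OrderDual.toDual ∘ b) k < (OrderDual.toDual ∘ b) i from hik)
  rw [E_mul_left hur, E_mul_left hu', Matrix.det_mul, Matrix.det_mul]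
  exact ((by rw [Lo_detone (E_lo hu)]; exact isUnit_one : IsUnit (E b t u).det).mul
    (E_blockDiag_det_isUnit hr hru t)).mul
    (by rw [Up_detone (E_up hv)]; exact isUnit_one)

/-- middle cancellation -/
lemma cancel {L W : Matrix (Fin n) (Fin n) K}
    (hLlo : Lo b L) (hr₁ : IsBlockDiag b r₁) (hru₁ : IsUnit r₁.det)
    (hr₂ : IsBlockDiag b r₂) (hru₂ : IsUnit r₂.det) (hWup : Up b W)
    (key : L * r₁ = r₂ * W) : L = 1 ∧ r₁ = r₂ ∧ W = 1 := by
  have hZup : BlockTriangular (L * r₁) b := by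
    rw [key]; exact (blockDiag_bt hr₂).mul (Up_blockTriangular hWup)
  have hZlo : BlockTriangular (L * r₁) (OrderDual.toDual ∘ b) :=
    (Lo_blockTriangular' hLlo).mul (blockDiag_bt' hr₁)
  have hZzero : ∀ i j, b i ≠ b j → (L * r₁) i j = 0 := by
    intro i j hij
    rcases lt_or_gt_of_ne hij with h | h
    · exact hZlo (show (OrderDual.toDual ∘ b) j < (OrderDual.toDual ∘ b) i from h)
    · exact hZup h
  have hZr₁ : L * r₁ = r₁ := by
    ext i j
    by_cases hb : b i = b j
    · rw [Matrix.mul_apply]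
      rw [Finset.sum_eq_single i ?h0 (by simp)]
      · rw [hLlo i i (by omega), Matrix.one_apply_eq, one_mul]
      case h0 =>
        intro k _ hk
        by_cases hbk : b k = b j
        · rw [hLlo i k (by omega), Matrix.one_apply_ne (Ne.symm hk), zero_mul]
        · rw [hr₁ k j hbk, mul_zero]
    · rw [hZzero i j hb, hr₁ i j hb]
  have hZr₂ : L * r₁ = r₂ := by
    ext i j
    by_cases hb : b i = b j
    · rw [key, Matrix.mul_apply]
      rw [Finset.sum_eq_single j ?h0 (by simp)]
      · rw [hWup j j (by omega), Matrix.one_apply_eq, mul_one]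
      case h0 =>
        intro k _ hk
        by_cases hbk : b k = b i
        · rw [hWup k j (by omega), Matrix.one_apply_ne hk, mul_zero]
        · rw [hr₂ i k (Ne.symm hbk), zero_mul]
    · rw [hZzero i j hb, hr₂ i j hb]
  have hr12 : r₁ = r₂ := hZr₁.symm.trans hZr₂
  have hL1 : L = 1 := by
    calc L = (L * r₁) * r₁⁻¹ := by
          rw [Matrix.mul_assoc, Matrix.mul_nonsing_inv _ hru₁, Matrix.mul_one]
      _ = r₁ * r₁⁻¹ := by rw [hZr₁]
      _ = 1 := Matrix.mul_nonsing_inv _ hru₁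
  have hW1 : W = 1 := by
    calc W = r₂⁻¹ * (r₂ * W) := by
          rw [← Matrix.mul_assoc, Matrix.nonsing_inv_mul _ hru₂, Matrix.one_mul]
      _ = r₂⁻¹ * r₂ := by rw [← key, hZr₂]
      _ = 1 := Matrix.nonsing_inv_mul _ hru₂
  exact ⟨hL1, hr12, hW1⟩

/-- uniqueness of the decomposition -/
lemma uniq (hu₁ : Lo b u₁) (hr₁ : IsBlockDiag b r₁) (hru₁ : IsUnit r₁.det) (hv₁ : Up b v₁)
    (hu₂ : Lo b u₂) (hr₂ : IsBlockDiag b r₂) (hru₂ : IsUnit r₂.det) (hv₂ : Up b v₂)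
    (heq : u₁ * r₁ * v₁ = u₂ * r₂ * v₂) : u₁ = u₂ ∧ r₁ = r₂ ∧ v₁ = v₂ := by
  have hu₂d : IsUnit u₂.det := by rw [Lo_detone hu₂]; exact isUnit_one
  have hv₁d : IsUnit v₁.det := by rw [Up_detone hv₁]; exact isUnit_one
  have key : (u₂⁻¹ * u₁) * r₁ = r₂ * (v₂ * v₁⁻¹) := by
    have h1 := congrArg (fun X => u₂⁻¹ * X * v₁⁻¹) heq
    simp only [Matrix.mul_assoc] at h1
    rw [Matrix.mul_nonsing_inv _ hv₁d, Matrix.mul_one, ← Matrix.mul_assoc u₂⁻¹ u₂,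
      Matrix.nonsing_inv_mul _ hu₂d, Matrix.one_mul] at h1
    rw [Matrix.mul_assoc]
    exact h1
  obtain ⟨hL1, hr12, hW1⟩ := cancel (Lo_mul (Lo_inv hu₂) hu₁) hr₁ hru₁ hr₂ hru₂
    (Up_mul hv₂ (Up_inv hv₁)) key
  have hu12 : u₁ = u₂ := by
    calc u₁ = (u₂ * u₂⁻¹) * u₁ := by rw [Matrix.mul_nonsing_inv _ hu₂d, Matrix.one_mul]
      _ = u₂ * (u₂⁻¹ * u₁) := by rw [Matrix.mul_assoc]
      _ = u₂ := by rw [hL1, Matrix.mul_one]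
  have hv12 : v₁ = v₂ := by
    have : v₂ * v₁⁻¹ * v₁ = 1 * v₁ := by rw [hW1]
    rw [Matrix.mul_assoc, Matrix.nonsing_inv_mul _ hv₁d, Matrix.mul_one, Matrix.one_mul] at this
    exact this.symm
  exact ⟨hu12, hr12, hv12⟩


lemma lowerUnip_iff : IsStrictLowerUnip b A ↔ Lo b A := by
  constructor
  · rintro ⟨N, hN, rfl⟩ i j hij
    show (1 : Matrix (Fin n) (Fin n) K) i j + N i j = _
    rw [hN i j hij, add_zero]
  · intro h
    refine ⟨A - 1, fun i j hij => ?_, by abel⟩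
    show A i j - (1 : Matrix (Fin n) (Fin n) K) i j = 0
    rw [h i j hij, sub_self]

lemma upperUnip_iff : IsStrictUpperUnip b A ↔ Up b A := by
  constructor
  · rintro ⟨N, hN, rfl⟩ i j hij
    show (1 : Matrix (Fin n) (Fin n) K) i j + N i j = _
    rw [hN i j hij, add_zero]
  · intro h
    refine ⟨A - 1, fun i j hij => ?_, by abel⟩
    show A i j - (1 : Matrix (Fin n) (Fin n) K) i j = 0
    rw [h i j hij, sub_self]

/-- the big cell -/
def bigCell (b : Fin n → ℕ) : Set (Matrix (Fin n) (Fin n) K) :=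
  {M | ∀ t, IsUnit (E b t M).det}

lemma continuous_E (t : ℕ) : Continuous fun M : Matrix (Fin n) (Fin n) K => E b t M := by
  apply continuous_matrix
  intro i j
  by_cases h : b i ≤ t ∧ b j ≤ t
  · simp only [E_apply, if_pos h]
    exact (continuous_apply j).comp (continuous_apply i)
  · simp only [E_apply, if_neg h]
    exact continuous_const

lemma isOpen_bigCell : IsOpen (bigCell b : Set (Matrix (Fin n) (Fin n) K)) := by
  have hrw : (bigCell b : Set (Matrix (Fin n) (Fin n) K)) =
      ⋂ t ∈ Finset.range (univ.sup b + 1), {M | (E b t M).det ≠ 0} := by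
    ext M
    simp only [bigCell, Set.mem_setOf_eq, Set.mem_iInter]
    constructor
    · intro h t _
      exact IsUnit.ne_zero (h t)
    · intro h t
      rcases le_or_gt t (univ.sup b) with ht | ht
      · exact isUnit_iff_ne_zero.2 (h t (Finset.mem_range.2 (by omega)))
      · rw [E_eq_self (fun i => le_trans (Finset.le_sup (mem_univ i)) ht.le)]
        have h2 := h (univ.sup b) (Finset.mem_range.2 (by omega))
        rw [E_eq_self (fun i => Finset.le_sup (mem_univ i))] at h2
        exact isUnit_iff_ne_zero.2 h2
  rw [hrw]
  apply isOpen_biInter_finset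
  intro t _
  exact isOpen_compl_singleton.preimage ((continuous_E t).matrix_det)

-- continuity of the pieces on the subtype
lemma cont_Einv (t : ℕ) :
    Continuous fun M : bigCell b (K := K) => (E b t M.1)⁻¹ := by
  have hE : Continuous fun M : bigCell b (K := K) => E b t M.1 :=
    (continuous_E t).comp continuous_subtype_val
  have h0 : ∀ M : bigCell b (K := K), (E b t M.1).det ≠ 0 := fun M => (M.2 t).ne_zero
  have : (fun M : bigCell b (K := K) => (E b t M.1)⁻¹) =
      fun M => ((E b t M.1).det)⁻¹ • (E b t M.1).adjugate := by
    funext M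
    rw [Matrix.inv_def, Ring.inverse_eq_inv]
  rw [this]
  exact (hE.matrix_det.inv₀ h0).smul hE.matrix_adjugate

lemma cont_G : Continuous fun M : bigCell b (K := K) => G b M.1 := by
  apply continuous_matrix
  intro i j
  exact (cont_Einv (b j)).matrix_elem i j

lemma cont_H : Continuous fun M : bigCell b (K := K) => H b M.1 := by
  apply continuous_matrix
  intro i j
  exact (cont_Einv (b i)).matrix_elem i j

lemma cont_u : Continuous fun M : bigCell b (K := K) => M.1 * G b M.1 :=
  continuous_subtype_val.matrix_mul cont_G

lemma cont_v : Continuous fun M : bigCell b (K := K) => H b M.1 * M.1 :=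
  cont_H.matrix_mul continuous_subtype_val

lemma cont_uinv : Continuous fun M : bigCell b (K := K) => (M.1 * G b M.1)⁻¹ := by
  have h0 : ∀ M : bigCell b (K := K), (M.1 * G b M.1).det ≠ 0 := by
    intro M
    rw [Lo_detone (u_lo M.2)]
    exact one_ne_zero
  have : (fun M : bigCell b (K := K) => (M.1 * G b M.1)⁻¹) =
      fun M => ((M.1 * G b M.1).det)⁻¹ • (M.1 * G b M.1).adjugate := by
    funext M
    rw [Matrix.inv_def, Ring.inverse_eq_inv]
  rw [this]
  exact (cont_u.matrix_det.inv₀ h0).smul cont_u.matrix_adjugate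

lemma cont_vinv : Continuous fun M : bigCell b (K := K) => (H b M.1 * M.1)⁻¹ := by
  have h0 : ∀ M : bigCell b (K := K), (H b M.1 * M.1).det ≠ 0 := by
    intro M
    rw [Up_detone (v_up M.2)]
    exact one_ne_zero
  have : (fun M : bigCell b (K := K) => (H b M.1 * M.1)⁻¹) =
      fun M => ((H b M.1 * M.1).det)⁻¹ • (H b M.1 * M.1).adjugate := by
    funext M
    rw [Matrix.inv_def, Ring.inverse_eq_inv]
  rw [this]
  exact (cont_v.matrix_det.inv₀ h0).smul cont_v.matrix_adjugate

lemma cont_r : Continuous fun M : bigCell b (K := K) =>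
    (M.1 * G b M.1)⁻¹ * M.1 * (H b M.1 * M.1)⁻¹ :=
  (cont_uinv.matrix_mul continuous_subtype_val).matrix_mul cont_vinv


variable (K b)
abbrev Triple :=
  {p : Matrix (Fin n) (Fin n) K × Matrix (Fin n) (Fin n) K × Matrix (Fin n) (Fin n) K //
    IsStrictLowerUnip b p.1 ∧ (IsBlockDiag b p.2.1 ∧ IsUnit p.2.1) ∧ IsStrictUpperUnip b p.2.2}

variable {K b}

lemma triple_lo (t : Triple K b) : Lo b t.1.1 := lowerUnip_iff.1 t.2.1
lemma triple_up (t : Triple K b) : Up b t.1.2.2 := upperUnip_iff.1 t.2.2.2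
lemma triple_rdet (t : Triple K b) : IsUnit t.1.2.1.det :=
  (Matrix.isUnit_iff_isUnit_det _).1 t.2.2.1.2

noncomputable def toCell : Triple K b → bigCell (K := K) b := fun t =>
  ⟨t.1.1 * t.1.2.1 * t.1.2.2,
    forward (triple_lo t) t.2.2.1.1 (triple_rdet t) (triple_up t)⟩

noncomputable def fromCell : bigCell (K := K) b → Triple K b := fun M =>
  ⟨(M.1 * G b M.1, (M.1 * G b M.1)⁻¹ * M.1 * (H b M.1 * M.1)⁻¹, H b M.1 * M.1),
    lowerUnip_iff.2 (u_lo M.2), ⟨r_blockDiag M.2, r_isUnit M.2⟩, upperUnip_iff.2 (v_up M.2)⟩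

lemma phi_injective : Function.Injective
    (fun t : Triple K b => t.1.1 * t.1.2.1 * t.1.2.2) := by
  intro t₁ t₂ h
  obtain ⟨h1, h2, h3⟩ := uniq (triple_lo t₁) t₁.2.2.1.1 (triple_rdet t₁) (triple_up t₁)
    (triple_lo t₂) t₂.2.2.1.1 (triple_rdet t₂) (triple_up t₂) h
  exact Subtype.ext (Prod.ext h1 (Prod.ext h2 h3))

lemma toCell_fromCell (M : bigCell b (K := K)) : toCell (fromCell M) = M :=
  Subtype.ext (urv_eq M.2)

lemma fromCell_toCell (t : Triple K b) : fromCell (toCell t) = t := by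
  apply phi_injective
  show (fromCell (toCell t)).1.1 * _ * _ = _
  have := congrArg Subtype.val (toCell_fromCell (toCell t))
  exact this

noncomputable def cellHomeo : Triple K b ≃ₜ bigCell (K := K) b where
  toFun := toCell
  invFun := fromCell
  left_inv := fromCell_toCell
  right_inv := toCell_fromCell
  continuous_toFun := by
    have c1 : Continuous fun t : Triple K b => t.1.1 :=
      continuous_fst.comp continuous_subtype_val
    have c2 : Continuous fun t : Triple K b => t.1.2.1 :=
      (continuous_fst.comp continuous_snd).comp continuous_subtype_val
    have c3 : Continuous fun t : Triple K b => t.1.2.2 :=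
      (continuous_snd.comp continuous_snd).comp continuous_subtype_val
    exact ((c1.matrix_mul c2).matrix_mul c3).subtype_mk _
  continuous_invFun := (cont_u.prodMk (cont_r.prodMk cont_v)).subtype_mk _

lemma phi_isOpenEmbedding : IsOpenEmbedding
    (fun t : Triple K b => t.1.1 * t.1.2.1 * t.1.2.2) := by
  have heq : (fun t : Triple K b => t.1.1 * t.1.2.1 * t.1.2.2) =
      (Subtype.val : bigCell (K := K) b → Matrix (Fin n) (Fin n) K) ∘ (cellHomeo : Triple K b ≃ₜ bigCell (K := K) b) := by
    funext t; rfl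
  rw [heq]
  exact isOpen_bigCell.isOpenEmbedding_subtypeVal.comp cellHomeo.isOpenEmbedding


end Stmt6Aux

/-- Over a nontrivially normed field, the multiplication map
`(u, r, v) ↦ u * r * v` from the set of triples with `u` strictly-lower block unipotent, `r`
block diagonal invertible, `v` strictly-upper block unipotent, is an open embedding into
`M_n(K)` whose image consists of invertible matrices. -/
theorem stmt6 {K : Type*} [NontriviallyNormedField K] {n : ℕ} (b : Fin n → ℕ) :
    Function.Injective
      (fun t : {p : Matrix (Fin n) (Fin n) K × Matrix (Fin n) (Fin n) K ×
          Matrix (Fin n) (Fin n) K //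
          IsStrictLowerUnip b p.1 ∧ (IsBlockDiag b p.2.1 ∧ IsUnit p.2.1) ∧
            IsStrictUpperUnip b p.2.2} =>
        t.1.1 * t.1.2.1 * t.1.2.2) ∧
    IsOpenEmbedding
      (fun t : {p : Matrix (Fin n) (Fin n) K × Matrix (Fin n) (Fin n) K ×
          Matrix (Fin n) (Fin n) K //
          IsStrictLowerUnip b p.1 ∧ (IsBlockDiag b p.2.1 ∧ IsUnit p.2.1) ∧
            IsStrictUpperUnip b p.2.2} =>
        t.1.1 * t.1.2.1 * t.1.2.2) ∧
    ∀ t : {p : Matrix (Fin n) (Fin n) K × Matrix (Fin n) (Fin n) K ×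
        Matrix (Fin n) (Fin n) K //
        IsStrictLowerUnip b p.1 ∧ (IsBlockDiag b p.2.1 ∧ IsUnit p.2.1) ∧
          IsStrictUpperUnip b p.2.2},
      IsUnit (t.1.1 * t.1.2.1 * t.1.2.2) := by
  refine ⟨Stmt6Aux.phi_injective, Stmt6Aux.phi_isOpenEmbedding, fun t => ?_⟩
  have hu : IsUnit t.1.1 := (Matrix.isUnit_iff_isUnit_det _).2
    (by rw [Stmt6Aux.Lo_detone (Stmt6Aux.triple_lo t)]; exact isUnit_one)
  have hv : IsUnit t.1.2.2 := (Matrix.isUnit_iff_isUnit_det _).2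
    (by rw [Stmt6Aux.Up_detone (Stmt6Aux.triple_up t)]; exact isUnit_one)
  exact (hu.mul t.2.2.1.2).mul hv
end

section
/- Let K be a normed field, n : ℕ, b : Fin n → ℕ, and let g ∈ M_n(K) be block upper triangular (g i j = 0 whenever b j < b i). Let d : Fin n → Kˣ satisfy: d i = d j whenever b i = b j, and ‖d i / d j‖ < 1 whenever b i < b j, and let a be the diagonal matrix with entries d. Then the sequence k ↦ aᵏ · g · a⁻ᵏ converges entrywise, as k → ∞, to the block diagonal part D(g) of g. -/
open Filter Topology

/-- Let `g` be block upper triangular, and `a = diagonal d` with `d` constant on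
blocks and `‖d i / d j‖ < 1` whenever `b i < b j`. Then `aᵏ * g * a⁻ᵏ` converges entrywise to
the block diagonal part of `g`. -/
theorem stmt7 {K : Type*} [NormedField K] {n : ℕ} (b : Fin n → ℕ)
    (g : Matrix (Fin n) (Fin n) K)
    (hg : ∀ i j, b j < b i → g i j = 0)
    (d : Fin n → Kˣ)
    (heq : ∀ i j, b i = b j → d i = d j)
    (hlt : ∀ i j, b i < b j → ‖(d i : K) / (d j : K)‖ < 1) :
    Tendsto
      (fun k : ℕ =>
        (Matrix.diagonal fun i => (d i : K)) ^ k * g *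
          (Matrix.diagonal fun i => ((d i : K)⁻¹)) ^ k)
      atTop
      (nhds (Matrix.of fun i j => if b i = b j then g i j else 0)) := by
  rw [show (𝓝 (Matrix.of fun i j => if b i = b j then g i j else 0)) = _ from rfl]
  refine tendsto_pi_nhds.2 fun i => tendsto_pi_nhds.2 fun j => ?_
  have hentry : ∀ k : ℕ,
      ((Matrix.diagonal fun i => (d i : K)) ^ k * g *
        (Matrix.diagonal fun i => ((d i : K)⁻¹)) ^ k) i j
      = ((d i : K) / (d j : K)) ^ k * g i j := by
    intro k
    rw [Matrix.diagonal_pow, Matrix.diagonal_pow, Matrix.mul_apply]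
    simp [Matrix.diagonal_apply, Finset.mul_sum, Matrix.mul_apply, div_pow, div_eq_mul_inv, mul_pow, inv_pow, mul_comm, mul_assoc, mul_left_comm]
  simp only [hentry]
  rcases lt_trichotomy (b i) (b j) with h | h | h
  · have := tendsto_pow_atTop_nhds_zero_of_norm_lt_one (hlt i j h)
    simpa [if_neg h.ne] using this.mul_const (g i j)
  · have : (d i : K) / (d j : K) = 1 := by
      rw [heq i j h]; exact div_self (d j).ne_zero
    simpa only [this, one_pow, one_mul, Matrix.of_apply, if_pos h] using tendsto_const_nhds (x := g i j)
  · simp [hg i j h, if_neg h.ne']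
end

section
/- Let K be a nontrivially normed field, n : ℕ, b : Fin n → ℕ, Γ a group, and ρ : Γ →* GL_n(K) a group homomorphism such that for every γ ∈ Γ the matrix ρ(γ) is block upper triangular (ρ(γ) i j = 0 whenever b j < b i). Then: (1) there exists a group homomorphism σ : Γ →* GL_n(K) with σ(γ) equal to the block diagonal part D(ρ(γ)) for every γ; and (2) there exists an invertible diagonal matrix a ∈ GL_n(K) such that for every γ ∈ Γ, aᵏ · ρ(γ) · a⁻ᵏ converges entrywise to σ(γ) as k → ∞; in particular σ lies in the closure of the conjugation orbit of ρ. -/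
open Filter Topology

section Aux

variable {K : Type*} [NontriviallyNormedField K] {n : ℕ} (b : Fin n → ℕ)

/-- Blockwise diagonal part of a matrix. -/
noncomputable def blkD (M : Matrix (Fin n) (Fin n) K) : Matrix (Fin n) (Fin n) K :=
  Matrix.of fun i j => if b i = b j then M i j else 0

lemma blkD_one : blkD b (1 : Matrix (Fin n) (Fin n) K) = 1 := by
  ext i j
  simp only [blkD, Matrix.of_apply, Matrix.one_apply]
  by_cases h : i = j
  · simp [h]
  · simp [h]

lemma blkD_mul (M N : Matrix (Fin n) (Fin n) K)
    (hM : ∀ i j, b j < b i → M i j = 0) (hN : ∀ i j, b j < b i → N i j = 0) :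
    blkD b (M * N) = blkD b M * blkD b N := by
  ext i j
  simp only [blkD, Matrix.of_apply, Matrix.mul_apply]
  by_cases hij : b i = b j
  · rw [if_pos hij]
    refine Finset.sum_congr rfl fun k _ => ?_
    by_cases hik : b i = b k
    · rw [if_pos hik, if_pos (hik ▸ hij)]
    · rw [if_neg hik, zero_mul]
      rcases lt_or_gt_of_ne (fun h => hik h.symm) with h | h
      · rw [hM i k h, zero_mul]
      · rw [hN k j (hij ▸ h), mul_zero]
  · rw [if_neg hij]
    refine (Finset.sum_eq_zero fun k _ => ?_).symm
    by_cases hik : b i = b k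
    · rw [if_neg fun hkj => hij (hik.trans hkj), mul_zero]
    · rw [if_neg hik, zero_mul]

end Aux

/-- If `ρ : Γ →* GL_n(K)` is blockwise upper triangular (w.r.t. a block function
`b`), then its blockwise diagonal part is again a group homomorphism `σ : Γ →* GL_n(K)`, and
there is an invertible diagonal matrix `a` such that `aᵏ ρ(γ) a⁻ᵏ → σ(γ)` entrywise for every
`γ`; in particular `σ` lies in the closure of the conjugation orbit of `ρ`. -/
theorem stmt8 {K : Type*} [NontriviallyNormedField K] {n : ℕ} (b : Fin n → ℕ)
    {Γ : Type*} [Group Γ]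
    (ρ : Γ →* Matrix.GeneralLinearGroup (Fin n) K)
    (hρ : ∀ γ : Γ, ∀ i j, b j < b i → (ρ γ : Matrix (Fin n) (Fin n) K) i j = 0) :
    ∃ σ : Γ →* Matrix.GeneralLinearGroup (Fin n) K,
      (∀ γ : Γ, ∀ i j, (σ γ : Matrix (Fin n) (Fin n) K) i j =
        if b i = b j then (ρ γ : Matrix (Fin n) (Fin n) K) i j else 0) ∧
      ∃ a : Matrix.GeneralLinearGroup (Fin n) K,
        (∃ dd : Fin n → K, (a : Matrix (Fin n) (Fin n) K) = Matrix.diagonal dd) ∧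
        ∀ γ : Γ,
          Tendsto
            (fun k : ℕ =>
              ((a ^ k * ρ γ * a⁻¹ ^ k : Matrix.GeneralLinearGroup (Fin n) K) :
                Matrix (Fin n) (Fin n) K))
            atTop (nhds ((σ γ : Matrix (Fin n) (Fin n) K))) := by
  classical
  have key : ∀ γ₁ γ₂ : Γ,
      blkD b ((ρ (γ₁ * γ₂) : Matrix (Fin n) (Fin n) K)) =
        blkD b (ρ γ₁ : Matrix (Fin n) (Fin n) K) * blkD b (ρ γ₂ : Matrix (Fin n) (Fin n) K) := by
    intro γ₁ γ₂
    rw [map_mul]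
    have : ((ρ γ₁ * ρ γ₂ : Matrix.GeneralLinearGroup (Fin n) K) : Matrix (Fin n) (Fin n) K)
        = (ρ γ₁ : Matrix (Fin n) (Fin n) K) * (ρ γ₂ : Matrix (Fin n) (Fin n) K) := rfl
    rw [this]
    exact blkD_mul b _ _ (hρ γ₁) (hρ γ₂)
  have hval : ∀ γ : Γ,
      blkD b (ρ γ : Matrix (Fin n) (Fin n) K) * blkD b (ρ γ⁻¹ : Matrix (Fin n) (Fin n) K) = 1 := by
    intro γ
    rw [← key, mul_inv_cancel, map_one]
    exact blkD_one b
  have hval' : ∀ γ : Γ,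
      blkD b (ρ γ⁻¹ : Matrix (Fin n) (Fin n) K) * blkD b (ρ γ : Matrix (Fin n) (Fin n) K) = 1 := by
    intro γ
    rw [← key, inv_mul_cancel, map_one]
    exact blkD_one b
  refine ⟨{ toFun := fun γ => ⟨blkD b (ρ γ : Matrix (Fin n) (Fin n) K),
              blkD b (ρ γ⁻¹ : Matrix (Fin n) (Fin n) K), hval γ, hval' γ⟩
            map_one' := by
              apply Units.ext
              show blkD b (ρ 1 : Matrix (Fin n) (Fin n) K) = 1
              rw [map_one]; exact blkD_one b
            map_mul' := by
              intro γ₁ γ₂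
              apply Units.ext
              exact key γ₁ γ₂ }, fun γ i j => rfl, ?_⟩
  obtain ⟨t, ht⟩ := NormedField.exists_one_lt_norm K
  have ht0 : t ≠ 0 := by
    intro h; rw [h, norm_zero] at ht; linarith
  set d : Fin n → K := fun i => t ^ b i with hd
  have hd0 : ∀ i, d i ≠ 0 := fun i => pow_ne_zero _ ht0
  set a : Matrix.GeneralLinearGroup (Fin n) K :=
    ⟨Matrix.diagonal d, Matrix.diagonal fun i => (d i)⁻¹, by
      rw [Matrix.diagonal_mul_diagonal]
      convert Matrix.diagonal_one using 2
      ext i; exact mul_inv_cancel₀ (hd0 i), by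
      rw [Matrix.diagonal_mul_diagonal]
      convert Matrix.diagonal_one using 2
      ext i; exact inv_mul_cancel₀ (hd0 i)⟩ with ha
  refine ⟨a, ⟨d, rfl⟩, fun γ => ?_⟩
  set M : Matrix (Fin n) (Fin n) K := (ρ γ : Matrix (Fin n) (Fin n) K) with hM
  have hcoe : ∀ k : ℕ,
      ((a ^ k * ρ γ * a⁻¹ ^ k : Matrix.GeneralLinearGroup (Fin n) K) :
        Matrix (Fin n) (Fin n) K)
      = Matrix.diagonal (fun i => d i ^ k) * M * Matrix.diagonal (fun i => (d i)⁻¹ ^ k) := by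
    intro k
    have h1 : ((a ^ k : Matrix.GeneralLinearGroup (Fin n) K) : Matrix (Fin n) (Fin n) K)
        = Matrix.diagonal (fun i => d i ^ k) := by
      rw [Units.val_pow_eq_pow_val]
      show (Matrix.diagonal d) ^ k = _
      rw [Matrix.diagonal_pow]
      rfl
    have h2 : ((a⁻¹ ^ k : Matrix.GeneralLinearGroup (Fin n) K) : Matrix (Fin n) (Fin n) K)
        = Matrix.diagonal (fun i => (d i)⁻¹ ^ k) := by
      rw [Units.val_pow_eq_pow_val]
      have : ((a⁻¹ : Matrix.GeneralLinearGroup (Fin n) K) : Matrix (Fin n) (Fin n) K)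
          = Matrix.diagonal (fun i => (d i)⁻¹) := rfl
      rw [this, Matrix.diagonal_pow]
      rfl
    calc ((a ^ k * ρ γ * a⁻¹ ^ k : Matrix.GeneralLinearGroup (Fin n) K) :
        Matrix (Fin n) (Fin n) K)
        = ((a ^ k : Matrix.GeneralLinearGroup (Fin n) K) : Matrix (Fin n) (Fin n) K) * M *
          ((a⁻¹ ^ k : Matrix.GeneralLinearGroup (Fin n) K) : Matrix (Fin n) (Fin n) K) := rfl
      _ = _ := by rw [h1, h2]
  simp only [hcoe]
  apply tendsto_pi_nhds.mpr
  intro i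
  rw [tendsto_pi_nhds]
  intro j
  have hentry : ∀ k : ℕ,
      (Matrix.diagonal (fun i => d i ^ k) * M * Matrix.diagonal (fun i => (d i)⁻¹ ^ k)) i j
      = d i ^ k * M i j * (d j)⁻¹ ^ k := by
    intro k
    rw [Matrix.mul_diagonal, Matrix.diagonal_mul]
  simp only [hentry]
  have htgt : (blkD b M) i j = if b i = b j then M i j else 0 := rfl
  show Tendsto (fun k : ℕ => d i ^ k * M i j * (d j)⁻¹ ^ k) atTop (nhds ((blkD b M) i j))
  rw [htgt]
  rcases lt_trichotomy (b i) (b j) with hij | hij | hij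
  · -- entries above the diagonal blocks tend to 0
    rw [if_neg hij.ne]
    have hne : ‖d i * (d j)⁻¹‖ < 1 := by
      rw [norm_mul, norm_inv, hd, norm_pow, norm_pow]
      rw [mul_inv_lt_iff₀ (by positivity), one_mul]
      exact pow_lt_pow_right₀ ht hij
    have h0 : Tendsto (fun k : ℕ => (d i * (d j)⁻¹) ^ k * M i j) atTop (nhds (0 * M i j)) :=
      (tendsto_pow_atTop_nhds_zero_of_norm_lt_one hne).mul_const _
    rw [zero_mul] at h0
    refine h0.congr fun k => ?_
    rw [mul_pow]; ring
  · rw [if_pos hij]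
    have : ∀ k : ℕ, d i ^ k * M i j * (d j)⁻¹ ^ k = M i j := by
      intro k
      have : d i = d j := by rw [hd]; simp only []; rw [hij]
      rw [this, mul_comm (d j ^ k) (M i j), mul_assoc, ← mul_pow,
        mul_inv_cancel₀ (hd0 j), one_pow, mul_one]
    simp only [this]
    exact tendsto_const_nhds
  · -- entries below: they vanish identically
    rw [if_neg hij.ne']
    have hM0 : M i j = 0 := hρ γ i j hij
    simp only [hM0, mul_zero, zero_mul]
    exact tendsto_const_nhds
end

section
/- Let K be a normed field, n : ℕ, b : Fin n → ℕ. Let (d_k)_{k∈ℕ} be a sequence of maps Fin n → Kˣ such that for all k, d_k i = d_k j whenever b i = b j, and such that ‖d_k i / d_k j‖ → ∞ as k → ∞ whenever b i < b j; let a_k = diagonal(d_k). Then: (1) for every bounded sequence (N_k) of strictly-upper block unipotent matrices (there is C with ‖N_k i j‖ ≤ C for all k, i, j), one has a_k⁻¹ · N_k · a_k → 1 entrywise; and (2) for every bounded sequence (M_k) of strictly-lower block unipotent matrices, one has a_k · M_k · a_k⁻¹ → 1 entrywise. -/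
open Filter Topology

private lemma key9 {K : Type*} [NormedField K] (u v x : ℕ → K) (C : ℝ)
    (hx : ∀ k, ‖x k‖ ≤ C)
    (h : Tendsto (fun k : ℕ => ‖u k / v k‖) atTop atTop) :
    Tendsto (fun k : ℕ => x k * (v k / u k)) atTop (nhds 0) := by
  rw [tendsto_zero_iff_norm_tendsto_zero]
  have h0 : Tendsto (fun k : ℕ => ‖v k‖ / ‖u k‖) atTop (nhds 0) := by
    refine h.inv_tendsto_atTop.congr fun k => ?_
    simp only [Pi.inv_apply, norm_div, inv_div]
  apply squeeze_zero (fun k => by positivity) (g := fun k => C * (‖v k‖ / ‖u k‖))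
  · intro k
    rw [norm_mul, norm_div]
    exact mul_le_mul_of_nonneg_right (hx k) (by positivity)
  · simpa using (tendsto_const_nhds (x := C)).mul h0

/-- Let `(d_k)` be a sequence of invertible diagonal data, constant on blocks,
with `‖d_k i / d_k j‖ → ∞` whenever `b i < b j`, and `a_k = diagonal (d_k)`. Then conjugation
by `a_k⁻¹` contracts bounded sequences of strictly-upper block unipotent matrices to `1`, and
conjugation by `a_k` contracts bounded sequences of strictly-lower block unipotent matrices
to `1` (entrywise). -/
theorem stmt9 {K : Type*} [NormedField K] {n : ℕ} (b : Fin n → ℕ)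
    (d : ℕ → Fin n → Kˣ)
    (heq : ∀ k : ℕ, ∀ i j, b i = b j → d k i = d k j)
    (hinf : ∀ i j, b i < b j →
      Tendsto (fun k : ℕ => ‖(d k i : K) / (d k j : K)‖) atTop atTop) :
    (∀ N : ℕ → Matrix (Fin n) (Fin n) K,
      (∀ k, IsStrictUpperUnip b (N k)) →
      (∃ C : ℝ, ∀ k i j, ‖N k i j‖ ≤ C) →
      Tendsto
        (fun k : ℕ =>
          (Matrix.diagonal fun i => ((d k i : K))⁻¹) * N k *
            Matrix.diagonal (fun i => (d k i : K)))
        atTop (nhds 1)) ∧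
    (∀ M : ℕ → Matrix (Fin n) (Fin n) K,
      (∀ k, IsStrictLowerUnip b (M k)) →
      (∃ C : ℝ, ∀ k i j, ‖M k i j‖ ≤ C) →
      Tendsto
        (fun k : ℕ =>
          (Matrix.diagonal fun i => (d k i : K)) * M k *
            Matrix.diagonal (fun i => ((d k i : K))⁻¹))
        atTop (nhds 1)) := by
  constructor
  · rintro N hN ⟨C, hC⟩
    refine tendsto_pi_nhds.mpr ?_
    intro i
    rw [tendsto_pi_nhds]
    intro j
    have hentry : ∀ k, ((Matrix.diagonal fun i => ((d k i : K))⁻¹) * N k *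
        Matrix.diagonal (fun i => (d k i : K))) i j
        = ((d k i : K))⁻¹ * N k i j * (d k j : K) := by
      intro k
      rw [Matrix.mul_diagonal, Matrix.diagonal_mul]
    by_cases hij : i = j
    · subst hij
      have : ∀ k, ((Matrix.diagonal fun i => ((d k i : K))⁻¹) * N k *
          Matrix.diagonal (fun i => (d k i : K))) i i = 1 := by
        intro k
        obtain ⟨N', hN', hNk⟩ := hN k
        have hNii : N k i i = 1 := by
          rw [hNk]; simp [hN' i i (lt_irrefl _)]
        rw [hentry k, hNii, mul_one, inv_mul_cancel₀ (Units.ne_zero (d k i))]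
      simp only [this, Matrix.one_apply_eq]
      exact tendsto_const_nhds
    · have h1ij : (1 : Matrix (Fin n) (Fin n) K) i j = 0 := Matrix.one_apply_ne hij
      rw [h1ij]
      by_cases hb : b i < b j
      · have := key9 (fun k => (d k i : K)) (fun k => (d k j : K))
          (fun k => N k i j) C (fun k => hC k i j) (hinf i j hb)
        refine this.congr fun k => ?_
        rw [hentry k]
        field_simp
      · have : ∀ k, ((Matrix.diagonal fun i => ((d k i : K))⁻¹) * N k *
            Matrix.diagonal (fun i => (d k i : K))) i j = 0 := by
          intro k
          obtain ⟨N', hN', hNk⟩ := hN k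
          have : N k i j = 0 := by
            rw [hNk]; simp [Matrix.one_apply_ne hij, hN' i j hb]
          rw [hentry k, this, mul_zero, zero_mul]
        simp only [this]
        exact tendsto_const_nhds
  · rintro M hM ⟨C, hC⟩
    refine tendsto_pi_nhds.mpr ?_
    intro i
    rw [tendsto_pi_nhds]
    intro j
    have hentry : ∀ k, ((Matrix.diagonal fun i => (d k i : K)) * M k *
        Matrix.diagonal (fun i => ((d k i : K))⁻¹)) i j
        = (d k i : K) * M k i j * ((d k j : K))⁻¹ := by
      intro k
      rw [Matrix.mul_diagonal, Matrix.diagonal_mul]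
    by_cases hij : i = j
    · subst hij
      have : ∀ k, ((Matrix.diagonal fun i => (d k i : K)) * M k *
          Matrix.diagonal (fun i => ((d k i : K))⁻¹)) i i = 1 := by
        intro k
        obtain ⟨M', hM', hMk⟩ := hM k
        have hMii : M k i i = 1 := by
          rw [hMk]; simp [hM' i i (lt_irrefl _)]
        rw [hentry k, hMii, mul_one, mul_inv_cancel₀ (Units.ne_zero (d k i))]
      simp only [this, Matrix.one_apply_eq]
      exact tendsto_const_nhds
    · have h1ij : (1 : Matrix (Fin n) (Fin n) K) i j = 0 := Matrix.one_apply_ne hij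
      rw [h1ij]
      by_cases hb : b j < b i
      · have := key9 (fun k => (d k j : K)) (fun k => (d k i : K))
          (fun k => M k i j) C (fun k => hC k i j) (hinf j i hb)
        refine this.congr fun k => ?_
        rw [hentry k]
        field_simp
      · have : ∀ k, ((Matrix.diagonal fun i => (d k i : K)) * M k *
            Matrix.diagonal (fun i => ((d k i : K))⁻¹)) i j = 0 := by
          intro k
          obtain ⟨M', hM', hMk⟩ := hM k
          have : M k i j = 0 := by
            rw [hMk]; simp [Matrix.one_apply_ne hij, hM' i j hb]
          rw [hentry k, this, mul_zero, zero_mul]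
        simp only [this]
        exact tendsto_const_nhds
end

section
/- Let K be a field, n : ℕ, b : Fin n → ℕ, Γ a group, and ρ : Γ →* GL_n(K) a group homomorphism such that for every γ ∈ Γ the matrix ρ(γ) is block upper triangular (ρ(γ) i j = 0 whenever b j < b i). Assume ρ is semisimple: every subspace W of K^n = (Fin n → K) that is invariant under all ρ(γ) (acting by matrix-vector multiplication) admits a complement that is also invariant under all ρ(γ). Then there exists a strictly-upper block unipotent matrix u ∈ GL_n(K) such that for every γ ∈ Γ, u · ρ(γ) · u⁻¹ equals the block diagonal part D(ρ(γ)). -/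
open scoped Matrix

namespace Stmt10Aux

variable {K : Type*} [Field K] {n : ℕ}

/-- Vectors supported on coordinates `i` with `b i < t`. -/
def Ssub (b : Fin n → ℕ) (t : ℕ) : Submodule K (Fin n → K) where
  carrier := {v | ∀ i, t ≤ b i → v i = 0}
  add_mem' := by intro a c ha hc i hi; simp [Pi.add_apply, ha i hi, hc i hi]
  zero_mem' := by intro i _; rfl
  smul_mem' := by intro c v hv i hi; simp [Pi.smul_apply, hv i hi]

lemma mem_Ssub {b : Fin n → ℕ} {t : ℕ} {v : Fin n → K} :
    v ∈ Ssub (K := K) b t ↔ ∀ i, t ≤ b i → v i = 0 := Iff.rfl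

lemma Ssub_mono {b : Fin n → ℕ} {s t : ℕ} (h : s ≤ t) :
    Ssub (K := K) b s ≤ Ssub (K := K) b t := by
  intro v hv i hi
  exact hv i (le_trans h hi)

/-- Coordinate projection onto the block `b i = s`. -/
def Pmap (b : Fin n → ℕ) (s : ℕ) : Module.End K (Fin n → K) where
  toFun v := fun i => if b i = s then v i else 0
  map_add' := by intro v w; funext i; by_cases h : b i = s <;> simp [h]
  map_smul' := by intro c v; funext i; by_cases h : b i = s <;> simp [h]

lemma Pmap_apply (b : Fin n → ℕ) (s : ℕ) (v : Fin n → K) (i : Fin n) :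
    Pmap b s v i = if b i = s then v i else 0 := rfl

/-- `Pmap` differs from the identity by something supported strictly lower. -/
lemma Pmap_sub_self_mem {b : Fin n → ℕ} {s : ℕ} {v : Fin n → K}
    (hv : v ∈ Ssub (K := K) b (s+1)) : Pmap b s v - v ∈ Ssub (K := K) b s := by
  intro i hi
  rcases eq_or_lt_of_le hi with h | h
  · simp [Pmap_apply, h.symm]
  · simp [Pmap_apply, hv i h, (by omega : ¬ b i = s)]

/-- Key computation: for `A` block-upper-triangular and `v ∈ Ssub b (s+1)`,
`P_s (A *ᵥ v) = D(A) *ᵥ (P_s v)`. -/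
lemma Pmap_mulVec {b : Fin n → ℕ} {A : Matrix (Fin n) (Fin n) K}
    (hA : ∀ i j, b j < b i → A i j = 0) {s : ℕ} {v : Fin n → K}
    (hv : v ∈ Ssub (K := K) b (s+1)) :
    Pmap b s (A *ᵥ v) =
      (Matrix.of fun i j => if b i = b j then A i j else 0) *ᵥ (Pmap b s v) := by
  funext i
  rw [Pmap_apply]
  simp only [Matrix.mulVec, dotProduct]
  by_cases hi : b i = s
  · rw [if_pos hi]
    refine Finset.sum_congr rfl ?_
    intro j _
    simp only [Matrix.of_apply, Pmap_apply]
    by_cases hj : b j = s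
    · simp [hj, hi]
    · rcases lt_or_ge (b j) s with h | h
      · rw [hA i j (by omega), if_neg hj, zero_mul, mul_zero]
      · rw [hv j (by omega), if_neg hj, mul_zero, mul_zero]
  · rw [if_neg hi]
    symm
    refine Finset.sum_eq_zero ?_
    intro j _
    simp only [Matrix.of_apply, Pmap_apply]
    by_cases hj : b j = s
    · rw [if_neg (by omega : ¬ b i = b j), zero_mul]
    · rw [if_neg hj, mul_zero]

/-- A strictly block upper triangular matrix is nilpotent, hence `1 + N` is a unit. -/
lemma isUnit_one_add {b : Fin n → ℕ} {N : Matrix (Fin n) (Fin n) K}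
    (hN : ∀ i j, ¬ b i < b j → N i j = 0) : IsUnit (1 + N) := by
  refine IsNilpotent.isUnit_one_add ?_
  have key : ∀ k : ℕ, ∀ i j, ¬ b i + k ≤ b j → (N ^ k) i j = 0 := by
    intro k
    induction k with
    | zero => intro i j h; rw [pow_zero, Matrix.one_apply,
        if_neg (by rintro rfl; omega)]
    | succ k ih =>
      intro i j h
      rw [pow_succ, Matrix.mul_apply]
      refine Finset.sum_eq_zero fun l _ => ?_
      by_cases hl : b i + k ≤ b l
      · rw [hN l j (by omega), mul_zero]
      · rw [ih i l hl, zero_mul]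
  refine ⟨(Finset.univ.sup b) + 1, ?_⟩
  ext i j
  rw [key _ i j (by have : b j ≤ Finset.univ.sup b := Finset.le_sup (Finset.mem_univ j); omega)]
  simp

/-- The unipotent change-of-basis map, built by recursion on the block level. -/
noncomputable def uAux (b : Fin n → ℕ) (π : ℕ → Module.End K (Fin n → K)) :
    ℕ → Module.End K (Fin n → K)
  | 0 => Pmap b 0
  | (t+1) => (uAux b π t) ∘ₗ (π (t+1)) + (Pmap b (t+1)) ∘ₗ (LinearMap.id - π (t+1))

lemma uAux_eq_Pmap (b : Fin n → ℕ) (π : ℕ → Module.End K (Fin n → K))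
    (S C : ℕ → Submodule K (Fin n → K))
    (hmono : ∀ s t, s ≤ t → S s ≤ S t)
    (hπ₁ : ∀ t, ∀ v ∈ S t, π t v = v)
    (hπ₂ : ∀ t, ∀ v ∈ C t, π t v = 0) :
    ∀ t s, s ≤ t → ∀ v ∈ C s ⊓ S (s+1), uAux b π t v = Pmap b s v := by
  intro t
  induction t with
  | zero =>
    intro s hs v _
    obtain rfl : s = 0 := Nat.le_zero.mp hs
    rfl
  | succ t ih =>
    intro s hs v hv
    have hun : uAux b π (t+1) =
        (uAux b π t) ∘ₗ (π (t+1)) + (Pmap b (t+1)) ∘ₗ (LinearMap.id - π (t+1)) := rfl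
    rw [hun]
    rcases Nat.lt_or_ge s (t+1) with h | h
    · have hmem : v ∈ S (t+1) := hmono (s+1) (t+1) h hv.2
      simp only [LinearMap.add_apply, LinearMap.comp_apply, LinearMap.sub_apply,
        LinearMap.id_apply, hπ₁ (t+1) v hmem, sub_self, map_zero, add_zero]
      exact ih s (Nat.lt_succ_iff.mp h) v hv
    · obtain rfl : s = t+1 := le_antisymm hs h
      simp only [LinearMap.add_apply, LinearMap.comp_apply, LinearMap.sub_apply,
        LinearMap.id_apply, hπ₂ (t+1) v hv.1, map_zero, sub_zero, zero_add]

end Stmt10Aux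

/-- A semisimple blockwise upper triangular representation
`ρ : Γ →* GL_n(K)` is conjugate, by a strictly-upper block unipotent matrix `u`, to its
blockwise diagonal part: `u ρ(γ) u⁻¹ = D(ρ(γ))` for all `γ`. -/
theorem stmt10 {K : Type*} [Field K] {n : ℕ} (b : Fin n → ℕ)
    {Γ : Type*} [Group Γ]
    (ρ : Γ →* Matrix.GeneralLinearGroup (Fin n) K)
    (hρ : ∀ γ : Γ, ∀ i j, b j < b i → (ρ γ : Matrix (Fin n) (Fin n) K) i j = 0)
    (hss : ∀ W : Submodule K (Fin n → K),
      (∀ γ : Γ, ∀ w ∈ W, (ρ γ : Matrix (Fin n) (Fin n) K) *ᵥ w ∈ W) →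
      ∃ W' : Submodule K (Fin n → K),
        (∀ γ : Γ, ∀ w ∈ W', (ρ γ : Matrix (Fin n) (Fin n) K) *ᵥ w ∈ W') ∧ IsCompl W W') :
    ∃ u : Matrix.GeneralLinearGroup (Fin n) K,
      IsStrictUpperUnip b (u : Matrix (Fin n) (Fin n) K) ∧
      ∀ γ : Γ, ∀ i j,
        ((u : Matrix (Fin n) (Fin n) K) * (ρ γ : Matrix (Fin n) (Fin n) K) *
          ((u⁻¹ : Matrix.GeneralLinearGroup (Fin n) K) : Matrix (Fin n) (Fin n) K)) i j =
        if b i = b j then (ρ γ : Matrix (Fin n) (Fin n) K) i j else 0 := by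
  classical
  -- notation
  set M : Γ → Matrix (Fin n) (Fin n) K := fun γ => (ρ γ : Matrix (Fin n) (Fin n) K) with hM
  set D : Γ → Matrix (Fin n) (Fin n) K :=
    fun γ => Matrix.of fun i j => if b i = b j then M γ i j else 0 with hD
  -- the filtration is invariant
  have hSinv : ∀ t : ℕ, ∀ γ : Γ, ∀ v ∈ Stmt10Aux.Ssub (K := K) b t,
      M γ *ᵥ v ∈ Stmt10Aux.Ssub (K := K) b t := by
    intro t γ v hv i hi
    simp only [Matrix.mulVec, dotProduct]
    refine Finset.sum_eq_zero fun j _ => ?_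
    rcases lt_or_ge (b j) t with h | h
    · exact mul_eq_zero_of_left (hρ γ i j (by omega)) _
    · rw [hv j h, mul_zero]
  -- choose invariant complements
  choose C hCinv hCcompl using fun t => hss (Stmt10Aux.Ssub (K := K) b t) (hSinv t)
  -- the projections onto the filtration steps along the complements
  set π : ℕ → Module.End K (Fin n → K) := fun t =>
    (Stmt10Aux.Ssub (K := K) b t).subtype ∘ₗ
      (Stmt10Aux.Ssub (K := K) b t).projectionOnto (C t) (hCcompl t) with hπ
  have hπ₁ : ∀ t, ∀ v ∈ Stmt10Aux.Ssub (K := K) b t, π t v = v := by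
    intro t v hv
    simp only [hπ, LinearMap.comp_apply]
    rw [show v = ((⟨v, hv⟩ : Stmt10Aux.Ssub (K := K) b t) : Fin n → K) from rfl,
      Submodule.linearProjOfIsCompl_apply_left]
    rfl
  have hπ₂ : ∀ t, ∀ v ∈ C t, π t v = 0 := by
    intro t v hv
    simp only [hπ, LinearMap.comp_apply]
    rw [show v = ((⟨v, hv⟩ : C t) : Fin n → K) from rfl,
      Submodule.linearProjOfIsCompl_apply_right]
    rfl
  -- decomposition of each filtration step
  have hdecomp : ∀ t : ℕ, Stmt10Aux.Ssub (K := K) b (t+1)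
      = Stmt10Aux.Ssub (K := K) b t ⊔ (C t ⊓ Stmt10Aux.Ssub (K := K) b (t+1)) := by
    intro t
    have h1 : (Stmt10Aux.Ssub (K := K) b t ⊔ C t) ⊓ Stmt10Aux.Ssub (K := K) b (t+1)
        = Stmt10Aux.Ssub (K := K) b t ⊔ C t ⊓ Stmt10Aux.Ssub (K := K) b (t+1) :=
      sup_inf_assoc_of_le (C t) (Stmt10Aux.Ssub_mono (Nat.le_succ t))
    rw [← h1, (hCcompl t).sup_eq_top, top_inf_eq]
  -- invariance of the pieces
  have hVinv : ∀ t : ℕ, ∀ γ : Γ, ∀ v ∈ C t ⊓ Stmt10Aux.Ssub (K := K) b (t+1),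
      M γ *ᵥ v ∈ C t ⊓ Stmt10Aux.Ssub (K := K) b (t+1) :=
    fun t γ v hv => ⟨hCinv t γ v hv.1, hSinv (t+1) γ v hv.2⟩
  set T : ℕ := Finset.univ.sup b with hT
  have hbT : ∀ i : Fin n, b i ≤ T := fun i => Finset.le_sup (Finset.mem_univ i)
  set U : Module.End K (Fin n → K) := Stmt10Aux.uAux b π T with hU
  have hA : ∀ s : ℕ, s ≤ T → ∀ v ∈ C s ⊓ Stmt10Aux.Ssub (K := K) b (s+1),
      U v = Stmt10Aux.Pmap b s v :=
    fun s hs => Stmt10Aux.uAux_eq_Pmap b π (Stmt10Aux.Ssub (K := K) b) C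
      (fun s t h => Stmt10Aux.Ssub_mono h) hπ₁ hπ₂ T s hs
  have hTop : ∀ v : Fin n → K, v ∈ Stmt10Aux.Ssub (K := K) b (T+1) := by
    intro v i hi
    exact absurd hi (by have := hbT i; omega)
  -- intertwining relation on the filtration
  have hI : ∀ t : ℕ, t ≤ T + 1 → ∀ γ : Γ, ∀ v ∈ Stmt10Aux.Ssub (K := K) b t,
      U (M γ *ᵥ v) = D γ *ᵥ (U v) := by
    intro t
    induction t with
    | zero =>
      intro _ γ v hv
      have hv0 : v = 0 := by
        funext i; exact hv i (Nat.zero_le _)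
      simp [hv0]
    | succ t ih =>
      intro ht γ v hv
      rw [hdecomp t] at hv
      obtain ⟨a, ha, c, hc, rfl⟩ := Submodule.mem_sup.mp hv
      have htT : t ≤ T := by omega
      have hc' : M γ *ᵥ c ∈ C t ⊓ Stmt10Aux.Ssub (K := K) b (t+1) := hVinv t γ c hc
      have step : U (M γ *ᵥ c) = D γ *ᵥ (U c) := by
        rw [hA t htT _ hc', hA t htT c hc]
        exact Stmt10Aux.Pmap_mulVec (hρ γ) hc.2
      rw [Matrix.mulVec_add, map_add, map_add, Matrix.mulVec_add,
        ih (by omega) γ a ha, step]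
  -- unipotence along the filtration
  have hQ : ∀ t : ℕ, t ≤ T → ∀ v ∈ Stmt10Aux.Ssub (K := K) b (t+1),
      U v - v ∈ Stmt10Aux.Ssub (K := K) b t := by
    intro t
    induction t with
    | zero =>
      intro _ v hv
      rw [hdecomp 0] at hv
      obtain ⟨a, ha, c, hc, rfl⟩ := Submodule.mem_sup.mp hv
      have ha0 : a = 0 := by funext i; exact ha i (Nat.zero_le _)
      subst ha0
      rw [zero_add, hA 0 (Nat.zero_le _) c hc]
      exact Stmt10Aux.Pmap_sub_self_mem hc.2
    | succ t ih =>
      intro ht v hv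
      rw [hdecomp (t+1)] at hv
      obtain ⟨a, ha, c, hc, rfl⟩ := Submodule.mem_sup.mp hv
      have h1 : U a - a ∈ Stmt10Aux.Ssub (K := K) b (t+1) :=
        Stmt10Aux.Ssub_mono (Nat.le_succ t) (ih (by omega) a ha)
      have h2 : U c - c ∈ Stmt10Aux.Ssub (K := K) b (t+1) := by
        rw [hA (t+1) ht c hc]
        exact Stmt10Aux.Pmap_sub_self_mem hc.2
      have hsplit : U (a + c) - (a + c) = (U a - a) + (U c - c) := by
        rw [map_add]; abel
      rw [hsplit]
      exact add_mem h1 h2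
  -- the matrix of U
  set Umat : Matrix (Fin n) (Fin n) K := LinearMap.toMatrix' U with hUmat
  set N : Matrix (Fin n) (Fin n) K := Umat - 1 with hN
  have hstrict : ∀ i j, ¬ b i < b j → N i j = 0 := by
    intro i j hij
    have hej : (fun j' => if j' = j then (1:K) else 0)
        ∈ Stmt10Aux.Ssub (K := K) b (b j + 1) := by
      intro i' hi'
      have hne : i' ≠ j := by rintro rfl; omega
      simp only [if_neg hne]
    have h0 := hQ (b j) (hbT j) _ hej i (by omega)
    rw [Pi.sub_apply, sub_eq_zero] at h0
    rw [hN, Matrix.sub_apply, hUmat, LinearMap.toMatrix'_apply, Matrix.one_apply,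
      sub_eq_zero]
    have hs : (Pi.single j (1:K) : Fin n → K) = fun j' => if j' = j then (1:K) else 0 := by
      ext j'; simp [Pi.single_apply]
    rw [hs]
    exact h0
  have hUmat_eq : Umat = 1 + N := by rw [hN]; abel
  have hUnit : IsUnit Umat := by
    rw [hUmat_eq]; exact Stmt10Aux.isUnit_one_add hstrict
  refine ⟨hUnit.unit, ⟨N, hstrict, by rw [IsUnit.unit_spec]; exact hUmat_eq⟩, ?_⟩
  intro γ i j
  -- matrix-level intertwining
  have hcomp : U ∘ₗ Matrix.mulVecLin (M γ) = Matrix.mulVecLin (D γ) ∘ₗ U := by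
    apply LinearMap.ext
    intro v
    simp only [LinearMap.comp_apply, Matrix.mulVecLin_apply]
    exact hI (T+1) le_rfl γ v (hTop v)
  have e1 : LinearMap.toMatrix' (Matrix.mulVecLin (M γ)) = M γ :=
    LinearMap.toMatrix'_toLin' _
  have e2 : LinearMap.toMatrix' (Matrix.mulVecLin (D γ)) = D γ :=
    LinearMap.toMatrix'_toLin' _
  have hmat : Umat * M γ = D γ * Umat := by
    have h := congrArg LinearMap.toMatrix' hcomp
    rwa [LinearMap.toMatrix'_comp, LinearMap.toMatrix'_comp, e1, e2, ← hUmat] at h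
  have hfinal : (hUnit.unit : Matrix (Fin n) (Fin n) K) * M γ
      * ((hUnit.unit⁻¹ : Matrix.GeneralLinearGroup (Fin n) K) : Matrix (Fin n) (Fin n) K)
      = D γ := by
    have hx := hUnit.unit.mul_inv
    rw [hUnit.unit_spec] at hx
    rw [IsUnit.unit_spec, hmat, mul_assoc, hx, mul_one]
  rw [hfinal]
  rfl
end

section
/- Let K be a normed field, n : ℕ, b : Fin n → ℕ. Let (d_k) be a sequence of maps Fin n → Kˣ with d_k i = d_k j whenever b i = b j, and ‖d_k i / d_k j‖ → ∞ whenever b i < b j; let a_k = diagonal(d_k). Suppose (g_k) is a sequence in M_n(K) with g_k → g entrywise and a_k · g_k · a_k⁻¹ → g' entrywise. Then: (1) g is block lower triangular, i.e. g i j = 0 whenever b i < b j; (2) g' is block upper triangular, i.e. g' i j = 0 whenever b j < b i; (3) g and g' have the same block diagonal part, i.e. g i j = g' i j whenever b i = b j. -/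
open Filter Topology

/-- Let `(d_k)` be invertible diagonal data, constant on blocks, with
`‖d_k i / d_k j‖ → ∞` whenever `b i < b j`, and `a_k = diagonal (d_k)`. If `g_k → g` and
`a_k * g_k * a_k⁻¹ → g'` entrywise, then `g` is block lower triangular, `g'` is block upper
triangular, and `g` and `g'` have the same block diagonal part. -/
theorem stmt11 {K : Type*} [NormedField K] {n : ℕ} (b : Fin n → ℕ)
    (d : ℕ → Fin n → Kˣ)
    (heq : ∀ k : ℕ, ∀ i j, b i = b j → d k i = d k j)
    (hinf : ∀ i j, b i < b j →
      Tendsto (fun k : ℕ => ‖(d k i : K) / (d k j : K)‖) atTop atTop)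
    (gseq : ℕ → Matrix (Fin n) (Fin n) K) (g g' : Matrix (Fin n) (Fin n) K)
    (hg : Tendsto gseq atTop (nhds g))
    (hg' : Tendsto
      (fun k : ℕ =>
        (Matrix.diagonal fun i => (d k i : K)) * gseq k *
          Matrix.diagonal (fun i => ((d k i : K))⁻¹))
      atTop (nhds g')) :
    (∀ i j, b i < b j → g i j = 0) ∧
    (∀ i j, b j < b i → g' i j = 0) ∧
    (∀ i j, b i = b j → g i j = g' i j) := by
  -- entrywise limits
  have hge : ∀ i j, Tendsto (fun k => gseq k i j) atTop (𝓝 (g i j)) := by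
    intro i j
    exact ((tendsto_pi_nhds.1 ((tendsto_pi_nhds.1 hg) i)) j)
  have hce : ∀ i j, Tendsto (fun k => (d k i : K) * gseq k i j * ((d k j : K))⁻¹)
      atTop (𝓝 (g' i j)) := by
    intro i j
    have := ((tendsto_pi_nhds.1 ((tendsto_pi_nhds.1 hg') i)) j)
    simpa only [Matrix.diagonal_mul, Matrix.mul_diagonal] using this
  -- norm of ratio tends to 0 when b i < b j (for the reversed ratio)
  have hsmall : ∀ i j : Fin n, b i < b j →
      Tendsto (fun k => ‖(d k j : K) / (d k i : K)‖) atTop (𝓝 0) := by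
    intro i j hij
    have h := tendsto_inv_atTop_zero.comp (hinf i j hij)
    refine h.congr fun k => ?_
    simp only [Function.comp_apply]
    rw [← norm_inv, inv_div]
  refine ⟨?_, ?_, ?_⟩
  · -- g lower triangular
    intro i j hij
    -- gseq k i j = (d k i * gseq k i j * (d k j)⁻¹) * (d k j / d k i)
    have hzero : Tendsto (fun k => gseq k i j) atTop (𝓝 0) := by
      rw [tendsto_zero_iff_norm_tendsto_zero]
      have hnorm : Tendsto (fun k => ‖(d k i : K) * gseq k i j * ((d k j : K))⁻¹‖ *
          ‖(d k j : K) / (d k i : K)‖) atTop (𝓝 (‖g' i j‖ * 0)) :=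
        ((hce i j).norm).mul (hsmall i j hij)
      rw [mul_zero] at hnorm
      refine hnorm.congr fun k => ?_
      rw [← norm_mul]
      congr 1
      have hi : (d k i : K) ≠ 0 := (d k i).ne_zero
      have hj : (d k j : K) ≠ 0 := (d k j).ne_zero
      field_simp
    exact tendsto_nhds_unique (hge i j) hzero
  · -- g' upper triangular
    intro i j hij
    have hzero : Tendsto (fun k => (d k i : K) * gseq k i j * ((d k j : K))⁻¹)
        atTop (𝓝 0) := by
      rw [tendsto_zero_iff_norm_tendsto_zero]
      have hnorm : Tendsto (fun k => ‖gseq k i j‖ * ‖(d k i : K) / (d k j : K)‖)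
          atTop (𝓝 (‖g i j‖ * 0)) := ((hge i j).norm).mul (hsmall j i hij)
      rw [mul_zero] at hnorm
      refine hnorm.congr fun k => ?_
      rw [← norm_mul]
      congr 1
      rw [div_eq_mul_inv]
      ring
    exact tendsto_nhds_unique (hce i j) hzero
  · -- same block diagonal
    intro i j hij
    have hsame : Tendsto (fun k => gseq k i j) atTop (𝓝 (g' i j)) := by
      refine (hce i j).congr fun k => ?_
      rw [heq k i j hij]
      have hj : (d k j : K) ≠ 0 := (d k j).ne_zero
      field_simp
    exact tendsto_nhds_unique (hge i j) hsame
end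

section
/- Let K be a normed field, n : ℕ, b : Fin n → ℕ. Let (d_k) be a sequence of maps Fin n → Kˣ with d_k i = d_k j whenever b i = b j, and ‖d_k i / d_k j‖ → ∞ whenever b i < b j; let a_k = diagonal(d_k). Suppose g_k → g and a_k · g_k · a_k⁻¹ → g' entrywise in M_n(K), and suppose moreover that g is invertible. Then the block diagonal part r = D(g) is invertible, u = g · r⁻¹ is strictly-lower block unipotent, n' = r⁻¹ · g' is strictly-upper block unipotent, and there exists N such that for all k ≥ N there are matrices u_k (strictly-lower block unipotent), r_k (block diagonal: r_k i j = 0 unless b i = b j), and n_k (strictly-upper block unipotent) with g_k = u_k · r_k · (a_k⁻¹ · n_k · a_k), and u_k → u, r_k → r, n_k → n' entrywise. -/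
open Filter Topology

open Filter Topology Matrix

namespace Stmt12Aux

variable {K : Type*} {ι : Type*}

section Algebra
variable [Field K] [Fintype ι] [DecidableEq ι]
set_option linter.unusedSectionVars false

/-- strict lower support -/
def SLo (b : ι → ℕ) (N : Matrix ι ι K) : Prop := ∀ i j, ¬ b j < b i → N i j = 0

/-- block diagonal -/
def BD (b : ι → ℕ) (M : Matrix ι ι K) : Prop := ∀ i j, b i ≠ b j → M i j = 0

/-- lower unipotent -/
def LU (b : ι → ℕ) (M : Matrix ι ι K) : Prop :=
  (∀ i, M i i = 1) ∧ ∀ i j, i ≠ j → ¬ b j < b i → M i j = 0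

/-- upper unipotent -/
def UU (b : ι → ℕ) (M : Matrix ι ι K) : Prop :=
  (∀ i, M i i = 1) ∧ ∀ i j, i ≠ j → ¬ b i < b j → M i j = 0

variable {b : ι → ℕ}

lemma LU_iff {M : Matrix ι ι K} :
    LU b M ↔ ∃ N : Matrix ι ι K, (∀ i j, ¬ b j < b i → N i j = 0) ∧ M = 1 + N := by
  constructor
  · rintro ⟨h1, h2⟩
    refine ⟨M - 1, fun i j hij => ?_, by abel⟩
    rcases eq_or_ne i j with rfl | hne
    · simp [h1 i]
    · simp [h2 i j hne hij, Matrix.one_apply_ne hne]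
  · rintro ⟨N, hN, rfl⟩
    constructor
    · intro i
      simp [Matrix.one_apply, hN i i (lt_irrefl _)]
    · intro i j hne hij
      simp [Matrix.one_apply_ne hne, hN i j hij]

lemma UU_iff {M : Matrix ι ι K} :
    UU b M ↔ ∃ N : Matrix ι ι K, (∀ i j, ¬ b i < b j → N i j = 0) ∧ M = 1 + N := by
  constructor
  · rintro ⟨h1, h2⟩
    refine ⟨M - 1, fun i j hij => ?_, by abel⟩
    rcases eq_or_ne i j with rfl | hne
    · simp [h1 i]
    · simp [h2 i j hne hij, Matrix.one_apply_ne hne]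
  · rintro ⟨N, hN, rfl⟩
    constructor
    · intro i
      simp [Matrix.one_apply, hN i i (lt_irrefl _)]
    · intro i j hne hij
      simp [Matrix.one_apply_ne hne, hN i j hij]

lemma UU_transpose {M : Matrix ι ι K} (h : UU b M) : LU b Mᵀ :=
  ⟨fun i => h.1 i, fun i j hne hij => h.2 j i (Ne.symm hne) hij⟩

lemma LU_transpose {M : Matrix ι ι K} (h : LU b M) : UU b Mᵀ :=
  ⟨fun i => h.1 i, fun i j hne hij => h.2 j i (Ne.symm hne) hij⟩

lemma SLo.neg {N : Matrix ι ι K} (h : SLo b N) : SLo b (-N) :=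
  fun i j hij => by simp [h i j hij]

lemma SLo.matmul {N N' : Matrix ι ι K} (h : SLo b N) (h' : SLo b N') : SLo b (N * N') := by
  intro i j hij
  rw [Matrix.mul_apply]
  apply Finset.sum_eq_zero
  intro l _
  by_cases hl : b l < b i
  · by_cases hl' : b j < b l
    · exact absurd (hl'.trans hl) hij
    · simp [h' l j hl']
  · simp [h i l hl]

lemma SLo.pow {N : Matrix ι ι K} (h : SLo b N) : ∀ m : ℕ, SLo b (N ^ (m + 1))
  | 0 => by simpa using h
  | m + 1 => by
    rw [pow_succ]
    exact (SLo.pow h m).matmul h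

lemma LU.mul {u v : Matrix ι ι K} (hu : LU b u) (hv : LU b v) : LU b (u * v) := by
  constructor
  · intro i
    rw [Matrix.mul_apply]
    rw [Finset.sum_eq_single i]
    · simp [hu.1, hv.1]
    · intro l _ hl
      by_cases h1 : b l < b i
      · simp [hv.2 l i hl (asymm h1)]
      · simp [hu.2 i l (Ne.symm hl) h1]
    · simp
  · intro i j hne hij
    rw [Matrix.mul_apply]
    apply Finset.sum_eq_zero
    intro l _
    rcases eq_or_ne i l with rfl | hil
    · rcases eq_or_ne i j with rfl | h; · exact absurd rfl hne
      simp [hv.2 i j h hij]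
    · by_cases h1 : b l < b i
      · rcases eq_or_ne l j with rfl | hlj
        · exact absurd h1 hij
        · have : ¬ b j < b l := fun hh => hij (hh.trans h1)
          simp [hv.2 l j hlj this]
      · simp [hu.2 i l hil h1]

lemma UU.mul {u v : Matrix ι ι K} (hu : UU b u) (hv : UU b v) : UU b (u * v) := by
  have := (UU_transpose hv).mul (UU_transpose hu)
  have h2 : (u * v)ᵀ = vᵀ * uᵀ := Matrix.transpose_mul u v
  rw [← h2] at this
  exact ⟨fun i => this.1 i, fun i j hne hij => this.2 j i (Ne.symm hne) hij⟩

lemma SLo.pow_card {N : Matrix ι ι K} (h : SLo b N) : N ^ (Fintype.card ι) = 0 := by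
  classical
  set c : ι → ℕ := fun i => ((Finset.univ.image b).filter (· < b i)).card with hc
  have hmono : ∀ i j : ι, b j < b i → c j < c i := by
    intro i j hij
    apply Finset.card_lt_card
    rw [Finset.ssubset_iff_of_subset]
    · exact ⟨b j, by simp [Finset.mem_filter, hij, Finset.mem_image], by simp⟩
    · intro v hv
      simp only [Finset.mem_filter] at hv ⊢
      exact ⟨hv.1, hv.2.trans hij⟩
  have hbound : ∀ i : ι, c i < Fintype.card ι := by
    intro i
    calc c i < (Finset.univ.image b).card := by
            apply Finset.card_lt_card
            rw [Finset.ssubset_iff_of_subset (Finset.filter_subset _ _)]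
            exact ⟨b i, by simp [Finset.mem_image], by simp⟩
      _ ≤ Finset.univ.card := Finset.card_image_le
      _ = Fintype.card ι := Finset.card_univ
  have key : ∀ (m : ℕ) (i j : ι), (N ^ m) i j ≠ 0 → m + c j ≤ c i := by
    intro m
    induction m with
    | zero =>
      intro i j hij
      rcases eq_or_ne i j with rfl | hne
      · simp
      · simp [Matrix.one_apply_ne hne] at hij
    | succ m ih =>
      intro i j hij
      rw [pow_succ, Matrix.mul_apply] at hij
      obtain ⟨l, _, hl⟩ := Finset.exists_ne_zero_of_sum_ne_zero hij
      have h1 : (N ^ m) i l ≠ 0 := fun hh => hl (by simp [hh])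
      have h2 : N l j ≠ 0 := fun hh => hl (by simp [hh])
      have h3 : b j < b l := by by_contra hh; exact h2 (h l j hh)
      have := ih i l h1
      have := hmono l j h3
      omega
  ext i j
  by_contra hij
  have h0 : (N ^ Fintype.card ι) i j ≠ 0 := by simpa using hij
  have := key (Fintype.card ι) i j h0
  have := hbound i
  omega

lemma LU.exists_inv {u : Matrix ι ι K} (hu : LU b u) :
    ∃ w : Matrix ι ι K, LU b w ∧ u * w = 1 ∧ w * u = 1 := by
  classical
  obtain ⟨N, hN, rfl⟩ := LU_iff.mp hu
  have hN' : SLo b N := hN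
  set c := Fintype.card ι with hcc
  rcases Nat.eq_zero_or_pos c with hc0 | hcpos
  · haveI : IsEmpty ι := Fintype.card_eq_zero_iff.mp hc0
    haveI : Subsingleton (Matrix ι ι K) :=
      ⟨fun M M' => by ext i; exact isEmptyElim i⟩
    exact ⟨1, ⟨fun i => isEmptyElim i, fun i j => isEmptyElim i⟩,
      Subsingleton.elim _ _, Subsingleton.elim _ _⟩
  · set w : Matrix ι ι K := ∑ k ∈ Finset.range c, (-N) ^ k with hw
    have hNc : (-N) ^ c = 0 := by
      rw [neg_pow, hN'.pow_card, mul_zero]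
    have h1 : w * ((-N) - 1) = -1 := by
      rw [hw, geom_sum_mul, hNc, zero_sub]
    have h2 : ((-N) - 1) * w = -1 := by
      rw [hw, mul_geom_sum, hNc, zero_sub]
    have hsub : (-N) - 1 = -(1 + N) := by abel
    rw [hsub] at h1 h2
    have hwu : w * (1 + N) = 1 := neg_injective (by rw [← mul_neg, h1])
    have huw : (1 + N) * w = 1 := neg_injective (by rw [← neg_mul, h2])
    refine ⟨w, ?_, huw, hwu⟩
    have hrange : Finset.range c = insert 0 (Finset.Ico 1 c) := by
      ext k; simp [Finset.mem_range, Finset.mem_Ico]; omega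
    have hsplit : w = 1 + ∑ k ∈ Finset.Ico 1 c, (-N) ^ k := by
      rw [hw, hrange, Finset.sum_insert (by simp)]
      simp
    have hT : SLo b (∑ k ∈ Finset.Ico 1 c, ((-N) ^ k : Matrix ι ι K)) := by
      intro i j hij
      rw [Matrix.sum_apply]
      apply Finset.sum_eq_zero
      intro k hk
      rw [Finset.mem_Ico] at hk
      obtain ⟨m, rfl⟩ := Nat.exists_eq_add_of_le hk.1
      rw [add_comm]
      exact hN'.neg.pow m i j hij
    rw [hsplit]
    exact LU_iff.mpr ⟨_, hT, rfl⟩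

lemma UU.exists_inv {u : Matrix ι ι K} (hu : UU b u) :
    ∃ w : Matrix ι ι K, UU b w ∧ u * w = 1 ∧ w * u = 1 := by
  obtain ⟨w, hw, h1, h2⟩ := (UU_transpose hu).exists_inv
  refine ⟨wᵀ, ?_, ?_, ?_⟩
  · have := LU_transpose hw
    simpa using this
  · have := congrArg Matrix.transpose h2
    simpa [Matrix.transpose_mul] using this
  · have := congrArg Matrix.transpose h1
    simpa [Matrix.transpose_mul] using this

end Algebra

section Unique
variable [Field K] [Fintype ι] [DecidableEq ι] {b : ι → ℕ}
set_option linter.unusedSectionVars false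

lemma factor_unique {u₁ r₁ v₁ u₂ r₂ v₂ : Matrix ι ι K}
    (hu₁ : LU b u₁) (hr₁ : BD b r₁) (hr₁u : IsUnit r₁) (hv₁ : UU b v₁)
    (hu₂ : LU b u₂) (hr₂ : BD b r₂) (hr₂u : IsUnit r₂) (hv₂ : UU b v₂)
    (h : u₁ * r₁ * v₁ = u₂ * r₂ * v₂) : u₁ = u₂ ∧ r₁ = r₂ ∧ v₁ = v₂ := by
  obtain ⟨w₂, hw₂, hw₂r, hw₂l⟩ := hu₂.exists_inv
  obtain ⟨y₁, hy₁, hy₁r, hy₁l⟩ := hv₁.exists_inv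
  have hW : LU b (w₂ * u₁) := hw₂.mul hu₁
  have hY : UU b (v₂ * y₁) := hv₂.mul hy₁
  have hmain : (w₂ * u₁) * r₁ = r₂ * (v₂ * y₁) := by
    have h0 : w₂ * (u₁ * r₁ * v₁) * y₁ = w₂ * (u₂ * r₂ * v₂) * y₁ := by rw [h]
    calc (w₂ * u₁) * r₁ = (w₂ * u₁) * r₁ * (v₁ * y₁) := by rw [hy₁r, mul_one]
      _ = w₂ * (u₁ * r₁ * v₁) * y₁ := by simp only [Matrix.mul_assoc]
      _ = w₂ * (u₂ * r₂ * v₂) * y₁ := h0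
      _ = (w₂ * u₂) * r₂ * (v₂ * y₁) := by simp only [Matrix.mul_assoc]
      _ = r₂ * (v₂ * y₁) := by rw [hw₂l, Matrix.one_mul]
  have hx1 : ∀ i j, ¬ b j < b i → ((w₂ * u₁) * r₁) i j = r₁ i j := by
    intro i j hij
    rw [Matrix.mul_apply, Finset.sum_eq_single i]
    · rw [hW.1 i, one_mul]
    · intro l _ hl
      by_cases h1 : b l < b i
      · have : b l ≠ b j := fun hh => hij (hh ▸ h1)
        rw [hr₁ l j this, mul_zero]
      · rw [hW.2 i l (Ne.symm hl) h1, zero_mul]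
    · simp
  have hx2 : ∀ i j, ¬ b i < b j → (r₂ * (v₂ * y₁)) i j = r₂ i j := by
    intro i j hij
    rw [Matrix.mul_apply, Finset.sum_eq_single j]
    · rw [hY.1 j, mul_one]
    · intro l _ hl
      by_cases h1 : b l < b j
      · have : b i ≠ b l := fun hh => hij (hh ▸ h1)
        rw [hr₂ i l this, zero_mul]
      · rw [hY.2 l j hl h1, mul_zero]
    · simp
  have hreq : r₁ = r₂ := by
    ext i j
    rcases lt_trichotomy (b i) (b j) with h1 | h1 | h1
    · rw [hr₁ i j (ne_of_lt h1), hr₂ i j (ne_of_lt h1)]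
    · rw [← hx1 i j (by omega), hmain, hx2 i j (by omega)]
    · rw [hr₁ i j (ne_of_gt h1), hr₂ i j (ne_of_gt h1)]
  have hWr : (w₂ * u₁) * r₁ = r₁ := by
    ext i j
    by_cases h1 : b j < b i
    · rw [hmain, hx2 i j (asymm h1), ← hreq, hr₁ i j (ne_of_gt h1)]
    · exact hx1 i j h1
  have hinv1 : r₁ * r₁⁻¹ = 1 :=
    Matrix.mul_nonsing_inv r₁ ((Matrix.isUnit_iff_isUnit_det r₁).mp hr₁u)
  have hW1 : w₂ * u₁ = 1 := by
    calc w₂ * u₁ = (w₂ * u₁) * (r₁ * r₁⁻¹) := by rw [hinv1, Matrix.mul_one]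
      _ = ((w₂ * u₁) * r₁) * r₁⁻¹ := by simp only [Matrix.mul_assoc]
      _ = r₁ * r₁⁻¹ := by rw [hWr]
      _ = 1 := hinv1
  have hu : u₁ = u₂ := by
    calc u₁ = (u₂ * w₂) * u₁ := by rw [hw₂r, Matrix.one_mul]
      _ = u₂ * (w₂ * u₁) := by rw [Matrix.mul_assoc]
      _ = u₂ := by rw [hW1, Matrix.mul_one]
  have hY1 : v₂ * y₁ = 1 := by
    have hr2Y : r₂ * (v₂ * y₁) = r₂ := by
      rw [← hmain, hWr, hreq]
    have hinv2 : r₂⁻¹ * r₂ = 1 :=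
      Matrix.nonsing_inv_mul r₂ ((Matrix.isUnit_iff_isUnit_det r₂).mp hr₂u)
    calc v₂ * y₁ = (r₂⁻¹ * r₂) * (v₂ * y₁) := by rw [hinv2, Matrix.one_mul]
      _ = r₂⁻¹ * (r₂ * (v₂ * y₁)) := by rw [Matrix.mul_assoc]
      _ = r₂⁻¹ * r₂ := by rw [hr2Y]
      _ = 1 := hinv2
  have hv : v₁ = v₂ := by
    calc v₁ = (v₂ * y₁) * v₁ := by rw [hY1, Matrix.one_mul]
      _ = v₂ * (y₁ * v₁) := by rw [Matrix.mul_assoc]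
      _ = v₂ := by rw [hy₁l, Matrix.mul_one]
  exact ⟨hu, hreq, hv⟩

end Unique

section Topo
variable [NormedField K]

lemma tendsto_mat_iff {l m : Type*} {f : ℕ → Matrix l m K} {M : Matrix l m K} :
    Tendsto f atTop (𝓝 M) ↔ ∀ i j, Tendsto (fun k => f k i j) atTop (𝓝 (M i j)) := by
  exact tendsto_pi_nhds.trans (forall_congr' fun i => tendsto_pi_nhds)

lemma tendsto_matmul {l m o : Type*} [Fintype m] {f : ℕ → Matrix l m K} {g : ℕ → Matrix m o K}
    {M : Matrix l m K} {N : Matrix m o K}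
    (hf : Tendsto f atTop (𝓝 M)) (hg : Tendsto g atTop (𝓝 N)) :
    Tendsto (fun k => f k * g k) atTop (𝓝 (M * N)) := by
  rw [tendsto_mat_iff] at hf hg ⊢
  intro i j
  simp only [Matrix.mul_apply]
  exact tendsto_finset_sum _ fun l _ => (hf i l).mul (hg l j)

lemma tendsto_matsub {l m : Type*} {f g : ℕ → Matrix l m K} {M N : Matrix l m K}
    (hf : Tendsto f atTop (𝓝 M)) (hg : Tendsto g atTop (𝓝 N)) :
    Tendsto (fun k => f k - g k) atTop (𝓝 (M - N)) := by
  rw [tendsto_mat_iff] at hf hg ⊢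
  intro i j
  exact (hf i j).sub (hg i j)

lemma tendsto_matdet {ι' : Type*} [Fintype ι'] [DecidableEq ι'] {f : ℕ → Matrix ι' ι' K}
    {M : Matrix ι' ι' K} (h : Tendsto f atTop (𝓝 M)) :
    Tendsto (fun k => (f k).det) atTop (𝓝 M.det) :=
  (Continuous.matrix_det continuous_id).continuousAt.tendsto.comp h

lemma tendsto_matinv {ι' : Type*} [Fintype ι'] [DecidableEq ι'] {f : ℕ → Matrix ι' ι' K}
    {M : Matrix ι' ι' K} (h : Tendsto f atTop (𝓝 M)) (hM : IsUnit M.det) :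
    Tendsto (fun k => (f k)⁻¹) atTop (𝓝 M⁻¹) := by
  have hc : ContinuousAt Ring.inverse M.det := by
    rw [Ring.inverse_eq_inv']
    exact continuousAt_inv₀ (by simpa [isUnit_iff_ne_zero] using hM)
  exact (continuousAt_matrix_inv M hc).tendsto.comp h

lemma tendsto_toBlock {ι' : Type*} {f : ℕ → Matrix ι' ι' K} {M : Matrix ι' ι' K}
    (h : Tendsto f atTop (𝓝 M)) (p q : ι' → Prop) [DecidablePred p] [DecidablePred q] :
    Tendsto (fun k => (f k).toBlock p q) atTop (𝓝 (M.toBlock p q)) := by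
  rw [tendsto_mat_iff] at h ⊢
  intro i j
  exact h i j

lemma tendsto_submatrix {l m l' m' : Type*} {f : ℕ → Matrix l m K} {M : Matrix l m K}
    (h : Tendsto f atTop (𝓝 M)) (e₁ : l' → l) (e₂ : m' → m) :
    Tendsto (fun k => (f k).submatrix e₁ e₂) atTop (𝓝 (M.submatrix e₁ e₂)) := by
  rw [tendsto_mat_iff] at h ⊢
  intro i j
  exact h (e₁ i) (e₂ j)

lemma tendsto_fromBlocks {l m l' m' : Type*}
    {fA : ℕ → Matrix l m K} {fB : ℕ → Matrix l m' K}
    {fC : ℕ → Matrix l' m K} {fD : ℕ → Matrix l' m' K}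
    {A : Matrix l m K} {B : Matrix l m' K} {C : Matrix l' m K} {D : Matrix l' m' K}
    (hA : Tendsto fA atTop (𝓝 A)) (hB : Tendsto fB atTop (𝓝 B))
    (hC : Tendsto fC atTop (𝓝 C)) (hD : Tendsto fD atTop (𝓝 D)) :
    Tendsto (fun k => Matrix.fromBlocks (fA k) (fB k) (fC k) (fD k)) atTop
      (𝓝 (Matrix.fromBlocks A B C D)) := by
  rw [tendsto_mat_iff] at hA hB hC hD ⊢
  rintro (i | i) (j | j)
  · exact hA i j
  · exact hB i j
  · exact hC i j
  · exact hD i j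

end Topo
section Blocks
variable [Field K]
set_option linter.unusedSectionVars false

lemma submatrix_equiv_cancel {ι ι' : Type*} (e : ι' ≃ ι) (X : Matrix ι ι K) :
    (X.submatrix e e).submatrix e.symm e.symm = X := by
  simp [Matrix.submatrix_submatrix, Equiv.self_comp_symm]

lemma submatrix_sumCompl {ι : Type*} (p : ι → Prop) [DecidablePred p] (X : Matrix ι ι K) :
    X.submatrix (Equiv.sumCompl p) (Equiv.sumCompl p) =
      Matrix.fromBlocks (X.toBlock p p) (X.toBlock p fun i => ¬ p i)
        (X.toBlock (fun i => ¬ p i) p) (X.toBlock (fun i => ¬ p i) fun i => ¬ p i) := by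
  ext i j
  cases i <;> cases j <;> rfl

lemma LU_submatrix_equiv {ι ι' : Type*} (e : ι' ≃ ι) {b : ι → ℕ} {M : Matrix ι' ι' K}
    (h : LU (fun x => b (e x)) M) : LU b (M.submatrix e.symm e.symm) := by
  constructor
  · intro i
    have := h.1 (e.symm i)
    simpa using this
  · intro i j hne hij
    have hne' : e.symm i ≠ e.symm j := fun hh => hne (by simpa using congrArg e hh)
    apply h.2 _ _ hne'
    simpa using hij

lemma UU_submatrix_equiv {ι ι' : Type*} (e : ι' ≃ ι) {b : ι → ℕ} {M : Matrix ι' ι' K}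
    (h : UU (fun x => b (e x)) M) : UU b (M.submatrix e.symm e.symm) := by
  constructor
  · intro i
    have := h.1 (e.symm i)
    simpa using this
  · intro i j hne hij
    have hne' : e.symm i ≠ e.symm j := fun hh => hne (by simpa using congrArg e hh)
    apply h.2 _ _ hne'
    simpa using hij

lemma BD_submatrix_equiv {ι ι' : Type*} (e : ι' ≃ ι) {b : ι → ℕ} {M : Matrix ι' ι' K}
    (h : BD (fun x => b (e x)) M) : BD b (M.submatrix e.symm e.symm) := by
  intro i j hne
  apply h _ _
  simpa using hne

section SumBlocks
variable {A B : Type*} [Fintype A] [Fintype B] [DecidableEq A] [DecidableEq B]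
variable {bA : A → ℕ} {bB : B → ℕ}

lemma LU_fromBlocks_L (C : Matrix B A K) (hlt : ∀ (a : A) (c : B), bA a < bB c) :
    LU (Sum.elim bA bB) (Matrix.fromBlocks 1 0 C (1 : Matrix B B K)) := by
  constructor
  · rintro (a | c) <;> simp
  · rintro (a | c) (a' | c') hne hij
    · exact Matrix.one_apply_ne (fun hh => hne (by rw [hh]))
    · rfl
    · exact absurd (hlt a' c) hij
    · exact Matrix.one_apply_ne (fun hh => hne (by rw [hh]))

lemma UU_fromBlocks_U (C : Matrix A B K) (hlt : ∀ (a : A) (c : B), bA a < bB c) :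
    UU (Sum.elim bA bB) (Matrix.fromBlocks 1 C 0 (1 : Matrix B B K)) := by
  constructor
  · rintro (a | c) <;> simp
  · rintro (a | c) (a' | c') hne hij
    · exact Matrix.one_apply_ne (fun hh => hne (by rw [hh]))
    · exact absurd (hlt a c') hij
    · rfl
    · exact Matrix.one_apply_ne (fun hh => hne (by rw [hh]))

lemma LU_fromBlocks_D {X : Matrix B B K} (hX : LU bB X) :
    LU (Sum.elim bA bB) (Matrix.fromBlocks 1 0 0 X) := by
  constructor
  · rintro (a | c)
    · simp
    · simpa using hX.1 c
  · rintro (a | c) (a' | c') hne hij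
    · exact Matrix.one_apply_ne (fun hh => hne (by rw [hh]))
    · rfl
    · rfl
    · exact hX.2 c c' (fun hh => hne (by rw [hh])) hij

lemma UU_fromBlocks_D {X : Matrix B B K} (hX : UU bB X) :
    UU (Sum.elim bA bB) (Matrix.fromBlocks 1 0 0 X) := by
  constructor
  · rintro (a | c)
    · simp
    · simpa using hX.1 c
  · rintro (a | c) (a' | c') hne hij
    · exact Matrix.one_apply_ne (fun hh => hne (by rw [hh]))
    · rfl
    · rfl
    · exact hX.2 c c' (fun hh => hne (by rw [hh])) hij

lemma BD_fromBlocks {H : Matrix A A K} {X : Matrix B B K}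
    (hconst : ∀ a a' : A, bA a = bA a') (hne : ∀ (a : A) (c : B), bA a ≠ bB c)
    (hX : BD bB X) : BD (Sum.elim bA bB) (Matrix.fromBlocks H 0 0 X) := by
  rintro (a | c) (a' | c') hd
  · exact absurd (hconst a a') hd
  · rfl
  · rfl
  · exact hX c c' hd

lemma tendsto_tb11 [NormedField K'] {f : ℕ → Matrix (A ⊕ B) (A ⊕ B) K'}
    {M : Matrix (A ⊕ B) (A ⊕ B) K'} (h : Tendsto f atTop (𝓝 M)) :
    Tendsto (fun k => (f k).toBlocks₁₁) atTop (𝓝 M.toBlocks₁₁) := by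
  rw [tendsto_mat_iff] at h ⊢
  intro i j
  exact h _ _

lemma tendsto_tb12 [NormedField K'] {f : ℕ → Matrix (A ⊕ B) (A ⊕ B) K'}
    {M : Matrix (A ⊕ B) (A ⊕ B) K'} (h : Tendsto f atTop (𝓝 M)) :
    Tendsto (fun k => (f k).toBlocks₁₂) atTop (𝓝 M.toBlocks₁₂) := by
  rw [tendsto_mat_iff] at h ⊢
  intro i j
  exact h _ _

lemma tendsto_tb21 [NormedField K'] {f : ℕ → Matrix (A ⊕ B) (A ⊕ B) K'}
    {M : Matrix (A ⊕ B) (A ⊕ B) K'} (h : Tendsto f atTop (𝓝 M)) :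
    Tendsto (fun k => (f k).toBlocks₂₁) atTop (𝓝 M.toBlocks₂₁) := by
  rw [tendsto_mat_iff] at h ⊢
  intro i j
  exact h _ _

lemma tendsto_tb22 [NormedField K'] {f : ℕ → Matrix (A ⊕ B) (A ⊕ B) K'}
    {M : Matrix (A ⊕ B) (A ⊕ B) K'} (h : Tendsto f atTop (𝓝 M)) :
    Tendsto (fun k => (f k).toBlocks₂₂) atTop (𝓝 M.toBlocks₂₂) := by
  rw [tendsto_mat_iff] at h ⊢
  intro i j
  exact h _ _

end SumBlocks

end Blocks
section Key
variable [NormedField K]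
set_option linter.unusedSectionVars false
set_option maxHeartbeats 1000000

theorem key (m : ℕ) :
    ∀ (ι : Type) [Fintype ι] [DecidableEq ι] (b : ι → ℕ),
      (Finset.image b Finset.univ).card ≤ m →
      ∀ (U R V M : Matrix ι ι K) (hseq : ℕ → Matrix ι ι K),
        LU b U → BD b R → IsUnit R → UU b V → M = U * R * V →
        Tendsto hseq atTop (𝓝 M) →
        ∃ (useq rseq vseq : ℕ → Matrix ι ι K) (N₀ : ℕ),
          (∀ k, N₀ ≤ k → LU b (useq k) ∧ BD b (rseq k) ∧ IsUnit (rseq k) ∧ UU b (vseq k) ∧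
            hseq k = useq k * rseq k * vseq k) ∧
          Tendsto useq atTop (𝓝 U) ∧ Tendsto rseq atTop (𝓝 R) ∧ Tendsto vseq atTop (𝓝 V) := by
  induction m with
  | zero =>
    intro ι fι dι b hcard U R V M hseq hU hR hRu hV hM hlim
    have hemp : IsEmpty ι := by
      rw [Nat.le_zero, Finset.card_eq_zero, Finset.image_eq_empty] at hcard
      exact Finset.univ_eq_empty_iff.mp hcard
    haveI := hemp
    haveI : Subsingleton (Matrix ι ι K) := ⟨fun X Y => by ext i; exact isEmptyElim i⟩
    refine ⟨fun _ => U, hseq, fun _ => V, 0, fun k _ => ⟨hU, fun i j => isEmptyElim i, ?_, hV,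
      Subsingleton.elim _ _⟩, tendsto_const_nhds, ?_, tendsto_const_nhds⟩
    · rw [Matrix.isUnit_iff_isUnit_det, Matrix.det_isEmpty]
      exact isUnit_one
    · have : M = R := Subsingleton.elim _ _
      rw [← this]
      exact hlim
  | succ m IH =>
    intro ι fι dι b hcard U R V M hseq hU hR hRu hV hM hlim
    rcases le_or_gt (Finset.image b Finset.univ).card m with hle | hgt
    · exact IH ι b hle U R V M hseq hU hR hRu hV hM hlim
    have himg : (Finset.image b Finset.univ).Nonempty := Finset.card_pos.mp (by omega)
    set t₀ := (Finset.image b Finset.univ).min' himg with ht₀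
    have ht₀mem : t₀ ∈ Finset.image b Finset.univ := Finset.min'_mem _ _
    have ht₀le : ∀ i, t₀ ≤ b i := fun i =>
      Finset.min'_le _ _ (Finset.mem_image_of_mem b (Finset.mem_univ i))
    set e : {i // b i = t₀} ⊕ {i // ¬ b i = t₀} ≃ ι := Equiv.sumCompl (fun i => b i = t₀)
      with he
    set bB : {i // ¬ b i = t₀} → ℕ := fun c => b c.1 with hbB
    set bb : {i // b i = t₀} ⊕ {i // ¬ b i = t₀} → ℕ :=
      Sum.elim (fun a => b a.1) bB with hbb
    have hbe : ∀ x, b (e x) = bb x := by rintro (a | c) <;> simp [he, hbb, hbB]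
    have hlt : ∀ (a : {i // b i = t₀}) (c : {i // ¬ b i = t₀}), b a.1 < b c.1 := by
      intro a c
      have := ht₀le c.1
      have h1 := a.2
      have h2 := c.2
      omega
    have hconst : ∀ a a' : {i // b i = t₀}, b a.1 = b a'.1 := by
      intro a a'; rw [a.2, a'.2]
    have hneAB : ∀ (a : {i // b i = t₀}) (c : {i // ¬ b i = t₀}), b a.1 ≠ bB c :=
      fun a c => ne_of_lt (hlt a c)
    -- cardinality of image of bB
    have hcardB : (Finset.image bB Finset.univ).card ≤ m := by
      have himgB : Finset.image bB Finset.univ = (Finset.image b Finset.univ).erase t₀ := by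
        ext v
        simp only [Finset.mem_image, Finset.mem_erase, Finset.mem_univ, true_and, hbB]
        constructor
        · rintro ⟨c, rfl⟩
          refine ⟨fun hh => c.2 hh, c.1, rfl⟩
        · rintro ⟨hv, i, rfl⟩
          exact ⟨⟨i, hv⟩, rfl⟩
      rw [himgB, Finset.card_erase_of_mem ht₀mem]
      omega
    -- blocks of U, R, V
    have hU11 : U.toBlock (fun i => b i = t₀) (fun i => b i = t₀) = 1 := by
      ext x y
      rcases eq_or_ne x y with rfl | hxy
      · simp [Matrix.toBlock_apply, hU.1]
      · have hxy' : x.1 ≠ y.1 := fun hh => hxy (Subtype.ext hh)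
        rw [Matrix.toBlock_apply, hU.2 _ _ hxy' (by rw [x.2, y.2]; omega),
          Matrix.one_apply_ne hxy]
    have hU12 : U.toBlock (fun i => b i = t₀) (fun i => ¬ b i = t₀) = 0 := by
      ext x y
      rw [Matrix.toBlock_apply, hU.2 _ _ (fun hh => y.2 (by rw [← hh]; exact x.2)) (by have := hlt x y; omega)]
      rfl
    have hV11 : V.toBlock (fun i => b i = t₀) (fun i => b i = t₀) = 1 := by
      ext x y
      rcases eq_or_ne x y with rfl | hxy
      · simp [Matrix.toBlock_apply, hV.1]
      · have hxy' : x.1 ≠ y.1 := fun hh => hxy (Subtype.ext hh)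
        rw [Matrix.toBlock_apply, hV.2 _ _ hxy' (by rw [x.2, y.2]; omega),
          Matrix.one_apply_ne hxy]
    have hV21 : V.toBlock (fun i => ¬ b i = t₀) (fun i => b i = t₀) = 0 := by
      ext x y
      rw [Matrix.toBlock_apply, hV.2 _ _ (fun hh => x.2 (by rw [hh]; exact y.2)) (by have := hlt y x; omega)]
      rfl
    have hR12 : R.toBlock (fun i => b i = t₀) (fun i => ¬ b i = t₀) = 0 := by
      ext x y
      rw [Matrix.toBlock_apply, hR _ _ (hneAB x y)]
      rfl
    have hR21 : R.toBlock (fun i => ¬ b i = t₀) (fun i => b i = t₀) = 0 := by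
      ext x y
      rw [Matrix.toBlock_apply, hR _ _ (Ne.symm (hneAB y x))]
      rfl
    set U21 := U.toBlock (fun i => ¬ b i = t₀) (fun i => b i = t₀) with hU21
    set U22 := U.toBlock (fun i => ¬ b i = t₀) (fun i => ¬ b i = t₀) with hU22d
    set V12 := V.toBlock (fun i => b i = t₀) (fun i => ¬ b i = t₀) with hV12
    set V22 := V.toBlock (fun i => ¬ b i = t₀) (fun i => ¬ b i = t₀) with hV22d
    set R11 := R.toBlock (fun i => b i = t₀) (fun i => b i = t₀) with hR11d
    set R22 := R.toBlock (fun i => ¬ b i = t₀) (fun i => ¬ b i = t₀) with hR22d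
    have hU22 : LU bB U22 :=
      ⟨fun c => hU.1 c.1, fun c c' hcc h => hU.2 c.1 c'.1 (fun hh => hcc (Subtype.ext hh)) h⟩
    have hV22 : UU bB V22 :=
      ⟨fun c => hV.1 c.1, fun c c' hcc h => hV.2 c.1 c'.1 (fun hh => hcc (Subtype.ext hh)) h⟩
    have hR22 : BD bB R22 := fun c c' h => hR c.1 c'.1 h
    -- transported matrices
    have hUe : U.submatrix e e = Matrix.fromBlocks 1 0 U21 U22 := by
      rw [he, submatrix_sumCompl, hU11, hU12]
    have hRe : R.submatrix e e = Matrix.fromBlocks R11 0 0 R22 := by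
      rw [he, submatrix_sumCompl, hR12, hR21]
    have hVe : V.submatrix e e = Matrix.fromBlocks 1 V12 0 V22 := by
      rw [he, submatrix_sumCompl, hV11, hV21]
    have hMe : M.submatrix e e = U.submatrix e e * R.submatrix e e * V.submatrix e e := by
      rw [hM, ← Matrix.submatrix_mul_equiv (U * R) V _ e _,
        ← Matrix.submatrix_mul_equiv U R _ e _]
    have hMb : M.submatrix e e =
        Matrix.fromBlocks R11 (R11 * V12) (U21 * R11)
          (U21 * R11 * V12 + U22 * R22 * V22) := by
      rw [hMe, hUe, hRe, hVe]
      simp only [Matrix.fromBlocks_multiply, Matrix.one_mul, Matrix.mul_one, Matrix.zero_mul,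
        Matrix.mul_zero, add_zero, zero_add, Matrix.mul_assoc]
    -- invertibility of R11, R22
    have hRdet : IsUnit (R11.det * R22.det) := by
      have h1 : (R.submatrix e e).det = R.det := Matrix.det_submatrix_equiv_self e R
      have h2 : (R.submatrix e e).det = R11.det * R22.det := by
        rw [hRe, Matrix.det_fromBlocks_zero₁₂]
      rw [← h2, h1]
      exact (Matrix.isUnit_iff_isUnit_det R).mp hRu
    have hR11u : IsUnit R11.det := isUnit_of_mul_isUnit_left hRdet
    have hR22u : IsUnit R22.det := isUnit_of_mul_isUnit_right hRdet
    -- the sequence transported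
    set Hk : ℕ → Matrix _ _ K := fun k => (hseq k).submatrix e e with hHk
    have hHlim : Tendsto Hk atTop (𝓝 (M.submatrix e e)) := tendsto_submatrix hlim e e
    set A11 : ℕ → Matrix _ _ K := fun k => (Hk k).toBlocks₁₁ with hA11
    set A12 : ℕ → Matrix _ _ K := fun k => (Hk k).toBlocks₁₂ with hA12
    set A21 : ℕ → Matrix _ _ K := fun k => (Hk k).toBlocks₂₁ with hA21
    set A22 : ℕ → Matrix _ _ K := fun k => (Hk k).toBlocks₂₂ with hA22
    have hMb11 : (M.submatrix e e).toBlocks₁₁ = R11 := by rw [hMb]; rfl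
    have hMb12 : (M.submatrix e e).toBlocks₁₂ = R11 * V12 := by rw [hMb]; rfl
    have hMb21 : (M.submatrix e e).toBlocks₂₁ = U21 * R11 := by rw [hMb]; rfl
    have hMb22 : (M.submatrix e e).toBlocks₂₂ = U21 * R11 * V12 + U22 * R22 * V22 := by
      rw [hMb]; rfl
    have hA11lim : Tendsto A11 atTop (𝓝 R11) := hMb11 ▸ tendsto_tb11 hHlim
    have hA12lim : Tendsto A12 atTop (𝓝 (R11 * V12)) := hMb12 ▸ tendsto_tb12 hHlim
    have hA21lim : Tendsto A21 atTop (𝓝 (U21 * R11)) := hMb21 ▸ tendsto_tb21 hHlim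
    have hA22lim : Tendsto A22 atTop (𝓝 (U21 * R11 * V12 + U22 * R22 * V22)) :=
      hMb22 ▸ tendsto_tb22 hHlim
    -- Schur complements
    set S : ℕ → Matrix _ _ K := fun k => A22 k - A21 k * (A11 k)⁻¹ * A12 k with hS
    have hSlim : Tendsto S atTop (𝓝 (U22 * R22 * V22)) := by
      have h1 : Tendsto (fun k => A21 k * (A11 k)⁻¹ * A12 k) atTop
          (𝓝 (U21 * R11 * R11⁻¹ * (R11 * V12))) :=
        tendsto_matmul (tendsto_matmul hA21lim (tendsto_matinv hA11lim hR11u)) hA12lim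
      have h2 : U21 * R11 * R11⁻¹ * (R11 * V12) = U21 * R11 * V12 := by
        rw [Matrix.mul_nonsing_inv_cancel_right _ _ hR11u, Matrix.mul_assoc]
      rw [h2] at h1
      have h3 := tendsto_matsub hA22lim h1
      simpa using h3
    -- apply induction hypothesis
    obtain ⟨uB, rB, vB, N₁, hblock, huBlim, hrBlim, hvBlim⟩ :=
      IH _ bB hcardB U22 R22 V22 (U22 * R22 * V22) S
        hU22 hR22 ((Matrix.isUnit_iff_isUnit_det R22).mpr hR22u) hV22 rfl hSlim
    -- eventual invertibility of A11
    have hdet11 : Tendsto (fun k => (A11 k).det) atTop (𝓝 R11.det) := tendsto_matdet hA11lim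
    obtain ⟨N₂, hN₂⟩ := eventually_atTop.mp
      (hdet11.eventually_ne (by simpa [isUnit_iff_ne_zero] using hR11u))
    -- define the sequences
    set useq : ℕ → Matrix ι ι K := fun k =>
      ((Matrix.fromBlocks 1 0 (A21 k * (A11 k)⁻¹) 1 *
        Matrix.fromBlocks 1 0 0 (uB k)).submatrix e.symm e.symm) with huseq
    set rseq : ℕ → Matrix ι ι K := fun k =>
      ((Matrix.fromBlocks (A11 k) 0 0 (rB k)).submatrix e.symm e.symm) with hrseq
    set vseq : ℕ → Matrix ι ι K := fun k =>
      ((Matrix.fromBlocks 1 0 0 (vB k) *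
        Matrix.fromBlocks 1 ((A11 k)⁻¹ * A12 k) 0 1).submatrix e.symm e.symm) with hvseq
    refine ⟨useq, rseq, vseq, max N₁ N₂, ?_, ?_, ?_, ?_⟩
    · -- properties for large k
      intro k hk
      obtain ⟨hbLU, hbBD, hbIsU, hbUU, hbfac⟩ := hblock k (le_trans (le_max_left _ _) hk)
      have hk11 : IsUnit (A11 k).det :=
        isUnit_iff_ne_zero.mpr (hN₂ k (le_trans (le_max_right _ _) hk))
      refine ⟨?_, ?_, ?_, ?_, ?_⟩
      · apply LU_submatrix_equiv e
        have hgoal : LU bb (Matrix.fromBlocks 1 0 (A21 k * (A11 k)⁻¹) 1 *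
            Matrix.fromBlocks 1 0 0 (uB k)) :=
          (LU_fromBlocks_L _ hlt).mul (LU_fromBlocks_D hbLU)
        convert hgoal using 2 with x
        exact iff_of_eq (congrArg (fun f => LU f _) (funext hbe))
      · apply BD_submatrix_equiv e
        have hgoal : BD bb (Matrix.fromBlocks (A11 k) 0 0 (rB k)) :=
          BD_fromBlocks hconst hneAB hbBD
        convert hgoal using 2 with x
        exact hbe x
      · rw [Matrix.isUnit_iff_isUnit_det, hrseq]
        rw [Matrix.det_submatrix_equiv_self e.symm, Matrix.det_fromBlocks_zero₁₂]
        exact hk11.mul ((Matrix.isUnit_iff_isUnit_det _).mp hbIsU)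
      · apply UU_submatrix_equiv e
        have hgoal : UU bb (Matrix.fromBlocks 1 0 0 (vB k) *
            Matrix.fromBlocks 1 ((A11 k)⁻¹ * A12 k) 0 1) :=
          (UU_fromBlocks_D hbUU).mul (UU_fromBlocks_U _ hlt)
        convert hgoal using 2 with x
        exact iff_of_eq (congrArg (fun f => UU f _) (funext hbe))
      · -- factorization
        haveI : Invertible (A11 k) := (A11 k).invertibleOfIsUnitDet hk11
        have hfb : Hk k = Matrix.fromBlocks (A11 k) (A12 k) (A21 k) (A22 k) :=
          (Matrix.fromBlocks_toBlocks _).symm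
        have hdecomp : Hk k =
            Matrix.fromBlocks 1 0 (A21 k * (A11 k)⁻¹) 1 *
              Matrix.fromBlocks (A11 k) 0 0 (S k) *
              Matrix.fromBlocks 1 ((A11 k)⁻¹ * A12 k) 0 1 := by
          rw [hfb]
          have := Matrix.fromBlocks_eq_of_invertible₁₁ (A11 k) (A12 k) (A21 k) (A22 k)
          rw [Matrix.invOf_eq_nonsing_inv] at this
          exact this
        have hmid : Matrix.fromBlocks (A11 k) 0 0 (S k) =
            Matrix.fromBlocks 1 0 0 (uB k) * Matrix.fromBlocks (A11 k) 0 0 (rB k) *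
              Matrix.fromBlocks 1 0 0 (vB k) := by
          rw [hbfac]
          simp only [Matrix.fromBlocks_multiply, Matrix.one_mul, Matrix.mul_one,
            Matrix.zero_mul, Matrix.mul_zero, add_zero, zero_add, Matrix.mul_assoc]
        have hfinal : Hk k =
            (Matrix.fromBlocks 1 0 (A21 k * (A11 k)⁻¹) 1 * Matrix.fromBlocks 1 0 0 (uB k)) *
              Matrix.fromBlocks (A11 k) 0 0 (rB k) *
              (Matrix.fromBlocks 1 0 0 (vB k) *
                Matrix.fromBlocks 1 ((A11 k)⁻¹ * A12 k) 0 1) := by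
          rw [hdecomp, hmid]
          simp only [Matrix.mul_assoc]
        have := congrArg (fun X => X.submatrix e.symm e.symm) hfinal
        rw [hHk] at this
        rw [submatrix_equiv_cancel e (hseq k)] at this
        rw [this, huseq, hrseq, hvseq]
        beta_reduce
        have hs1 := Matrix.submatrix_mul_equiv
          (Matrix.fromBlocks 1 0 (A21 k * (A11 k)⁻¹) 1 * Matrix.fromBlocks 1 0 0 (uB k))
          (Matrix.fromBlocks (A11 k) 0 0 (rB k)) e.symm e.symm e.symm
        have hs2 := Matrix.submatrix_mul_equiv
          ((Matrix.fromBlocks 1 0 (A21 k * (A11 k)⁻¹) 1 * Matrix.fromBlocks 1 0 0 (uB k)) *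
            Matrix.fromBlocks (A11 k) 0 0 (rB k))
          (Matrix.fromBlocks 1 0 0 (vB k) * Matrix.fromBlocks 1 ((A11 k)⁻¹ * A12 k) 0 1)
          e.symm e.symm e.symm
        exact ((congrArg (fun X => X * (Matrix.fromBlocks 1 0 0 (vB k) *
          Matrix.fromBlocks 1 ((A11 k)⁻¹ * A12 k) 0 1).submatrix e.symm e.symm) hs1).trans hs2).symm
    · -- tendsto useq
      have h1 : Tendsto (fun k => Matrix.fromBlocks 1 0 (A21 k * (A11 k)⁻¹) 1 *
          Matrix.fromBlocks (1 : Matrix {i // b i = t₀} {i // b i = t₀} K) 0 0 (uB k)) atTop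
          (𝓝 (Matrix.fromBlocks 1 0 (U21 * R11 * R11⁻¹) 1 * Matrix.fromBlocks (1 : Matrix {i // b i = t₀} {i // b i = t₀} K) 0 0 U22)) :=
        tendsto_matmul
          (tendsto_fromBlocks tendsto_const_nhds tendsto_const_nhds
            (tendsto_matmul hA21lim (tendsto_matinv hA11lim hR11u)) tendsto_const_nhds)
          (tendsto_fromBlocks tendsto_const_nhds tendsto_const_nhds tendsto_const_nhds huBlim)
      have h2 : Matrix.fromBlocks 1 0 (U21 * R11 * R11⁻¹) 1 * Matrix.fromBlocks (1 : Matrix {i // b i = t₀} {i // b i = t₀} K) 0 0 U22 =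
          U.submatrix e e := by
        rw [Matrix.mul_nonsing_inv_cancel_right _ _ hR11u, hUe]
        simp only [Matrix.fromBlocks_multiply, Matrix.one_mul, Matrix.mul_one,
          Matrix.zero_mul, Matrix.mul_zero, add_zero, zero_add]
      rw [h2] at h1
      have h3 := tendsto_submatrix h1 e.symm e.symm
      rw [submatrix_equiv_cancel e U] at h3
      exact h3
    · -- tendsto rseq
      have h1 : Tendsto (fun k => Matrix.fromBlocks (A11 k) 0 0 (rB k)) atTop
          (𝓝 (Matrix.fromBlocks R11 0 0 R22)) :=
        tendsto_fromBlocks hA11lim tendsto_const_nhds tendsto_const_nhds hrBlim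
      rw [← hRe] at h1
      have h3 := tendsto_submatrix h1 e.symm e.symm
      rw [submatrix_equiv_cancel e R] at h3
      exact h3
    · -- tendsto vseq
      have h1 : Tendsto (fun k => Matrix.fromBlocks (1 : Matrix {i // b i = t₀} {i // b i = t₀} K) 0 0 (vB k) *
          Matrix.fromBlocks 1 ((A11 k)⁻¹ * A12 k) 0 1) atTop
          (𝓝 (Matrix.fromBlocks (1 : Matrix {i // b i = t₀} {i // b i = t₀} K) 0 0 V22 * Matrix.fromBlocks 1 (R11⁻¹ * (R11 * V12)) 0 1)) :=
        tendsto_matmul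
          (tendsto_fromBlocks tendsto_const_nhds tendsto_const_nhds tendsto_const_nhds hvBlim)
          (tendsto_fromBlocks tendsto_const_nhds
            (tendsto_matmul (tendsto_matinv hA11lim hR11u) hA12lim)
            tendsto_const_nhds tendsto_const_nhds)
      have h2 : Matrix.fromBlocks (1 : Matrix {i // b i = t₀} {i // b i = t₀} K) 0 0 V22 * Matrix.fromBlocks 1 (R11⁻¹ * (R11 * V12)) 0 1 =
          V.submatrix e e := by
        rw [Matrix.nonsing_inv_mul_cancel_left _ _ hR11u, hVe]
        simp only [Matrix.fromBlocks_multiply, Matrix.one_mul, Matrix.mul_one,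
          Matrix.zero_mul, Matrix.mul_zero, add_zero, zero_add]
      rw [h2] at h1
      have h3 := tendsto_submatrix h1 e.symm e.symm
      rw [submatrix_equiv_cancel e V] at h3
      exact h3

end Key
section Exist
variable [Field K]
set_option linter.unusedSectionVars false
set_option maxHeartbeats 1000000

theorem exists_ldu (m : ℕ) :
    ∀ (ι : Type) [Fintype ι] [DecidableEq ι] (b : ι → ℕ),
      (Finset.image b Finset.univ).card ≤ m →
      ∀ M : Matrix ι ι K, (∀ i j, b i < b j → M i j = 0) → IsUnit M →
        IsUnit (Matrix.of fun i j => if b i = b j then M i j else (0 : K)) ∧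
        LU b (M * (Matrix.of fun i j => if b i = b j then M i j else (0 : K))⁻¹) := by
  induction m with
  | zero =>
    intro ι fι dι b hcard M hlow hM
    have hemp : IsEmpty ι := by
      rw [Nat.le_zero, Finset.card_eq_zero, Finset.image_eq_empty] at hcard
      exact Finset.univ_eq_empty_iff.mp hcard
    constructor
    · rw [Matrix.isUnit_iff_isUnit_det, Matrix.det_isEmpty]
      exact isUnit_one
    · exact ⟨fun i => isEmptyElim i, fun i j => isEmptyElim i⟩
  | succ m IH =>
    intro ι fι dι b hcard M hlow hM
    rcases le_or_gt (Finset.image b Finset.univ).card m with hle | hgt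
    · exact IH ι b hle M hlow hM
    have himg : (Finset.image b Finset.univ).Nonempty := Finset.card_pos.mp (by omega)
    set t₀ := (Finset.image b Finset.univ).min' himg with ht₀
    have ht₀mem : t₀ ∈ Finset.image b Finset.univ := Finset.min'_mem _ _
    have ht₀le : ∀ i, t₀ ≤ b i := fun i =>
      Finset.min'_le _ _ (Finset.mem_image_of_mem b (Finset.mem_univ i))
    set e : {i // b i = t₀} ⊕ {i // ¬ b i = t₀} ≃ ι := Equiv.sumCompl (fun i => b i = t₀)
      with he
    set bB : {i // ¬ b i = t₀} → ℕ := fun c => b c.1 with hbB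
    set bb : {i // b i = t₀} ⊕ {i // ¬ b i = t₀} → ℕ :=
      Sum.elim (fun a => b a.1) bB with hbb
    have hbe : ∀ x, b (e x) = bb x := by rintro (a | c) <;> simp [he, hbb, hbB]
    have hlt : ∀ (a : {i // b i = t₀}) (c : {i // ¬ b i = t₀}), b a.1 < b c.1 := by
      intro a c
      have := ht₀le c.1
      have h1 := a.2
      have h2 := c.2
      omega
    have hcardB : (Finset.image bB Finset.univ).card ≤ m := by
      have himgB : Finset.image bB Finset.univ = (Finset.image b Finset.univ).erase t₀ := by
        ext v
        simp only [Finset.mem_image, Finset.mem_erase, Finset.mem_univ, true_and, hbB]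
        constructor
        · rintro ⟨c, rfl⟩
          refine ⟨fun hh => c.2 hh, c.1, rfl⟩
        · rintro ⟨hv, i, rfl⟩
          exact ⟨⟨i, hv⟩, rfl⟩
      rw [himgB, Finset.card_erase_of_mem ht₀mem]
      omega
    set M11 := M.toBlock (fun i => b i = t₀) (fun i => b i = t₀) with hM11
    set M21 := M.toBlock (fun i => ¬ b i = t₀) (fun i => b i = t₀) with hM21
    set M22 := M.toBlock (fun i => ¬ b i = t₀) (fun i => ¬ b i = t₀) with hM22
    have hM12 : M.toBlock (fun i => b i = t₀) (fun i => ¬ b i = t₀) = 0 := by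
      ext x y
      rw [Matrix.toBlock_apply, hlow _ _ (hlt x y)]
      rfl
    have hMe : M.submatrix e e = Matrix.fromBlocks M11 0 M21 M22 := by
      rw [he, submatrix_sumCompl, hM12]
    have hMdet : IsUnit (M11.det * M22.det) := by
      have h1 : (M.submatrix e e).det = M.det := Matrix.det_submatrix_equiv_self e M
      have h2 : (M.submatrix e e).det = M11.det * M22.det := by
        rw [hMe, Matrix.det_fromBlocks_zero₁₂]
      rw [← h2, h1]
      exact (Matrix.isUnit_iff_isUnit_det M).mp hM
    have hM11u : IsUnit M11.det := isUnit_of_mul_isUnit_left hMdet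
    have hM22u : IsUnit M22.det := isUnit_of_mul_isUnit_right hMdet
    have hM22low : ∀ c c' : {i // ¬ b i = t₀}, bB c < bB c' → M22 c c' = 0 :=
      fun c c' h => hlow c.1 c'.1 h
    obtain ⟨hDBu, hDBlu⟩ := IH _ bB hcardB M22 hM22low
      ((Matrix.isUnit_iff_isUnit_det M22).mpr hM22u)
    set DB := (Matrix.of fun c c' => if bB c = bB c' then M22 c c' else (0 : K)) with hDB
    set DM := (Matrix.of fun i j => if b i = b j then M i j else (0 : K)) with hDM
    have hDe : DM.submatrix e e = Matrix.fromBlocks M11 0 0 DB := by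
      ext x y
      rcases x with x | x <;> rcases y with y | y
      · simp only [Matrix.submatrix_apply, he, Equiv.sumCompl_apply_inl, hDM,
          Matrix.of_apply, Matrix.fromBlocks_apply₁₁, hM11, Matrix.toBlock_apply]
        rw [if_pos (by rw [x.2, y.2])]
      · simp only [Matrix.submatrix_apply, he, Equiv.sumCompl_apply_inl,
          Equiv.sumCompl_apply_inr, hDM, Matrix.of_apply, Matrix.fromBlocks_apply₁₂]
        rw [if_neg (by have := hlt x y; omega)]
        rfl
      · simp only [Matrix.submatrix_apply, he, Equiv.sumCompl_apply_inl,
          Equiv.sumCompl_apply_inr, hDM, Matrix.of_apply, Matrix.fromBlocks_apply₂₁]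
        rw [if_neg (by have := hlt y x; omega)]
        rfl
      · simp only [Matrix.submatrix_apply, he, Equiv.sumCompl_apply_inr, hDM,
          Matrix.of_apply, Matrix.fromBlocks_apply₂₂, hDB, hbB, Matrix.toBlock_apply]
        rfl
    have hDdet : IsUnit DM.det := by
      have h1 : (DM.submatrix e e).det = DM.det := Matrix.det_submatrix_equiv_self e DM
      rw [← h1, hDe, Matrix.det_fromBlocks_zero₁₂]
      exact hM11u.mul ((Matrix.isUnit_iff_isUnit_det DB).mp hDBu)
    refine ⟨(Matrix.isUnit_iff_isUnit_det DM).mpr hDdet, ?_⟩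
    have hDBdet : IsUnit DB.det := (Matrix.isUnit_iff_isUnit_det DB).mp hDBu
    have hinvDe : (DM⁻¹).submatrix e e = Matrix.fromBlocks M11⁻¹ 0 0 DB⁻¹ := by
      have h1 : DM.submatrix e e * (DM⁻¹).submatrix e e = 1 := by
        rw [Matrix.submatrix_mul_equiv _ _ _ e _, Matrix.mul_nonsing_inv _ hDdet]
        exact Matrix.submatrix_one_equiv e
      have h2 : DM.submatrix e e * Matrix.fromBlocks M11⁻¹ 0 0 DB⁻¹ = 1 := by
        rw [hDe]
        simp only [Matrix.fromBlocks_multiply, Matrix.one_mul, Matrix.mul_one,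
          Matrix.zero_mul, Matrix.mul_zero, add_zero, zero_add,
          Matrix.mul_nonsing_inv _ hM11u, Matrix.mul_nonsing_inv _ hDBdet]
        exact Matrix.fromBlocks_one
      rw [← Matrix.inv_eq_right_inv h1, ← Matrix.inv_eq_right_inv h2]
    have hprod : (M * DM⁻¹).submatrix e e =
        Matrix.fromBlocks 1 0 (M21 * M11⁻¹) (M22 * DB⁻¹) := by
      rw [← Matrix.submatrix_mul_equiv M (DM⁻¹) _ e _, hMe, hinvDe]
      simp only [Matrix.fromBlocks_multiply, Matrix.one_mul, Matrix.mul_one,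
        Matrix.zero_mul, Matrix.mul_zero, add_zero, zero_add,
        Matrix.mul_nonsing_inv _ hM11u]
    have hsplit : Matrix.fromBlocks (1 : Matrix {i // b i = t₀} {i // b i = t₀} K) 0
        (M21 * M11⁻¹) (M22 * DB⁻¹) =
        Matrix.fromBlocks 1 0 (M21 * M11⁻¹) 1 * Matrix.fromBlocks 1 0 0 (M22 * DB⁻¹) := by
      simp only [Matrix.fromBlocks_multiply, Matrix.one_mul, Matrix.mul_one,
        Matrix.zero_mul, Matrix.mul_zero, add_zero, zero_add]
    have hLUbb : LU bb ((M * DM⁻¹).submatrix e e) := by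
      rw [hprod, hsplit]
      exact (LU_fromBlocks_L _ hlt).mul (LU_fromBlocks_D hDBlu)
    have := LU_submatrix_equiv e (b := b) (M := (M * DM⁻¹).submatrix e e)
      (by convert hLUbb using 2 with x; exact hbe x)
    rwa [submatrix_equiv_cancel e] at this

theorem exists_ldu' (m : ℕ) (ι : Type) [Fintype ι] [DecidableEq ι] (b : ι → ℕ)
    (hcard : (Finset.image b Finset.univ).card ≤ m)
    (M : Matrix ι ι K) (hupp : ∀ i j, b j < b i → M i j = 0) (hM : IsUnit M) :
    IsUnit (Matrix.of fun i j => if b i = b j then M i j else (0 : K)) ∧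
    UU b ((Matrix.of fun i j => if b i = b j then M i j else (0 : K))⁻¹ * M) := by
  have hTlow : ∀ i j, b i < b j → Mᵀ i j = 0 := fun i j h => hupp j i h
  have hTu : IsUnit Mᵀ := by
    rw [Matrix.isUnit_iff_isUnit_det, Matrix.det_transpose]
    exact (Matrix.isUnit_iff_isUnit_det M).mp hM
  obtain ⟨h1, h2⟩ := exists_ldu m ι b hcard Mᵀ hTlow hTu
  have hDT : (Matrix.of fun i j => if b i = b j then Mᵀ i j else (0 : K)) =
      (Matrix.of fun i j => if b i = b j then M i j else (0 : K))ᵀ := by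
    ext i j
    simp only [Matrix.of_apply, Matrix.transpose_apply]
    rcases eq_or_ne (b i) (b j) with h | h
    · rw [if_pos h, if_pos h.symm]
    · rw [if_neg h, if_neg (Ne.symm h)]
  rw [hDT] at h1 h2
  constructor
  · rw [Matrix.isUnit_iff_isUnit_det]
    rw [Matrix.isUnit_iff_isUnit_det, Matrix.det_transpose] at h1
    exact h1
  · rw [← Matrix.transpose_nonsing_inv] at h2
    have h3 : Mᵀ * ((Matrix.of fun i j => if b i = b j then M i j else (0 : K))⁻¹)ᵀ =
        ((Matrix.of fun i j => if b i = b j then M i j else (0 : K))⁻¹ * M)ᵀ :=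
      (Matrix.transpose_mul _ _).symm
    rw [h3] at h2
    have := LU_transpose h2
    rwa [Matrix.transpose_transpose] at this

end Exist
end Stmt12Aux


open Filter Topology in
theorem stmt12' {K : Type*} [NormedField K] {n : ℕ} (b : Fin n → ℕ)
    (d : ℕ → Fin n → Kˣ)
    (heq : ∀ k : ℕ, ∀ i j, b i = b j → d k i = d k j)
    (hinf : ∀ i j, b i < b j →
      Tendsto (fun k : ℕ => ‖(d k i : K) / (d k j : K)‖) atTop atTop)
    (gseq : ℕ → Matrix (Fin n) (Fin n) K) (g g' : Matrix (Fin n) (Fin n) K)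
    (hg : Tendsto gseq atTop (nhds g))
    (hg' : Tendsto
      (fun k : ℕ =>
        (Matrix.diagonal fun i => (d k i : K)) * gseq k *
          Matrix.diagonal (fun i => ((d k i : K))⁻¹))
      atTop (nhds g'))
    (hginv : IsUnit g) :
    IsUnit (Matrix.of fun i j => if b i = b j then g i j else (0 : K)) ∧
    IsStrictLowerUnip b (g * (Matrix.of fun i j => if b i = b j then g i j else (0 : K))⁻¹) ∧
    IsStrictUpperUnip b ((Matrix.of fun i j => if b i = b j then g i j else (0 : K))⁻¹ * g') ∧
    ∃ (N₀ : ℕ) (useq rseq nseq : ℕ → Matrix (Fin n) (Fin n) K),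
      (∀ k : ℕ, N₀ ≤ k →
        IsStrictLowerUnip b (useq k) ∧ IsBlockDiag b (rseq k) ∧
        IsStrictUpperUnip b (nseq k) ∧
        gseq k = useq k * rseq k *
          ((Matrix.diagonal fun i => ((d k i : K))⁻¹) * nseq k *
            Matrix.diagonal (fun i => (d k i : K)))) ∧
      Tendsto useq atTop
        (nhds (g * (Matrix.of fun i j => if b i = b j then g i j else (0 : K))⁻¹)) ∧
      Tendsto rseq atTop
        (nhds (Matrix.of fun i j => if b i = b j then g i j else (0 : K))) ∧
      Tendsto nseq atTop
        (nhds ((Matrix.of fun i j => if b i = b j then g i j else (0 : K))⁻¹ * g')) := by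
  classical
  set r : Matrix (Fin n) (Fin n) K := Matrix.of fun i j => if b i = b j then g i j else (0:K)
    with hr
  have hdne : ∀ k i, ((d k i : K)) ≠ 0 := fun k i => Units.ne_zero (d k i)
  set aseq : ℕ → Matrix (Fin n) (Fin n) K := fun k => Matrix.diagonal fun i => (d k i : K)
    with ha
  set a'seq : ℕ → Matrix (Fin n) (Fin n) K :=
    fun k => Matrix.diagonal fun i => ((d k i : K))⁻¹ with ha'
  set hseq : ℕ → Matrix (Fin n) (Fin n) K := fun k =>
    (Matrix.diagonal fun i => (d k i : K)) * gseq k *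
      Matrix.diagonal (fun i => ((d k i : K))⁻¹) with hh
  have hg'2 : Tendsto hseq atTop (nhds g') := hg'
  have hgE : ∀ i j, Tendsto (fun k => gseq k i j) atTop (𝓝 (g i j)) := fun i j =>
    Stmt12Aux.tendsto_mat_iff.mp hg i j
  have hhE : ∀ i j, Tendsto (fun k => (d k i : K) * gseq k i j * ((d k j : K))⁻¹) atTop
      (𝓝 (g' i j)) := by
    intro i j
    have := Stmt12Aux.tendsto_mat_iff.mp hg'2 i j
    simpa only [hh, Matrix.mul_diagonal, Matrix.diagonal_mul] using this
  have hnorm : ∀ (k : ℕ) i j, ‖(d k i : K) * gseq k i j * ((d k j : K))⁻¹‖ =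
      ‖(d k i : K) / (d k j : K)‖ * ‖gseq k i j‖ := by
    intro k i j
    rw [norm_mul, norm_mul, norm_div, norm_inv]
    ring
  have glow : ∀ i j, b i < b j → g i j = 0 := by
    intro i j hij
    by_contra h0
    have hpos : 0 < ‖g i j‖ := norm_pos_iff.mpr h0
    have h1 : Tendsto (fun k => ‖(d k i : K) / (d k j : K)‖ * ‖gseq k i j‖) atTop atTop :=
      (hinf i j hij).atTop_mul_pos hpos ((hgE i j).norm)
    have h2 : Tendsto (fun k => ‖(d k i : K) * gseq k i j * ((d k j : K))⁻¹‖) atTop atTop := by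
      simpa only [hnorm] using h1
    exact not_tendsto_atTop_of_tendsto_nhds ((hhE i j).norm) h2
  have gupp : ∀ i j, b j < b i → g' i j = 0 := by
    intro i j hji
    have hzero : Tendsto (fun k => (d k i : K) * gseq k i j * ((d k j : K))⁻¹) atTop (𝓝 0) := by
      rw [tendsto_zero_iff_norm_tendsto_zero]
      have hratio : Tendsto (fun k => ‖(d k i : K) / (d k j : K)‖) atTop (𝓝 0) := by
        have hf : Tendsto (fun k => (‖(d k j : K) / (d k i : K)‖)⁻¹) atTop (𝓝 0) :=
          (hinf j i hji).inv_tendsto_atTop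
        have heqf : (fun k => (‖(d k j : K) / (d k i : K)‖)⁻¹) =
            fun k => ‖(d k i : K) / (d k j : K)‖ := funext fun k => by
          rw [← norm_inv, inv_div]
        rwa [heqf] at hf
      have := hratio.mul ((hgE i j).norm)
      rw [zero_mul] at this
      simpa only [hnorm] using this
    exact tendsto_nhds_unique (hhE i j) hzero
  have gdiag : ∀ i j, b i = b j → g' i j = g i j := by
    intro i j hij
    have hfun : (fun k => (d k i : K) * gseq k i j * ((d k j : K))⁻¹) =
        fun k => gseq k i j := by
      funext k
      rw [show ((d k i : K)) = ((d k j : K)) by rw [heq k i j hij], mul_right_comm,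
        mul_inv_cancel₀ (hdne k j), one_mul]
    have := hhE i j
    rw [hfun] at this
    exact tendsto_nhds_unique this (hgE i j)
  have hgdet : IsUnit g.det := (Matrix.isUnit_iff_isUnit_det g).mp hginv
  have hdetseq : ∀ k, (hseq k).det = (gseq k).det := by
    intro k
    simp only [hh, Matrix.det_mul, Matrix.det_diagonal]
    have hprod : (∏ i, (d k i : K)) * (∏ i, ((d k i : K))⁻¹) = 1 := by
      rw [← Finset.prod_mul_distrib]
      apply Finset.prod_eq_one
      intro i _
      exact mul_inv_cancel₀ (hdne k i)
    calc (∏ i, (d k i : K)) * (gseq k).det * ∏ i, ((d k i : K))⁻¹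
        = (gseq k).det * ((∏ i, (d k i : K)) * ∏ i, ((d k i : K))⁻¹) := by ring
      _ = (gseq k).det := by rw [hprod, mul_one]
  have hg'u : IsUnit g' := by
    have h1 : Tendsto (fun k => (hseq k).det) atTop (𝓝 g'.det) := Stmt12Aux.tendsto_matdet hg'2
    rw [funext hdetseq] at h1
    have hg'det : g'.det = g.det := tendsto_nhds_unique h1 (Stmt12Aux.tendsto_matdet hg)
    rw [Matrix.isUnit_iff_isUnit_det, hg'det]
    exact hgdet
  obtain ⟨hru, hLUgr⟩ := Stmt12Aux.exists_ldu (K := K)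
    (Finset.image b Finset.univ).card (Fin n) b le_rfl g glow hginv
  obtain ⟨-, hUUg'⟩ := Stmt12Aux.exists_ldu' (K := K)
    (Finset.image b Finset.univ).card (Fin n) b le_rfl g' gupp hg'u
  have hDg' : (Matrix.of fun i j => if b i = b j then g' i j else (0:K)) = r := by
    ext i j
    simp only [Matrix.of_apply, hr]
    rcases eq_or_ne (b i) (b j) with h | h
    · rw [if_pos h, if_pos h, gdiag i j h]
    · rw [if_neg h, if_neg h]
  rw [hDg'] at hUUg'
  have hru' : IsUnit r := hru
  have hrdet : IsUnit r.det := (Matrix.isUnit_iff_isUnit_det r).mp hru'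
  have hLUgr' : Stmt12Aux.LU b (g * r⁻¹) := hLUgr
  have hBDr : Stmt12Aux.BD b r := by
    intro i j hij
    simp only [hr, Matrix.of_apply, if_neg hij]
  have hLU1 : Stmt12Aux.LU b (1 : Matrix (Fin n) (Fin n) K) :=
    ⟨fun i => Matrix.one_apply_eq i, fun i j hne _ => Matrix.one_apply_ne hne⟩
  have hUU1 : Stmt12Aux.UU b (1 : Matrix (Fin n) (Fin n) K) :=
    ⟨fun i => Matrix.one_apply_eq i, fun i j hne _ => Matrix.one_apply_ne hne⟩
  have hgfac : g = (g * r⁻¹) * r * 1 := by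
    rw [Matrix.mul_one, Matrix.nonsing_inv_mul_cancel_right _ _ hrdet]
  have hg'fac : g' = 1 * r * (r⁻¹ * g') := by
    rw [Matrix.one_mul, Matrix.mul_nonsing_inv_cancel_left _ _ hrdet]
  obtain ⟨useq, rseq, vseq, N₁, hprops, hulim, hrlim, hvlim⟩ :=
    Stmt12Aux.key (Finset.image b Finset.univ).card (Fin n) b le_rfl (g * r⁻¹) r 1 g gseq
      hLUgr' hBDr hru' hUU1 hgfac hg
  obtain ⟨useq', rseq', nseq, N₂, hprops', hulim', hrlim', hnlim⟩ :=
    Stmt12Aux.key (Finset.image b Finset.univ).card (Fin n) b le_rfl 1 r (r⁻¹ * g') g' hseq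
      hLU1 hBDr hru' hUUg' hg'fac hg'2
  refine ⟨hru, Stmt12Aux.LU_iff.mp hLUgr', Stmt12Aux.UU_iff.mp hUUg', N₁.max N₂,
    useq, rseq, nseq, ?_, hulim, hrlim, hnlim⟩
  intro k hk
  obtain ⟨hLUu, hBDrk, hrkU, hUUv, hfac⟩ := hprops k (le_trans (Nat.le_max_left _ _) hk)
  obtain ⟨hLUu', hBDrk', hrkU', hUUn, hfac'⟩ := hprops' k (le_trans (Nat.le_max_right _ _) hk)
  have haa' : aseq k * a'seq k = 1 := by
    rw [ha, ha', Matrix.diagonal_mul_diagonal]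
    rw [show (fun i => (d k i : K) * ((d k i : K))⁻¹) = fun _ => (1:K) from
      funext fun i => mul_inv_cancel₀ (hdne k i), Matrix.diagonal_one]
  have ha'a : a'seq k * aseq k = 1 := by
    rw [ha, ha', Matrix.diagonal_mul_diagonal]
    rw [show (fun i => ((d k i : K))⁻¹ * (d k i : K)) = fun _ => (1:K) from
      funext fun i => inv_mul_cancel₀ (hdne k i), Matrix.diagonal_one]
  have hcmul : ∀ X Y : Matrix (Fin n) (Fin n) K,
      (aseq k * X * a'seq k) * (aseq k * Y * a'seq k) = aseq k * (X * Y) * a'seq k := by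
    intro X Y
    calc (aseq k * X * a'seq k) * (aseq k * Y * a'seq k)
        = aseq k * X * (a'seq k * (aseq k * (Y * a'seq k))) := by simp only [Matrix.mul_assoc]
      _ = aseq k * X * ((a'seq k * aseq k) * (Y * a'seq k)) := by
          rw [← Matrix.mul_assoc (a'seq k) (aseq k) (Y * a'seq k)]
      _ = aseq k * X * (Y * a'seq k) := by rw [ha'a, Matrix.one_mul]
      _ = aseq k * (X * Y) * a'seq k := by simp only [Matrix.mul_assoc]
  have hconjentry : ∀ (X : Matrix (Fin n) (Fin n) K) i j,
      (aseq k * X * a'seq k) i j = (d k i : K) * X i j * ((d k j : K))⁻¹ := by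
    intro X i j
    rw [ha, ha', Matrix.mul_diagonal, Matrix.diagonal_mul]
  have hconjr : aseq k * rseq k * a'seq k = rseq k := by
    ext i j
    rw [hconjentry]
    rcases eq_or_ne (b i) (b j) with h | h
    · rw [show ((d k i : K)) = ((d k j : K)) by rw [heq k i j h], mul_right_comm,
        mul_inv_cancel₀ (hdne k j), one_mul]
    · rw [hBDrk i j h, mul_zero, zero_mul]
  have hLUcu : Stmt12Aux.LU b (aseq k * useq k * a'seq k) := by
    constructor
    · intro i
      rw [hconjentry, hLUu.1 i, mul_one, mul_inv_cancel₀ (hdne k i)]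
    · intro i j hne hij
      rw [hconjentry, hLUu.2 i j hne hij, mul_zero, zero_mul]
  have hUUcv : Stmt12Aux.UU b (aseq k * vseq k * a'seq k) := by
    constructor
    · intro i
      rw [hconjentry, hUUv.1 i, mul_one, mul_inv_cancel₀ (hdne k i)]
    · intro i j hne hij
      rw [hconjentry, hUUv.2 i j hne hij, mul_zero, zero_mul]
  have hfach : hseq k = (aseq k * useq k * a'seq k) * rseq k * (aseq k * vseq k * a'seq k) := by
    have hstep : (aseq k * useq k * a'seq k) * (aseq k * rseq k * a'seq k) *
        (aseq k * vseq k * a'seq k) = aseq k * (useq k * rseq k * vseq k) * a'seq k := by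
      rw [hcmul, hcmul]
    have hh2 : hseq k = aseq k * gseq k * a'seq k := by simp only [hh, ha, ha']
    rw [hh2, hfac, ← hstep, hconjr]
  obtain ⟨-, -, hveq⟩ := Stmt12Aux.factor_unique hLUcu hBDrk hrkU hUUcv
    hLUu' hBDrk' hrkU' hUUn (by rw [← hfach, hfac'])
  have hvk : vseq k = a'seq k * nseq k * aseq k := by
    rw [← hveq]
    calc vseq k = (a'seq k * aseq k) * vseq k * (a'seq k * aseq k) := by
          rw [ha'a, Matrix.one_mul, Matrix.mul_one]
      _ = a'seq k * (aseq k * vseq k * a'seq k) * aseq k := by simp only [Matrix.mul_assoc]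
  refine ⟨Stmt12Aux.LU_iff.mp hLUu, hBDrk, Stmt12Aux.UU_iff.mp hUUn, ?_⟩
  rw [hfac, hvk]

/-- With `(d_k)` as before (constant on blocks, `‖d_k i / d_k j‖ → ∞` when
`b i < b j`), if `g_k → g` and `a_k g_k a_k⁻¹ → g'` entrywise with `g` invertible, then
`r = D(g)` is invertible, `u = g r⁻¹` is strictly-lower block unipotent, `n' = r⁻¹ g'` is
strictly-upper block unipotent, and eventually `g_k = u_k r_k (a_k⁻¹ n_k a_k)` with
`u_k → u` strictly-lower unipotent, `r_k → r` block diagonal, `n_k → n'` strictly-upper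
unipotent. -/
theorem stmt12 {K : Type*} [NormedField K] {n : ℕ} (b : Fin n → ℕ)
    (d : ℕ → Fin n → Kˣ)
    (heq : ∀ k : ℕ, ∀ i j, b i = b j → d k i = d k j)
    (hinf : ∀ i j, b i < b j →
      Tendsto (fun k : ℕ => ‖(d k i : K) / (d k j : K)‖) atTop atTop)
    (gseq : ℕ → Matrix (Fin n) (Fin n) K) (g g' : Matrix (Fin n) (Fin n) K)
    (hg : Tendsto gseq atTop (nhds g))
    (hg' : Tendsto
      (fun k : ℕ =>
        (Matrix.diagonal fun i => (d k i : K)) * gseq k *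
          Matrix.diagonal (fun i => ((d k i : K))⁻¹))
      atTop (nhds g'))
    (hginv : IsUnit g) :
    IsUnit (Matrix.of fun i j => if b i = b j then g i j else (0 : K)) ∧
    IsStrictLowerUnip b (g * (Matrix.of fun i j => if b i = b j then g i j else (0 : K))⁻¹) ∧
    IsStrictUpperUnip b ((Matrix.of fun i j => if b i = b j then g i j else (0 : K))⁻¹ * g') ∧
    ∃ (N₀ : ℕ) (useq rseq nseq : ℕ → Matrix (Fin n) (Fin n) K),
      (∀ k : ℕ, N₀ ≤ k →
        IsStrictLowerUnip b (useq k) ∧ IsBlockDiag b (rseq k) ∧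
        IsStrictUpperUnip b (nseq k) ∧
        gseq k = useq k * rseq k *
          ((Matrix.diagonal fun i => ((d k i : K))⁻¹) * nseq k *
            Matrix.diagonal (fun i => (d k i : K)))) ∧
      Tendsto useq atTop
        (nhds (g * (Matrix.of fun i j => if b i = b j then g i j else (0 : K))⁻¹)) ∧
      Tendsto rseq atTop
        (nhds (Matrix.of fun i j => if b i = b j then g i j else (0 : K))) ∧
      Tendsto nseq atTop
        (nhds ((Matrix.of fun i j => if b i = b j then g i j else (0 : K))⁻¹ * g')) :=
  stmt12' b d heq hinf gseq g g' hg hg' hginv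
end

section
/- Let K be a normed field, n : ℕ, b : Fin n → ℕ. Let (d_k) be a sequence of maps Fin n → Kˣ with d_k i = d_k j whenever b i = b j, and ‖d_k i / d_k j‖ → ∞ whenever b i < b j; let a_k = diagonal(d_k). Let r ∈ M_n(K) be block diagonal (r i j = 0 unless b i = b j), u strictly-lower block unipotent, and n' strictly-upper block unipotent. Let (u_k) be strictly-lower block unipotent matrices with u_k → u, (r_k) block diagonal matrices with r_k → r, and (n'_k) strictly-upper block unipotent matrices with n'_k → n' (all entrywise). Set g_k = u_k · r_k · (a_k⁻¹ · n'_k · a_k). Then g_k → u · r and a_k · g_k · a_k⁻¹ → r · n' entrywise. -/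
open Filter Topology

section Aux

variable {K : Type*} [NormedField K] {n : ℕ}

lemma entry_tendsto {F : ℕ → Matrix (Fin n) (Fin n) K} {L : Matrix (Fin n) (Fin n) K}
    (h : Tendsto F atTop (nhds L)) (i j : Fin n) :
    Tendsto (fun k => F k i j) atTop (nhds (L i j)) :=
  tendsto_pi_nhds.1 (tendsto_pi_nhds.1 h i) j

lemma diag_mul_inv (d : Fin n → Kˣ) :
    (Matrix.diagonal fun i => (d i : K)) * (Matrix.diagonal fun i => ((d i : K))⁻¹) = 1 := by
  rw [Matrix.diagonal_mul_diagonal]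
  have h : (fun i => (d i : K) * ((d i : K))⁻¹) = fun _ => (1 : K) :=
    funext fun i => mul_inv_cancel₀ (d i).ne_zero
  rw [h, Matrix.diagonal_one]

lemma inv_diag_mul (d : Fin n → Kˣ) :
    (Matrix.diagonal fun i => ((d i : K))⁻¹) * (Matrix.diagonal fun i => (d i : K)) = 1 := by
  rw [Matrix.diagonal_mul_diagonal]
  have h : (fun i => ((d i : K))⁻¹ * (d i : K)) = fun _ => (1 : K) :=
    funext fun i => inv_mul_cancel₀ (d i).ne_zero
  rw [h, Matrix.diagonal_one]

lemma conj_blockdiag (b : Fin n → ℕ) (d : Fin n → Kˣ)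
    (heq : ∀ i j, b i = b j → d i = d j)
    (r : Matrix (Fin n) (Fin n) K) (hr : IsBlockDiag b r) :
    (Matrix.diagonal fun i => (d i : K)) * r * (Matrix.diagonal fun i => ((d i : K))⁻¹) = r := by
  ext i j
  simp only [Matrix.mul_diagonal, Matrix.diagonal_mul]
  by_cases h : b i = b j
  · rw [heq i j h]
    field_simp
  · rw [hr i j h, mul_zero, zero_mul]

end Aux

/-- With `(d_k)` as before, if `u_k → u` (strictly-lower unipotent),
`r_k → r` (block diagonal), `n'_k → n'` (strictly-upper unipotent), and
`g_k = u_k r_k (a_k⁻¹ n'_k a_k)`, then `g_k → u r` and `a_k g_k a_k⁻¹ → r n'` entrywise. -/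
theorem stmt13 {K : Type*} [NormedField K] {n : ℕ} (b : Fin n → ℕ)
    (d : ℕ → Fin n → Kˣ)
    (heq : ∀ k : ℕ, ∀ i j, b i = b j → d k i = d k j)
    (hinf : ∀ i j, b i < b j →
      Tendsto (fun k : ℕ => ‖(d k i : K) / (d k j : K)‖) atTop atTop)
    (r u n' : Matrix (Fin n) (Fin n) K)
    (hr : IsBlockDiag b r) (hu : IsStrictLowerUnip b u) (hn' : IsStrictUpperUnip b n')
    (useq rseq nseq : ℕ → Matrix (Fin n) (Fin n) K)
    (huseq : ∀ k, IsStrictLowerUnip b (useq k)) (huconv : Tendsto useq atTop (nhds u))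
    (hrseq : ∀ k, IsBlockDiag b (rseq k)) (hrconv : Tendsto rseq atTop (nhds r))
    (hnseq : ∀ k, IsStrictUpperUnip b (nseq k)) (hnconv : Tendsto nseq atTop (nhds n')) :
    Tendsto
      (fun k : ℕ => useq k * rseq k *
        ((Matrix.diagonal fun i => ((d k i : K))⁻¹) * nseq k *
          Matrix.diagonal (fun i => (d k i : K))))
      atTop (nhds (u * r)) ∧
    Tendsto
      (fun k : ℕ =>
        (Matrix.diagonal fun i => (d k i : K)) *
          (useq k * rseq k *
            ((Matrix.diagonal fun i => ((d k i : K))⁻¹) * nseq k *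
              Matrix.diagonal (fun i => (d k i : K)))) *
          Matrix.diagonal (fun i => ((d k i : K))⁻¹))
      atTop (nhds (r * n')) := by
  classical
  -- a_k⁻¹ n'_k a_k → 1
  have hm : Tendsto
      (fun k => (Matrix.diagonal fun i => ((d k i : K))⁻¹) * nseq k *
        Matrix.diagonal (fun i => (d k i : K))) atTop (nhds 1) := by
    refine tendsto_pi_nhds.2 ?_
    intro i
    rw [tendsto_pi_nhds]
    intro j
    have hentry : ∀ k, ((Matrix.diagonal fun i => ((d k i : K))⁻¹) * nseq k *
        Matrix.diagonal (fun i => (d k i : K))) i j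
        = ((d k i : K))⁻¹ * nseq k i j * (d k j : K) := by
      intro k
      simp [Matrix.mul_diagonal, Matrix.diagonal_mul]
    simp only [hentry]
    rcases lt_trichotomy (b i) (b j) with hij | hij | hij
    · -- b i < b j : entry → 0
      have hne : i ≠ j := fun h => absurd (h ▸ hij) (lt_irrefl _)
      rw [Matrix.one_apply_ne hne]
      have h0 : Tendsto (fun k => ((d k i : K))⁻¹ * (d k j : K)) atTop (nhds 0) := by
        rw [tendsto_zero_iff_norm_tendsto_zero]
        have heqn : (fun k => ‖((d k i : K))⁻¹ * (d k j : K)‖)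
            = fun k => ‖(d k i : K) / (d k j : K)‖⁻¹ := by
          funext k
          rw [← norm_inv]
          congr 1
          field_simp
        rw [heqn]
        exact (hinf i j hij).inv_tendsto_atTop
      have := h0.mul (entry_tendsto hnconv i j)
      rw [zero_mul] at this
      refine this.congr fun k => ?_
      ring
    · -- b i = b j : off-diagonal entries vanish, diagonal entries are 1
      by_cases hij' : i = j
      · subst hij'
        rw [Matrix.one_apply_eq]
        have : ∀ k, ((d k i : K))⁻¹ * nseq k i i * (d k i : K) = 1 := by
          intro k
          obtain ⟨N, hN, hEq⟩ := hnseq k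
          have : nseq k i i = 1 := by
            rw [hEq]
            simp [Matrix.one_apply_eq, hN i i (lt_irrefl _)]
          rw [this, mul_one, inv_mul_cancel₀ (d k i).ne_zero]
        simp only [this]
        exact tendsto_const_nhds
      · rw [Matrix.one_apply_ne hij']
        have : ∀ k, ((d k i : K))⁻¹ * nseq k i j * (d k j : K) = 0 := by
          intro k
          obtain ⟨N, hN, hEq⟩ := hnseq k
          have : nseq k i j = 0 := by
            rw [hEq]
            simp [Matrix.one_apply_ne hij', hN i j (by omega)]
          rw [this, mul_zero, zero_mul]
        simp only [this]
        exact tendsto_const_nhds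
    · -- b j < b i : entries vanish
      have hne : i ≠ j := fun h => absurd (h ▸ hij) (lt_irrefl _)
      rw [Matrix.one_apply_ne hne]
      have : ∀ k, ((d k i : K))⁻¹ * nseq k i j * (d k j : K) = 0 := by
        intro k
        obtain ⟨N, hN, hEq⟩ := hnseq k
        have : nseq k i j = 0 := by
          rw [hEq]
          simp [Matrix.one_apply_ne hne, hN i j (by omega)]
        rw [this, mul_zero, zero_mul]
      simp only [this]
      exact tendsto_const_nhds
  -- a_k u_k a_k⁻¹ → 1
  have hmu : Tendsto
      (fun k => (Matrix.diagonal fun i => (d k i : K)) * useq k *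
        Matrix.diagonal (fun i => ((d k i : K))⁻¹)) atTop (nhds 1) := by
    refine tendsto_pi_nhds.2 ?_
    intro i
    rw [tendsto_pi_nhds]
    intro j
    have hentry : ∀ k, ((Matrix.diagonal fun i => (d k i : K)) * useq k *
        Matrix.diagonal (fun i => ((d k i : K))⁻¹)) i j
        = (d k i : K) * useq k i j * ((d k j : K))⁻¹ := by
      intro k
      simp [Matrix.mul_diagonal, Matrix.diagonal_mul]
    simp only [hentry]
    rcases lt_trichotomy (b j) (b i) with hij | hij | hij
    · -- b j < b i : entry → 0
      have hne : i ≠ j := fun h => absurd (h ▸ hij) (lt_irrefl _)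
      rw [Matrix.one_apply_ne hne]
      have h0 : Tendsto (fun k => (d k i : K) * ((d k j : K))⁻¹) atTop (nhds 0) := by
        rw [tendsto_zero_iff_norm_tendsto_zero]
        have heqn : (fun k => ‖(d k i : K) * ((d k j : K))⁻¹‖)
            = fun k => ‖(d k j : K) / (d k i : K)‖⁻¹ := by
          funext k
          rw [← norm_inv]
          congr 1
          field_simp
        rw [heqn]
        exact (hinf j i hij).inv_tendsto_atTop
      have := h0.mul (entry_tendsto huconv i j)
      rw [zero_mul] at this
      refine this.congr fun k => ?_
      ring
    · by_cases hij' : i = j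
      · subst hij'
        rw [Matrix.one_apply_eq]
        have : ∀ k, (d k i : K) * useq k i i * ((d k i : K))⁻¹ = 1 := by
          intro k
          obtain ⟨N, hN, hEq⟩ := huseq k
          have : useq k i i = 1 := by
            rw [hEq]
            simp [Matrix.one_apply_eq, hN i i (lt_irrefl _)]
          rw [this, mul_one, mul_inv_cancel₀ (d k i).ne_zero]
        simp only [this]
        exact tendsto_const_nhds
      · rw [Matrix.one_apply_ne hij']
        have : ∀ k, (d k i : K) * useq k i j * ((d k j : K))⁻¹ = 0 := by
          intro k
          obtain ⟨N, hN, hEq⟩ := huseq k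
          have : useq k i j = 0 := by
            rw [hEq]
            simp [Matrix.one_apply_ne hij', hN i j (by omega)]
          rw [this, mul_zero, zero_mul]
        simp only [this]
        exact tendsto_const_nhds
    · have hne : i ≠ j := fun h => absurd (h ▸ hij) (lt_irrefl _)
      rw [Matrix.one_apply_ne hne]
      have : ∀ k, (d k i : K) * useq k i j * ((d k j : K))⁻¹ = 0 := by
        intro k
        obtain ⟨N, hN, hEq⟩ := huseq k
        have : useq k i j = 0 := by
          rw [hEq]
          simp [Matrix.one_apply_ne hne, hN i j (by omega)]
        rw [this, mul_zero, zero_mul]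
      simp only [this]
      exact tendsto_const_nhds
  constructor
  · -- first limit
    have h1 := (huconv.mul hrconv).mul hm
    rw [mul_one] at h1
    exact h1
  · -- second limit
    have key : ∀ k,
        (Matrix.diagonal fun i => (d k i : K)) *
          (useq k * rseq k *
            ((Matrix.diagonal fun i => ((d k i : K))⁻¹) * nseq k *
              Matrix.diagonal (fun i => (d k i : K)))) *
          Matrix.diagonal (fun i => ((d k i : K))⁻¹)
        = ((Matrix.diagonal fun i => (d k i : K)) * useq k *
            Matrix.diagonal (fun i => ((d k i : K))⁻¹)) * (rseq k * nseq k) := by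
      intro k
      conv_rhs => rw [show rseq k = (Matrix.diagonal fun i => (d k i : K)) * rseq k *
        Matrix.diagonal (fun i => ((d k i : K))⁻¹) from
          (conj_blockdiag b (d k) (heq k) (rseq k) (hrseq k)).symm]
      simp only [← mul_assoc]
      rw [mul_assoc _ (Matrix.diagonal fun i => (d k i : K))
        (Matrix.diagonal fun i => ((d k i : K))⁻¹), diag_mul_inv, mul_one,
        mul_assoc _ (Matrix.diagonal fun i => ((d k i : K))⁻¹)
        (Matrix.diagonal fun i => (d k i : K)), inv_diag_mul, mul_one]
    have h2 := (hmu.mul (hrconv.mul hnconv)).congr fun k => (key k).symm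
    rw [one_mul] at h2
    exact h2
end
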